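/- arXiv:1505.05785 — 9 statements merged into one kernel-verified Lean document; each statement's English description precedes it below -/
import Mathlib

section
/- Let G be a finite connected simple graph with boundary B and injective boundary values u : B → ℝ as in the context. For every orientation σ of G compatible with u and every assignment 𝓔 : E → ℝ of a positive real energy to each edge, there exists a unique assignment c : E → ℝ of a positive real conductance to each edge such that some function h : V → ℝ extending u is c-harmonic at every interior vertex, satisfies h(x) > h(y) for every edge directed from x to y by σ, and satisfies c_e·(h(x) − h(y))² = 𝓔_e for every edge e = xy. -/
attribute [local instance] Classical.propDecidable

structure GraphOrientation {V : Type*} (G : SimpleGraph V) where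
  dir : V → V → Prop
  dir_adj : ∀ x y, dir x y → G.Adj x y
  dir_total : ∀ x y, G.Adj x y → (dir x y ↔ ¬ dir y x)

variable {V : Type*} [Fintype V] [DecidableEq V]

/-- σ is compatible with boundary values u. -/
def Compatible (G : SimpleGraph V) (B : Set V) (u : V → ℝ) (σ : GraphOrientation G) : Prop :=
  (∀ x, ¬ Relation.TransGen σ.dir x x) ∧
  (∀ x, x ∉ B → (∃ y, σ.dir x y) ∧ (∃ y, σ.dir y x)) ∧
  (∀ a ∈ B, ∀ b ∈ B, Relation.TransGen σ.dir a b → u b < u a)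

/-- B has ≥ 2 vertices and every edge lies on a simple path between distinct boundary vertices. -/
def BoundaryOK (G : SimpleGraph V) (B : Set V) : Prop :=
  2 ≤ B.ncard ∧ ∀ e ∈ G.edgeSet, ∃ a ∈ B, ∃ b ∈ B, a ≠ b ∧
    ∃ p : G.Walk a b, p.IsPath ∧ e ∈ p.edges

/-- h is c-harmonic at each interior vertex. -/
def Harmonic (G : SimpleGraph V) (B : Set V) (c : Sym2 V → ℝ) (h : V → ℝ) : Prop :=
  ∀ x, x ∉ B → ∑ y ∈ G.neighborFinset x, c s(x, y) * (h x - h y) = 0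

/-- the enharmonic (fixed-energy) equation at x. -/
def EnharmonicAt (G : SimpleGraph V) (𝓔 : Sym2 V → ℝ) (h : V → ℝ) (x : V) : Prop :=
  ∑ y ∈ G.neighborFinset x, 𝓔 s(x, y) / (h x - h y) = 0

/-- the polytope of functions extending u and strictly decreasing along σ. -/
def FuSigma (G : SimpleGraph V) (B : Set V) (u : V → ℝ) (σ : GraphOrientation G) : Set (V → ℝ) :=
  {h | (∀ b ∈ B, h b = u b) ∧ ∀ x y, σ.dir x y → h y < h x}

noncomputable def LogM (G : SimpleGraph V) (σ : GraphOrientation G) (𝓔 : Sym2 V → ℝ)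
    (h : V → ℝ) : ℝ :=
  ∑ p ∈ Finset.univ.filter (fun p : V × V => σ.dir p.1 p.2),
    𝓔 s(p.1, p.2) * Real.log (h p.1 - h p.2)

noncomputable def Mfun (G : SimpleGraph V) (𝓔 : Sym2 V → ℝ) (h : V → ℝ) : ℝ :=
  ∏ e ∈ G.edgeFinset,
    Sym2.lift ⟨fun x y => |h x - h y| ^ 𝓔 s(x, y),
      by intro x y; simp only []; rw [abs_sub_comm, Sym2.eq_swap]⟩ e

lemma neighborSum_eq (G : SimpleGraph V) (x : V) (f : V → ℝ) :
    ∑ y ∈ G.neighborFinset x, f y = ∑ y, if G.Adj x y then f y else 0 := by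
  classical
  rw [← Finset.sum_filter]
  apply Finset.sum_congr _ (fun _ _ => rfl)
  ext y
  simp [SimpleGraph.mem_neighborFinset]

lemma onedir (G : SimpleGraph V) (σ : GraphOrientation G) {x y : V} (h : G.Adj x y) :
    (σ.dir x y ∧ ¬ σ.dir y x) ∨ (σ.dir y x ∧ ¬ σ.dir x y) := by
  have h1 := σ.dir_total x y h
  tauto

lemma lemmaA (G : SimpleGraph V) (σ : GraphOrientation G) (𝓔 : Sym2 V → ℝ)
    (h w : V → ℝ) :
    ∑ p ∈ Finset.univ.filter (fun p : V × V => σ.dir p.1 p.2),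
        𝓔 s(p.1, p.2) * (w p.1 - w p.2) / (h p.1 - h p.2)
      = ∑ x, w x * ∑ y ∈ G.neighborFinset x, 𝓔 s(x, y) / (h x - h y) := by
  classical
  set F : V → V → ℝ := fun a b => if σ.dir a b then 𝓔 s(a, b) / (h a - h b) else 0 with hF
  rw [Finset.sum_filter, Fintype.sum_prod_type]
  have step1 : ∀ a b : V,
      (if σ.dir a b then 𝓔 s(a, b) * (w a - w b) / (h a - h b) else 0)
        = w a * F a b - w b * F a b := by
    intro a b
    by_cases hd : σ.dir a b <;> simp [hF, hd] <;> ring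
  calc ∑ a, ∑ b, (if σ.dir a b then 𝓔 s(a,b) * (w a - w b) / (h a - h b) else 0)
      = ∑ a, ∑ b, (w a * F a b - w b * F a b) := by
        exact Finset.sum_congr rfl fun a _ => Finset.sum_congr rfl fun b _ => step1 a b
    _ = (∑ a, ∑ b, w a * F a b) - (∑ a, ∑ b, w b * F a b) := by
        rw [← Finset.sum_sub_distrib]
        exact Finset.sum_congr rfl fun a _ => Finset.sum_sub_distrib _ _
    _ = (∑ a, ∑ b, w a * F a b) - (∑ b, ∑ a, w b * F a b) := by
        congr 1; exact Finset.sum_comm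
    _ = ∑ a, w a * ∑ b, (F a b - F b a) := by
        rw [← Finset.sum_sub_distrib]
        refine Finset.sum_congr rfl fun a _ => ?_
        rw [Finset.sum_sub_distrib, mul_sub, Finset.mul_sum, Finset.mul_sum]
    _ = ∑ x, w x * ∑ y ∈ G.neighborFinset x, 𝓔 s(x, y) / (h x - h y) := by
        refine Finset.sum_congr rfl fun a _ => ?_
        rw [neighborSum_eq]
        congr 1
        refine Finset.sum_congr rfl fun b _ => ?_
        by_cases hadj : G.Adj a b
        · rcases onedir G σ hadj with ⟨h1, h2⟩ | ⟨h1, h2⟩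
          · simp [hF, h1, h2, hadj]
          · simp only [hF, h1, h2, if_true, if_false, hadj, if_neg h2]
            rw [zero_sub, show s(b,a) = s(a,b) from Sym2.eq_swap, ← div_neg, neg_sub]
        · have n1 : ¬ σ.dir a b := fun hh => hadj (σ.dir_adj _ _ hh)
          have n2 : ¬ σ.dir b a := fun hh => hadj (σ.dir_adj _ _ hh).symm
          simp [hF, n1, n2, hadj]

lemma reach_fwd (G : SimpleGraph V) (B : Set V) (u : V → ℝ) (σ : GraphOrientation G)
    (hσ : Compatible G B u σ) (x : V) : ∃ b ∈ B, Relation.ReflTransGen σ.dir x b := by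
  have hwf : WellFounded (fun a b => Relation.TransGen σ.dir b a) := by
    haveI : IsTrans V (fun a b => Relation.TransGen σ.dir b a) := ⟨fun a b c h1 h2 => h2.trans h1⟩
    haveI : IsIrrefl V (fun a b => Relation.TransGen σ.dir b a) := ⟨fun a => hσ.1 a⟩
    exact Finite.wellFounded_of_trans_of_irrefl _
  refine hwf.induction (C := fun x => ∃ b ∈ B, Relation.ReflTransGen σ.dir x b) x ?_
  intro x ih
  by_cases hx : x ∈ B
  · exact ⟨x, hx, .refl⟩
  · obtain ⟨y, hy⟩ := (hσ.2.1 x hx).1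
    obtain ⟨b, hb, hr⟩ := ih y (Relation.TransGen.single hy)
    exact ⟨b, hb, .head hy hr⟩

lemma reach_bwd (G : SimpleGraph V) (B : Set V) (u : V → ℝ) (σ : GraphOrientation G)
    (hσ : Compatible G B u σ) (x : V) : ∃ a ∈ B, Relation.ReflTransGen σ.dir a x := by
  have hwf : WellFounded (Relation.TransGen σ.dir) := by
    haveI : IsTrans V (Relation.TransGen σ.dir) := ⟨fun a b c h1 h2 => h1.trans h2⟩
    haveI : IsIrrefl V (Relation.TransGen σ.dir) := ⟨fun a => hσ.1 a⟩
    exact Finite.wellFounded_of_trans_of_irrefl _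
  refine hwf.induction (C := fun x => ∃ a ∈ B, Relation.ReflTransGen σ.dir a x) x ?_
  intro x ih
  by_cases hx : x ∈ B
  · exact ⟨x, hx, .refl⟩
  · obtain ⟨y, hy⟩ := (hσ.2.1 x hx).2
    obtain ⟨a, ha, hr⟩ := ih y (Relation.TransGen.single hy)
    exact ⟨a, ha, hr.tail hy⟩

lemma mono_along {G : SimpleGraph V} (σ : GraphOrientation G) {h : V → ℝ}
    (hmono : ∀ x y, σ.dir x y → h y ≤ h x)
    {x b : V} (hr : Relation.ReflTransGen σ.dir x b) : h b ≤ h x := by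
  induction hr with
  | refl => exact le_refl _
  | tail hbc hcd ih => exact (hmono _ _ hcd).trans ih

set_option maxHeartbeats 1000000 in
/-- for each compatible orientation σ and positive energies 𝓔 there is a unique
choice of positive conductances whose harmonic extension of u realizes σ and the energies 𝓔. -/
theorem stmt_0 (G : SimpleGraph V) (hconn : G.Connected)
    (B : Set V) (hB : BoundaryOK G B) (u : V → ℝ) (hu : Set.InjOn u B)
    (σ : GraphOrientation G) (hσ : Compatible G B u σ)
    (𝓔 : Sym2 V → ℝ) (h𝓔 : ∀ e ∈ G.edgeSet, 0 < 𝓔 e) :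
    ∃ c : Sym2 V → ℝ,
      ((∀ e ∈ G.edgeSet, 0 < c e) ∧
        ∃ h : V → ℝ, (∀ b ∈ B, h b = u b) ∧ Harmonic G B c h ∧
          (∀ x y, σ.dir x y → h y < h x) ∧
          (∀ x y, G.Adj x y → c s(x, y) * (h x - h y) ^ 2 = 𝓔 s(x, y))) ∧
      ∀ c' : Sym2 V → ℝ,
        ((∀ e ∈ G.edgeSet, 0 < c' e) ∧
          ∃ h : V → ℝ, (∀ b ∈ B, h b = u b) ∧ Harmonic G B c' h ∧
            (∀ x y, σ.dir x y → h y < h x) ∧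
            (∀ x y, G.Adj x y → c' s(x, y) * (h x - h y) ^ 2 = 𝓔 s(x, y))) →
        ∀ e ∈ G.edgeSet, c' e = c e := by
  classical
  set P : Finset (V × V) := Finset.univ.filter (fun p : V × V => σ.dir p.1 p.2) with hPdef
  have hmemP : ∀ p : V × V, p ∈ P ↔ σ.dir p.1 p.2 := by intro p; simp [hPdef]
  have hPadj : ∀ p ∈ P, G.Adj p.1 p.2 := fun p hp => σ.dir_adj _ _ ((hmemP p).1 hp)
  have hLogM : ∀ h : V → ℝ, LogM G σ 𝓔 h = ∑ p ∈ P, 𝓔 s(p.1, p.2) * Real.log (h p.1 - h p.2) :=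
    fun h => rfl
  -- two distinct boundary vertices
  obtain ⟨a₀, b₀, ha₀, hb₀, hab₀⟩ : ∃ a b, a ∈ B ∧ b ∈ B ∧ a ≠ b := by
    have := hB.1
    rw [show (2:ℕ) = 1 + 1 by rfl] at this
    exact (Set.one_lt_ncard_iff B.toFinite).1 (by omega)
  -- P nonempty
  have hPne : P.Nonempty := by
    obtain ⟨wpath⟩ := hconn.preconnected a₀ b₀
    cases wpath with
    | nil => exact absurd rfl hab₀
    | cons hadj _ =>
      rename_i cvert _
      rcases onedir G σ hadj with ⟨h1, _⟩ | ⟨h1, _⟩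
      · exact ⟨(a₀, cvert), (hmemP _).2 h1⟩
      · exact ⟨(cvert, a₀), (hmemP _).2 h1⟩
  have h𝓔P : ∀ p ∈ P, 0 < 𝓔 s(p.1, p.2) :=
    fun p hp => h𝓔 _ (G.mem_edgeSet.2 (hPadj p hp))
  -- boundary finset, m, M
  set Bf : Finset V := Finset.univ.filter (· ∈ B) with hBfdef
  have hBfne : Bf.Nonempty := ⟨b₀, by simp [hBfdef, hb₀]⟩
  have hmemBf : ∀ b, b ∈ Bf ↔ b ∈ B := by intro b; simp [hBfdef]
  set m : ℝ := Bf.inf' hBfne u with hmdef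
  set M : ℝ := Bf.sup' hBfne u with hMdef
  have hmu : ∀ b ∈ B, m ≤ u b := fun b hb => Finset.inf'_le _ ((hmemBf b).2 hb)
  have huM : ∀ b ∈ B, u b ≤ M := fun b hb => Finset.le_sup' _ ((hmemBf b).2 hb)
  -- K and its compactness
  set K : Set (V → ℝ) :=
    {h | (∀ b ∈ B, h b = u b) ∧ ∀ x y, σ.dir x y → h y ≤ h x} with hKdef
  have hFK : FuSigma G B u σ ⊆ K := by
    rintro h ⟨h1, h2⟩
    exact ⟨h1, fun x y hxy => (h2 x y hxy).le⟩
  have hKbound : ∀ h ∈ K, ∀ x, h x ∈ Set.Icc m M := by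
    rintro h ⟨hbd, hmono⟩ x
    constructor
    · obtain ⟨b, hb, hr⟩ := reach_fwd G B u σ hσ x
      have := mono_along σ hmono hr
      have hbu := hbd b hb
      have := hmu b hb
      linarith
    · obtain ⟨a, ha, hr⟩ := reach_bwd G B u σ hσ x
      have := mono_along σ hmono hr
      have hau := hbd a ha
      have := huM a ha
      linarith
  have hKclosed : IsClosed K := by
    have hKeq : K = (⋂ b ∈ B, {h : V → ℝ | h b = u b}) ∩
        ⋂ (x) (y) (_ : σ.dir x y), {h : V → ℝ | h y ≤ h x} := by
      ext h
      simp only [hKdef, Set.mem_setOf_eq, Set.mem_inter_iff, Set.mem_iInter]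
    rw [hKeq]
    refine IsClosed.inter (isClosed_biInter fun b _ =>
      isClosed_eq (continuous_apply b) continuous_const) ?_
    exact isClosed_iInter fun x => isClosed_iInter fun y => isClosed_iInter fun _ =>
      isClosed_le (continuous_apply y) (continuous_apply x)
  have hKcpt : IsCompact K := by
    have hsub : K ⊆ Set.pi Set.univ (fun _ : V => Set.Icc m M) :=
      fun h hh => fun x _ => hKbound h hh x
    exact (isCompact_univ_pi fun _ : V => isCompact_Icc).of_isClosed_subset hKclosed hsub
  -- reach sets, R, d
  have hRSne : ∀ x : V, (Finset.univ.filter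
      (fun b => b ∈ B ∧ Relation.ReflTransGen σ.dir x b)).Nonempty := by
    intro x
    obtain ⟨b, hb, hr⟩ := reach_fwd G B u σ hσ x
    exact ⟨b, by simp [hb, hr]⟩
  set R : V → ℝ := fun x => (Finset.univ.filter
      (fun b => b ∈ B ∧ Relation.ReflTransGen σ.dir x b)).sup' (hRSne x) u with hRdef
  set d : V → ℕ := fun x =>
    (Finset.univ.filter (fun y => Relation.TransGen σ.dir x y)).card with hddef
  have hRle : ∀ x y, σ.dir x y → R y ≤ R x := by
    intro x y hxy
    refine Finset.sup'_le _ _ ?_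
    intro b hb
    simp only [Finset.mem_filter, Finset.mem_univ, true_and] at hb
    exact Finset.le_sup' u (by simp only [Finset.mem_filter, Finset.mem_univ, true_and]; exact ⟨hb.1, Relation.ReflTransGen.head hxy hb.2⟩)
  have hRB : ∀ b ∈ B, R b = u b := by
    intro b hb
    refine le_antisymm (Finset.sup'_le _ _ ?_) (Finset.le_sup' u (by simp only [Finset.mem_filter, Finset.mem_univ, true_and]; exact ⟨hb, Relation.ReflTransGen.refl⟩))
    intro b' hb'
    simp only [Finset.mem_filter, Finset.mem_univ, true_and] at hb'
    rcases Relation.reflTransGen_iff_eq_or_transGen.1 hb'.2 with rfl | htg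
    · exact le_refl _
    · exact (hσ.2.2 b hb b' hb'.1 htg).le
  have hRltB : ∀ a ∈ B, ∀ y, σ.dir a y → R y < u a := by
    intro a ha y hay
    rw [hRdef, Finset.sup'_lt_iff]
    intro b hb
    simp only [Finset.mem_filter, Finset.mem_univ, true_and] at hb
    exact hσ.2.2 a ha b hb.1 (Relation.TransGen.head' hay hb.2)
  have hdlt : ∀ x y, σ.dir x y → d y < d x := by
    intro x y hxy
    refine Finset.card_lt_card ?_
    rw [Finset.ssubset_iff_of_subset]
    · exact ⟨y, by simp [Relation.TransGen.single hxy], by simp [fun h => hσ.1 y h]⟩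
    · intro z hz
      simp only [Finset.mem_filter, Finset.mem_univ, true_and] at hz ⊢
      exact Relation.TransGen.head hxy hz
  have hd1 : ∀ x y, σ.dir x y → 1 ≤ d x := by
    intro x y hxy
    rw [hddef]
    exact Finset.card_pos.2 ⟨y, by simp [Relation.TransGen.single hxy]⟩
  -- the strict point
  set sBI : Finset (V × V) := Finset.univ.filter
    (fun p : V × V => p.1 ∈ B ∧ p.2 ∉ B ∧ σ.dir p.1 p.2) with hsBIdef
  have hgap : ∀ p ∈ sBI, 0 < (u p.1 - R p.2) / ((d p.2 : ℝ) + 1) := by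
    intro p hp
    simp only [hsBIdef, Finset.mem_filter, Finset.mem_univ, true_and] at hp
    have := hRltB p.1 hp.1 p.2 hp.2.2
    have hd : (0:ℝ) < (d p.2 : ℝ) + 1 := by positivity
    exact div_pos (by linarith) hd
  set εf : Finset ℝ :=
    insert 1 (sBI.image (fun p => (u p.1 - R p.2) / ((d p.2 : ℝ) + 1))) with hεfdef
  have hεfne : εf.Nonempty := ⟨1, by simp [hεfdef]⟩
  set ε : ℝ := εf.min' hεfne with hεdef
  have hε0 : 0 < ε := by
    rw [hεdef, Finset.lt_min'_iff]
    intro y hy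
    rw [hεfdef, Finset.mem_insert] at hy
    rcases hy with rfl | hy
    · exact one_pos
    · obtain ⟨p, hp, rfl⟩ := Finset.mem_image.1 hy
      exact hgap p hp
  have hεle : ∀ p ∈ sBI, ε * ((d p.2 : ℝ) + 1) ≤ u p.1 - R p.2 := by
    intro p hp
    have h1 : ε ≤ (u p.1 - R p.2) / ((d p.2 : ℝ) + 1) := by
      rw [hεdef]
      exact Finset.min'_le _ _ (by
        rw [hεfdef]
        exact Finset.mem_insert_of_mem (Finset.mem_image_of_mem _ hp))
    have hd : (0:ℝ) < (d p.2 : ℝ) + 1 := by positivity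
    calc ε * ((d p.2 : ℝ) + 1) ≤ ((u p.1 - R p.2) / ((d p.2 : ℝ) + 1)) * ((d p.2 : ℝ) + 1) :=
          mul_le_mul_of_nonneg_right h1 hd.le
      _ = u p.1 - R p.2 := div_mul_cancel₀ _ (ne_of_gt hd)
  set hst : V → ℝ := fun x => if x ∈ B then u x else R x + ε * (d x : ℝ) with hstdef
  have hstF : hst ∈ FuSigma G B u σ := by
    refine ⟨fun b hb => if_pos hb, ?_⟩
    intro x y hxy
    by_cases hx : x ∈ B <;> by_cases hy : y ∈ B
    · simp only [hstdef, if_pos hx, if_pos hy]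
      exact hσ.2.2 x hx y hy (.single hxy)
    · have hp : (x, y) ∈ sBI := by simp [hsBIdef, hx, hy, hxy]
      have h1 := hεle _ hp
      have h2 : ε * (d y : ℝ) < ε * ((d y : ℝ) + 1) := by nlinarith
      simp only [hstdef, if_pos hx, if_neg hy]
      linarith
    · have h1 : u y ≤ R x := Finset.le_sup' u (by
        simp only [Finset.mem_filter, Finset.mem_univ, true_and]
        exact ⟨hy, Relation.ReflTransGen.single hxy⟩)
      have h2 : (1:ℝ) ≤ (d x : ℝ) := by exact_mod_cast hd1 x y hxy
      have h3 : ε * 1 ≤ ε * (d x : ℝ) := mul_le_mul_of_nonneg_left h2 hε0.le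
      simp only [hstdef, if_neg hx, if_pos hy]
      linarith
    · have h1 := hRle x y hxy
      have h2 : (d y : ℝ) < (d x : ℝ) := by exact_mod_cast hdlt x y hxy
      have h3 : ε * (d y : ℝ) < ε * (d x : ℝ) := by nlinarith
      simp only [hstdef, if_neg hx, if_neg hy]
      linarith
  -- bounds and constants
  have hdiff : ∀ h ∈ FuSigma G B u σ, ∀ p ∈ P, 0 < h p.1 - h p.2 ∧ h p.1 - h p.2 ≤ M - m := by
    intro h hh p hp
    have hd := (hmemP p).1 hp
    have h1 := (hKbound h (hFK hh) p.1).2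
    have h2 := (hKbound h (hFK hh) p.2).1
    exact ⟨sub_pos.2 (hh.2 _ _ hd), by linarith⟩
  set L₀ : ℝ := max (Real.log (M - m)) 0 with hL₀def
  set C : ℝ := ∑ p ∈ P, 𝓔 s(p.1, p.2) * L₀ with hCdef
  set Emin : ℝ := P.inf' hPne (fun p => 𝓔 s(p.1, p.2)) with hEmindef
  have hEmin : 0 < Emin := (Finset.lt_inf'_iff _).2 h𝓔P
  have hEminle : ∀ p ∈ P, Emin ≤ 𝓔 s(p.1, p.2) := fun p hp => Finset.inf'_le _ hp
  have hbnd : ∀ h ∈ FuSigma G B u σ, ∀ p ∈ P,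
      LogM G σ 𝓔 h ≤ 𝓔 s(p.1, p.2) * Real.log (h p.1 - h p.2) + C := by
    intro h hh p hp
    rw [hLogM, ← Finset.add_sum_erase P _ hp]
    have hrest : ∑ q ∈ P.erase p, 𝓔 s(q.1, q.2) * Real.log (h q.1 - h q.2) ≤ C := by
      rw [hCdef]
      refine le_trans (Finset.sum_le_sum ?_)
        (Finset.sum_le_sum_of_subset_of_nonneg (Finset.erase_subset p P) ?_)
      · intro q hq
        have hqP := Finset.mem_of_mem_erase hq
        have hlog : Real.log (h q.1 - h q.2) ≤ L₀ := by
          refine le_trans (Real.log_le_log (hdiff h hh q hqP).1 (hdiff h hh q hqP).2) ?_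
          exact le_max_left _ _
        exact mul_le_mul_of_nonneg_left hlog (h𝓔P q hqP).le
      · intro q hq _
        exact mul_nonneg (h𝓔P q hq).le (le_max_right _ _)
    linarith
  -- the threshold ε'
  set δs : ℝ := P.inf' hPne (fun p => hst p.1 - hst p.2) with hδsdef
  have hδs : 0 < δs := (Finset.lt_inf'_iff _).2 (fun p hp => (hdiff hst hstF p hp).1)
  set ε' : ℝ := min (min (1/2) (Real.exp ((LogM G σ 𝓔 hst - C) / Emin - 1))) δs with hε'def
  have hε'0 : 0 < ε' := lt_min (lt_min (by norm_num) (Real.exp_pos _)) hδs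
  have hε'half : ε' ≤ 1/2 := le_trans (min_le_left _ _) (min_le_left _ _)
  have hε'lt : C + Emin * Real.log ε' < LogM G σ 𝓔 hst := by
    have h1 : Real.log ε' ≤ (LogM G σ 𝓔 hst - C) / Emin - 1 := by
      have h2 : ε' ≤ Real.exp ((LogM G σ 𝓔 hst - C) / Emin - 1) :=
        le_trans (min_le_left _ _) (min_le_right _ _)
      calc Real.log ε' ≤ Real.log (Real.exp ((LogM G σ 𝓔 hst - C) / Emin - 1)) :=
            Real.log_le_log hε'0 h2
        _ = (LogM G σ 𝓔 hst - C) / Emin - 1 := Real.log_exp _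
    have h3 := mul_le_mul_of_nonneg_left h1 hEmin.le
    have h4 : Emin * ((LogM G σ 𝓔 hst - C) / Emin - 1) = LogM G σ 𝓔 hst - C - Emin := by
      field_simp
    nlinarith
  -- the compact truncation and the maximizer
  set Kε : Set (V → ℝ) := K ∩ ⋂ (p : V × V) (_ : σ.dir p.1 p.2),
    {h : V → ℝ | ε' ≤ h p.1 - h p.2} with hKεdef
  have hKεmem : ∀ h : V → ℝ, h ∈ Kε ↔ h ∈ K ∧ ∀ p : V × V, σ.dir p.1 p.2 → ε' ≤ h p.1 - h p.2 := by
    intro h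
    simp only [hKεdef, Set.mem_inter_iff, Set.mem_iInter, Set.mem_setOf_eq]
  have hKεcpt : IsCompact Kε :=
    hKcpt.inter_right (isClosed_iInter fun p => isClosed_iInter fun _ =>
      isClosed_le continuous_const ((continuous_apply p.1).sub (continuous_apply p.2)))
  have hstKε : hst ∈ Kε := by
    rw [hKεmem]
    refine ⟨hFK hstF, fun p hp => ?_⟩
    exact le_trans (min_le_right _ _) (Finset.inf'_le _ ((hmemP p).2 hp))
  have hcont : ContinuousOn (LogM G σ 𝓔) Kε := by
    intro h hh
    apply ContinuousAt.continuousWithinAt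
    have : ∀ p ∈ P, ContinuousAt (fun h : V → ℝ => 𝓔 s(p.1, p.2) * Real.log (h p.1 - h p.2)) h := by
      intro p hp
      have hne : h p.1 - h p.2 ≠ 0 := by
        have := ((hKεmem h).1 hh).2 p ((hmemP p).1 hp)
        linarith
      have hg : Continuous fun h' : V → ℝ => h' p.1 - h' p.2 :=
        (continuous_apply p.1).sub (continuous_apply p.2)
      exact continuousAt_const.mul (ContinuousAt.comp (x := h)
        (Real.continuousAt_log hne) hg.continuousAt)
    have : ContinuousAt (fun h : V → ℝ => ∑ p ∈ P, 𝓔 s(p.1, p.2) * Real.log (h p.1 - h p.2)) h :=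
      tendsto_finset_sum _ (fun p hp => this p hp)
    exact this
  obtain ⟨h₀, hh₀K, hmax⟩ := hKεcpt.exists_isMaxOn ⟨hst, hstKε⟩ hcont
  have hh₀K' := (hKεmem h₀).1 hh₀K
  have hh₀F : h₀ ∈ FuSigma G B u σ := by
    refine ⟨hh₀K'.1.1, fun x y hxy => ?_⟩
    have := hh₀K'.2 (x, y) hxy
    simp only at this
    linarith
  -- global maximality over FuSigma
  have hglobal : ∀ h ∈ FuSigma G B u σ, LogM G σ 𝓔 h ≤ LogM G σ 𝓔 h₀ := by
    intro h hh
    by_cases hcase : ∀ p : V × V, σ.dir p.1 p.2 → ε' ≤ h p.1 - h p.2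
    · exact hmax ((hKεmem h).2 ⟨hFK hh, hcase⟩)
    · push_neg at hcase
      obtain ⟨p, hdp, hlt⟩ := hcase
      have hpP : p ∈ P := (hmemP p).2 hdp
      have h1 := hbnd h hh p hpP
      have hpos := (hdiff h hh p hpP).1
      have h2 : Real.log (h p.1 - h p.2) ≤ Real.log ε' := Real.log_le_log hpos hlt.le
      have hlogneg : Real.log ε' < 0 := Real.log_neg hε'0 (by linarith)
      have h3 : 𝓔 s(p.1, p.2) * Real.log (h p.1 - h p.2) ≤ Emin * Real.log ε' := by
        calc 𝓔 s(p.1, p.2) * Real.log (h p.1 - h p.2)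
            ≤ 𝓔 s(p.1, p.2) * Real.log ε' := mul_le_mul_of_nonneg_left h2 (h𝓔P p hpP).le
          _ ≤ Emin * Real.log ε' := mul_le_mul_of_nonpos_right (hEminle p hpP) hlogneg.le
      have h5 : LogM G σ 𝓔 hst ≤ LogM G σ 𝓔 h₀ := hmax hstKε
      linarith
  -- enharmonicity of h₀ at interior vertices
  have henh : ∀ x, x ∉ B → ∑ y ∈ G.neighborFinset x, 𝓔 s(x, y) / (h₀ x - h₀ y) = 0 := by
    intro x hx
    set w : V → ℝ := fun v => if v = x then 1 else 0 with hwdef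
    set δ : ℝ := P.inf' hPne (fun p => h₀ p.1 - h₀ p.2) with hδdef
    have hδpos : 0 < δ := (Finset.lt_inf'_iff _).2 (fun p hp => (hdiff h₀ hh₀F p hp).1)
    have hwB : ∀ v ∈ B, w v = 0 := by
      intro v hv
      have hvx : v ≠ x := fun he => hx (he ▸ hv)
      simp [hwdef, hvx]

    have hloc : IsLocalMax (fun t : ℝ => LogM G σ 𝓔 (fun v => h₀ v + t * w v)) 0 := by
      refine Metric.eventually_nhds_iff.2 ⟨δ, hδpos, fun t ht => ?_⟩
      have habs : |t| < δ := by rwa [Real.dist_eq, sub_zero] at ht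
      have hmem : (fun v => h₀ v + t * w v) ∈ FuSigma G B u σ := by
        constructor
        · intro b hb
          show h₀ b + t * w b = u b
          rw [hwB b hb, mul_zero, add_zero]
          exact hh₀F.1 b hb
        · intro y z hyz
          have h1 : δ ≤ h₀ y - h₀ z := Finset.inf'_le _ ((hmemP (y, z)).2 hyz)
          have h2 : |t * (w y - w z)| ≤ |t| := by
            rw [abs_mul]
            have : |w y - w z| ≤ 1 := by
              simp only [hwdef]
              split_ifs <;> norm_num
            nlinarith [abs_nonneg t]
          have h3 := abs_le.1 h2
          show h₀ z + t * w z < h₀ y + t * w y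
          nlinarith
      have h0eq : (fun v => h₀ v + (0:ℝ) * w v) = h₀ := by funext v; ring
      calc LogM G σ 𝓔 (fun v => h₀ v + t * w v) ≤ LogM G σ 𝓔 h₀ := hglobal _ hmem
        _ = LogM G σ 𝓔 (fun v => h₀ v + (0:ℝ) * w v) := by rw [h0eq]
    have hder : HasDerivAt (fun t : ℝ => LogM G σ 𝓔 (fun v => h₀ v + t * w v))
        (∑ p ∈ P, 𝓔 s(p.1, p.2) * (w p.1 - w p.2) / (h₀ p.1 - h₀ p.2)) 0 := by
      have hshape : (fun t : ℝ => LogM G σ 𝓔 (fun v => h₀ v + t * w v))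
          = fun t : ℝ => ∑ p ∈ P,
              𝓔 s(p.1, p.2) * Real.log ((h₀ p.1 + t * w p.1) - (h₀ p.2 + t * w p.2)) := by
        funext t
        exact hLogM _
      rw [hshape]
      refine HasDerivAt.fun_sum ?_
      intro p hp
      have hane : h₀ p.1 - h₀ p.2 ≠ 0 := ne_of_gt (hdiff h₀ hh₀F p hp).1
      have hinner : HasDerivAt
          (fun t : ℝ => (h₀ p.1 + t * w p.1) - (h₀ p.2 + t * w p.2)) (w p.1 - w p.2) 0 :=
        ((hasDerivAt_mul_const (w p.1)).const_add (h₀ p.1)).sub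
          ((hasDerivAt_mul_const (w p.2)).const_add (h₀ p.2))
      have hval : (h₀ p.1 + (0:ℝ) * w p.1) - (h₀ p.2 + (0:ℝ) * w p.2) = h₀ p.1 - h₀ p.2 := by ring
      have hlog := (Real.hasDerivAt_log (by rw [hval]; exact hane)).comp 0 hinner
      have := hlog.const_mul (𝓔 s(p.1, p.2))
      convert this using 1
      case e'_4 => rfl
      case e'_8 => rfl
      all_goals (rw [hval]; try field_simp; try ring)
    have hzero := hloc.hasDerivAt_eq_zero hder
    rw [hPdef] at hzero
    rw [lemmaA G σ 𝓔 h₀ w] at hzero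
    have hsimp : ∑ v, w v * ∑ y ∈ G.neighborFinset v, 𝓔 s(v, y) / (h₀ v - h₀ y)
        = ∑ y ∈ G.neighborFinset x, 𝓔 s(x, y) / (h₀ x - h₀ y) := by
      rw [hwdef]
      simp [ite_mul, Finset.sum_ite_eq']
    rw [hsimp] at hzero
    exact hzero
  -- adjacent differences are nonzero for functions in FuSigma
  have hne0 : ∀ h ∈ FuSigma G B u σ, ∀ a b : V, G.Adj a b → h a - h b ≠ 0 := by
    intro h hh a b hadj
    rcases onedir G σ hadj with ⟨h1, _⟩ | ⟨h1, _⟩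
    · have := hh.2 a b h1; intro hc; linarith
    · have := hh.2 b a h1; intro hc; linarith
  -- uniqueness of the enharmonic extension
  have huniq : ∀ h₁ h₂ : V → ℝ, h₁ ∈ FuSigma G B u σ → h₂ ∈ FuSigma G B u σ →
      (∀ x, x ∉ B → ∑ y ∈ G.neighborFinset x, 𝓔 s(x, y) / (h₁ x - h₁ y) = 0) →
      (∀ x, x ∉ B → ∑ y ∈ G.neighborFinset x, 𝓔 s(x, y) / (h₂ x - h₂ y) = 0) →
      h₁ = h₂ := by
    intro h₁ h₂ hF1 hF2 hE1 hE2
    set w : V → ℝ := fun v => h₂ v - h₁ v with hwdef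
    have hz : ∀ h' : V → ℝ, h' ∈ FuSigma G B u σ →
        (∀ x, x ∉ B → ∑ y ∈ G.neighborFinset x, 𝓔 s(x, y) / (h' x - h' y) = 0) →
        ∑ p ∈ P, 𝓔 s(p.1, p.2) * (w p.1 - w p.2) / (h' p.1 - h' p.2) = 0 := by
      intro h' hF' hE'
      rw [hPdef, lemmaA G σ 𝓔 h' w]
      refine Finset.sum_eq_zero ?_
      intro x _
      by_cases hx : x ∈ B
      · have : w x = 0 := by rw [hwdef]; simp [hF1.1 x hx, hF2.1 x hx]
        rw [this, zero_mul]
      · rw [hE' x hx, mul_zero]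
    have hz1 := hz h₁ hF1 hE1
    have hz2 := hz h₂ hF2 hE2
    have hsum : ∑ p ∈ P, 𝓔 s(p.1, p.2) * (w p.1 - w p.2) ^ 2 /
        ((h₁ p.1 - h₁ p.2) * (h₂ p.1 - h₂ p.2)) = 0 := by
      have hterm : ∀ p ∈ P, 𝓔 s(p.1, p.2) * (w p.1 - w p.2) ^ 2 /
          ((h₁ p.1 - h₁ p.2) * (h₂ p.1 - h₂ p.2))
          = 𝓔 s(p.1, p.2) * (w p.1 - w p.2) / (h₁ p.1 - h₁ p.2)
            - 𝓔 s(p.1, p.2) * (w p.1 - w p.2) / (h₂ p.1 - h₂ p.2) := by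
        intro p hp
        have ha := ne_of_gt (hdiff h₁ hF1 p hp).1
        have hb := ne_of_gt (hdiff h₂ hF2 p hp).1
        rw [hwdef]
        field_simp
        ring
      rw [Finset.sum_congr rfl hterm, Finset.sum_sub_distrib, hz1, hz2, sub_zero]
    have hkey : ∀ p ∈ P, w p.1 = w p.2 := by
      intro p hp
      have ha := (hdiff h₁ hF1 p hp).1
      have hb := (hdiff h₂ hF2 p hp).1
      have hnn : ∀ q ∈ P, 0 ≤ 𝓔 s(q.1, q.2) * (w q.1 - w q.2) ^ 2 /
          ((h₁ q.1 - h₁ q.2) * (h₂ q.1 - h₂ q.2)) := by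
        intro q hq
        exact div_nonneg (mul_nonneg (h𝓔P q hq).le (sq_nonneg _))
          (mul_pos (hdiff h₁ hF1 q hq).1 (hdiff h₂ hF2 q hq).1).le
      have hzp := (Finset.sum_eq_zero_iff_of_nonneg hnn).1 hsum p hp
      have hdenne : (h₁ p.1 - h₁ p.2) * (h₂ p.1 - h₂ p.2) ≠ 0 := (mul_pos ha hb).ne'
      rw [div_eq_zero_iff] at hzp
      rcases hzp with hzp | hzp
      · rcases mul_eq_zero.1 hzp with hzp | hzp
        · exact absurd hzp (h𝓔P p hp).ne'
        · have := pow_eq_zero_iff (n := 2) (by norm_num) |>.1 hzp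
          linarith [sub_eq_zero.1 this]
      · exact absurd hzp hdenne
    have hadjw : ∀ a b : V, G.Adj a b → w a = w b := by
      intro a b hab
      rcases onedir G σ hab with ⟨h1, _⟩ | ⟨h1, _⟩
      · exact hkey (a, b) ((hmemP _).2 h1)
      · exact (hkey (b, a) ((hmemP _).2 h1)).symm
    have hwalk : ∀ {a b : V}, G.Walk a b → w a = w b := by
      intro a b pw
      induction pw with
      | nil => rfl
      | cons hadj _ ih => exact (hadjw _ _ hadj).trans ih
    have hw0 : ∀ v, w v = 0 := by
      intro v
      obtain ⟨pw⟩ := hconn.preconnected v b₀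
      have h1 := hwalk pw
      have h2 : w b₀ = 0 := by rw [hwdef]; simp [hF1.1 b₀ hb₀, hF2.1 b₀ hb₀]
      rw [h1, h2]
    funext v
    have := hw0 v
    rw [hwdef] at this
    simp only at this
    linarith
  -- the conductances
  set csq : Sym2 V → ℝ := Sym2.lift ⟨fun a b => (h₀ a - h₀ b) ^ 2, by intro a b; ring⟩ with hcsqdef
  set c : Sym2 V → ℝ := fun e => 𝓔 e / csq e with hcdef
  have hclift : ∀ a b : V, c s(a, b) = 𝓔 s(a, b) / (h₀ a - h₀ b) ^ 2 := by
    intro a b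
    rw [hcdef, hcsqdef]
    simp
  have hcen : ∀ a b : V, G.Adj a b → c s(a, b) * (h₀ a - h₀ b) ^ 2 = 𝓔 s(a, b) := by
    intro a b hadj
    rw [hclift]
    exact div_mul_cancel₀ _ (pow_ne_zero 2 (hne0 h₀ hh₀F a b hadj))
  have hcpos : ∀ e ∈ G.edgeSet, 0 < c e := by
    intro e he
    revert he
    refine Sym2.ind ?_ e
    intro a b he
    have hadj := G.mem_edgeSet.1 he
    rw [hclift]
    refine div_pos (h𝓔 _ he) ?_
    have h1 := hne0 h₀ hh₀F a b hadj
    exact lt_of_le_of_ne (sq_nonneg _) (Ne.symm (pow_ne_zero 2 h1))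
  have hharm : Harmonic G B c h₀ := by
    intro x hx
    have : ∑ y ∈ G.neighborFinset x, c s(x, y) * (h₀ x - h₀ y)
        = ∑ y ∈ G.neighborFinset x, 𝓔 s(x, y) / (h₀ x - h₀ y) := by
      refine Finset.sum_congr rfl ?_
      intro y hy
      have hadj := (SimpleGraph.mem_neighborFinset _ _ _).1 hy
      have hne := hne0 h₀ hh₀F x y hadj
      rw [hclift]
      field_simp
    rw [this, henh x hx]
  refine ⟨c, ⟨hcpos, h₀, hh₀F.1, hharm, hh₀F.2, hcen⟩, ?_⟩
  rintro c' ⟨hc'pos, h', hbd', hharm', hstrict', hen'⟩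
  have hF' : h' ∈ FuSigma G B u σ := ⟨hbd', hstrict'⟩
  have henh' : ∀ x, x ∉ B → ∑ y ∈ G.neighborFinset x, 𝓔 s(x, y) / (h' x - h' y) = 0 := by
    intro x hx
    have : ∑ y ∈ G.neighborFinset x, 𝓔 s(x, y) / (h' x - h' y)
        = ∑ y ∈ G.neighborFinset x, c' s(x, y) * (h' x - h' y) := by
      refine Finset.sum_congr rfl ?_
      intro y hy
      have hadj := (SimpleGraph.mem_neighborFinset _ _ _).1 hy
      have hne := hne0 h' hF' x y hadj
      have := hen' x y hadj
      field_simp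
      nlinarith [this]
    rw [this, hharm' x hx]
  have heq : h' = h₀ := huniq h' h₀ hF' hh₀F henh' henh
  intro e he
  revert he
  refine Sym2.ind ?_ e
  intro a b he
  have hadj := G.mem_edgeSet.1 he
  have e1 := hen' a b hadj
  rw [heq] at e1
  have e2 := hcen a b hadj
  have hd2 : (h₀ a - h₀ b) ^ 2 ≠ 0 := pow_ne_zero 2 (hne0 h₀ hh₀F a b hadj)
  exact mul_right_cancel₀ hd2 (e1.trans e2.symm)
end

section
/- Let G be a finite connected simple graph with boundary B and injective boundary values u : B → ℝ as in the context, let σ be an orientation of G compatible with u, and let 𝓔 : E → ℝ assign a positive real energy to each edge. If h ∈ F_u(σ) satisfies the enharmonic equation Σ_{y ∼ x} 𝓔_{xy}/(h(x) − h(y)) = 0 at every interior vertex x, then h is the unique maximizer over F_u(σ) of the functional M(h) = ∏_{e = xy ∈ E} |h(x) − h(y)|^{𝓔_e}; in particular F_u(σ) contains exactly one function satisfying the enharmonic equation at every interior vertex. -/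
attribute [local instance] Classical.propDecidable

variable {V : Type*} [Fintype V] [DecidableEq V]

lemma aux_not_dir_swap {G : SimpleGraph V} (σ : GraphOrientation G) {x y : V}
    (hd : σ.dir x y) : ¬ σ.dir y x :=
  (σ.dir_total x y (σ.dir_adj x y hd)).mp hd

lemma aux_dir_or {G : SimpleGraph V} (σ : GraphOrientation G) {x y : V} (hadj : G.Adj x y) :
    σ.dir x y ∨ σ.dir y x := by
  by_cases hd : σ.dir x y
  · exact Or.inl hd
  · right
    by_contra hd2
    exact hd ((σ.dir_total x y hadj).mpr hd2)

lemma aux_log_ineq {E d d' : ℝ} (hE : 0 < E) (hd : 0 < d) (hd' : 0 < d') :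
    E * Real.log d' ≤ E * Real.log d + E / d * (d' - d) := by
  have h1 : Real.log (d' / d) ≤ d' / d - 1 := Real.log_le_sub_one_of_pos (by positivity)
  rw [Real.log_div hd'.ne' hd.ne'] at h1
  have h2 : E * (Real.log d' - Real.log d) ≤ E * (d' / d - 1) :=
    mul_le_mul_of_nonneg_left h1 hE.le
  have h3 : E / d * (d' - d) = E * (d' / d - 1) := by field_simp
  linarith

lemma aux_log_ineq_strict {E d d' : ℝ} (hE : 0 < E) (hd : 0 < d) (hd' : 0 < d')
    (hne : d' ≠ d) :
    E * Real.log d' < E * Real.log d + E / d * (d' - d) := by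
  have hx : d' / d ≠ 1 := by
    intro hc
    exact hne ((div_eq_one_iff_eq hd.ne').mp hc)
  have h1 : Real.log (d' / d) < d' / d - 1 := Real.log_lt_sub_one_of_pos (by positivity) hx
  rw [Real.log_div hd'.ne' hd.ne'] at h1
  have h2 : E * (Real.log d' - Real.log d) < E * (d' / d - 1) :=
    (mul_lt_mul_iff_right₀ hE).mpr h1
  have h3 : E / d * (d' - d) = E * (d' / d - 1) := by field_simp
  linarith

/-- The linear (first-order) term vanishes at an enharmonic function. -/
lemma aux_linear_zero {G : SimpleGraph V} {B : Set V} {u : V → ℝ}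
    {σ : GraphOrientation G} {𝓔 : Sym2 V → ℝ}
    {h : V → ℝ} (hmem : h ∈ FuSigma G B u σ)
    (henh : ∀ x, x ∉ B → EnharmonicAt G 𝓔 h x)
    {h' : V → ℝ} (hmem' : h' ∈ FuSigma G B u σ) :
    ∑ p ∈ Finset.univ.filter (fun p : V × V => σ.dir p.1 p.2),
      𝓔 s(p.1, p.2) / (h p.1 - h p.2) * ((h' p.1 - h' p.2) - (h p.1 - h p.2)) = 0 := by
  classical
  set c : V → V → ℝ := fun x y => 𝓔 s(x, y) / (h x - h y) with hc
  set g : V → ℝ := fun x => h' x - h x with hg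
  have hgB : ∀ b ∈ B, g b = 0 := by
    intro b hb
    simp [hg, hmem.1 b hb, hmem'.1 b hb]
  have hterm : ∀ p : V × V,
      𝓔 s(p.1, p.2) / (h p.1 - h p.2) * ((h' p.1 - h' p.2) - (h p.1 - h p.2))
        = c p.1 p.2 * g p.1 - c p.1 p.2 * g p.2 := by
    intro p; simp only [hc, hg]; ring
  have step1 : ∑ p ∈ Finset.univ.filter (fun p : V × V => σ.dir p.1 p.2),
      𝓔 s(p.1, p.2) / (h p.1 - h p.2) * ((h' p.1 - h' p.2) - (h p.1 - h p.2))
      = ∑ x : V, ∑ y : V,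
        ((if σ.dir x y then c x y * g x else 0) - (if σ.dir x y then c x y * g y else 0)) := by
    rw [Finset.sum_filter, Fintype.sum_prod_type]
    apply Finset.sum_congr rfl; intro x _
    apply Finset.sum_congr rfl; intro y _
    by_cases hd : σ.dir x y
    · simp [hd, hterm (x, y)]
    · simp [hd]
  have step2 : ∑ x : V, ∑ y : V,
      ((if σ.dir x y then c x y * g x else 0) - (if σ.dir x y then c x y * g y else 0))
      = (∑ x : V, ∑ y : V, (if σ.dir x y then c x y * g x else 0))
        - ∑ x : V, ∑ y : V, (if σ.dir x y then c x y * g y else 0) := by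
    simp [Finset.sum_sub_distrib]
  have step3 : (∑ x : V, ∑ y : V, (if σ.dir x y then c x y * g y else 0))
      = ∑ x : V, ∑ y : V, (if σ.dir y x then c y x * g x else 0) :=
    Finset.sum_comm
  have step4 : (∑ x : V, ∑ y : V, (if σ.dir x y then c x y * g x else 0))
        - (∑ x : V, ∑ y : V, (if σ.dir y x then c y x * g x else 0))
      = ∑ x : V, g x *
          ∑ y : V, ((if σ.dir x y then c x y else 0) - (if σ.dir y x then c y x else 0)) := by
    rw [← Finset.sum_sub_distrib]
    apply Finset.sum_congr rfl; intro x _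
    rw [Finset.mul_sum, ← Finset.sum_sub_distrib]
    apply Finset.sum_congr rfl; intro y _
    by_cases hd1 : σ.dir x y <;> by_cases hd2 : σ.dir y x <;> simp [hd1, hd2] <;> ring
  have hA : ∀ x : V,
      (∑ y : V, ((if σ.dir x y then c x y else 0) - (if σ.dir y x then c y x else 0)))
        = ∑ y ∈ G.neighborFinset x, 𝓔 s(x, y) / (h x - h y) := by
    intro x
    have hnb : G.neighborFinset x = Finset.univ.filter (fun y => G.Adj x y) := by
      ext y; simp [SimpleGraph.mem_neighborFinset]
    rw [hnb, Finset.sum_filter]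
    apply Finset.sum_congr rfl; intro y _
    by_cases hadj : G.Adj x y
    · rcases aux_dir_or σ hadj with hd | hd
      · have hnd := aux_not_dir_swap σ hd
        simp [hd, hnd, hadj, hc]
      · have hnd := aux_not_dir_swap σ hd
        simp only [hnd, hd, hadj, if_true, if_false, zero_sub, hc]
        rw [show s(y, x) = s(x, y) from Sym2.eq_swap]
        rw [show h x - h y = -(h y - h x) by ring, div_neg]
    · have h1 : ¬ σ.dir x y := fun hd => hadj (σ.dir_adj _ _ hd)
      have h2 : ¬ σ.dir y x := fun hd => hadj (G.adj_symm (σ.dir_adj _ _ hd))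
      simp [h1, h2, hadj]
  rw [step1, step2, step3, step4]
  apply Finset.sum_eq_zero
  intro x _
  by_cases hxB : x ∈ B
  · rw [hgB x hxB, zero_mul]
  · rw [hA x, henh x hxB, mul_zero]

/-- strict inequality of LogM at the enharmonic point. -/
lemma aux_logM_strict {G : SimpleGraph V} (hconn : G.Connected)
    {B : Set V} (hBne : B.Nonempty) {u : V → ℝ}
    {σ : GraphOrientation G} {𝓔 : Sym2 V → ℝ} (h𝓔 : ∀ e ∈ G.edgeSet, 0 < 𝓔 e)
    {h : V → ℝ} (hmem : h ∈ FuSigma G B u σ)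
    (henh : ∀ x, x ∉ B → EnharmonicAt G 𝓔 h x)
    {h' : V → ℝ} (hmem' : h' ∈ FuSigma G B u σ) (hne : h' ≠ h) :
    LogM G σ 𝓔 h' < LogM G σ 𝓔 h := by
  classical
  set S := Finset.univ.filter (fun p : V × V => σ.dir p.1 p.2) with hS
  have hdirS : ∀ p ∈ S, σ.dir p.1 p.2 := by
    intro p hp; exact (Finset.mem_filter.mp hp).2
  have hEpos : ∀ p ∈ S, 0 < 𝓔 s(p.1, p.2) := by
    intro p hp
    exact h𝓔 _ (G.mem_edgeSet.mpr (σ.dir_adj _ _ (hdirS p hp)))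
  have hdpos : ∀ p ∈ S, 0 < h p.1 - h p.2 := by
    intro p hp; have := hmem.2 _ _ (hdirS p hp); linarith
  have hdpos' : ∀ p ∈ S, 0 < h' p.1 - h' p.2 := by
    intro p hp; have := hmem'.2 _ _ (hdirS p hp); linarith
  -- there is an edge where the differences differ
  have hstrict : ∃ p ∈ S, (h' p.1 - h' p.2) ≠ (h p.1 - h p.2) := by
    by_contra hcon
    push_neg at hcon
    have hedge : ∀ x y : V, G.Adj x y → h' x - h x = h' y - h y := by
      intro x y hadj
      rcases aux_dir_or σ hadj with hd | hd
      · have hp : (x, y) ∈ S := Finset.mem_filter.mpr ⟨Finset.mem_univ _, hd⟩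
        have := hcon (x, y) hp; simp at this; linarith
      · have hp : (y, x) ∈ S := Finset.mem_filter.mpr ⟨Finset.mem_univ _, hd⟩
        have := hcon (y, x) hp; simp at this; linarith
    have hconst : ∀ x y : V, h' x - h x = h' y - h y := by
      intro x y
      obtain ⟨w⟩ := hconn.preconnected x y
      induction w with
      | nil => rfl
      | cons hadj p ih => exact (hedge _ _ hadj).trans ih
    obtain ⟨b, hb⟩ := hBne
    apply hne
    funext x
    have h1 : h' x - h x = h' b - h b := hconst x b
    have h2 : h' b = h b := by rw [hmem'.1 b hb, hmem.1 b hb]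
    have : h' x - h x = 0 := by rw [h1, h2]; ring
    linarith
  have hle : ∀ p ∈ S, 𝓔 s(p.1, p.2) * Real.log (h' p.1 - h' p.2)
      ≤ 𝓔 s(p.1, p.2) * Real.log (h p.1 - h p.2)
        + 𝓔 s(p.1, p.2) / (h p.1 - h p.2) * ((h' p.1 - h' p.2) - (h p.1 - h p.2)) := by
    intro p hp
    exact aux_log_ineq (hEpos p hp) (hdpos p hp) (hdpos' p hp)
  have hlt : ∑ p ∈ S, 𝓔 s(p.1, p.2) * Real.log (h' p.1 - h' p.2)
      < ∑ p ∈ S, (𝓔 s(p.1, p.2) * Real.log (h p.1 - h p.2)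
        + 𝓔 s(p.1, p.2) / (h p.1 - h p.2) * ((h' p.1 - h' p.2) - (h p.1 - h p.2))) := by
    obtain ⟨q, hqS, hq⟩ := hstrict
    refine Finset.sum_lt_sum hle ⟨q, hqS, ?_⟩
    exact aux_log_ineq_strict (hEpos q hqS) (hdpos q hqS) (hdpos' q hqS) hq
  have hzero := aux_linear_zero hmem henh hmem'
  rw [Finset.sum_add_distrib] at hlt
  rw [← hS] at hzero
  rw [hzero, add_zero] at hlt
  simpa [LogM, hS] using hlt

/-- Mfun is exp of LogM on the polytope. -/
lemma aux_mfun_eq_exp {G : SimpleGraph V} {B : Set V} {u : V → ℝ}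
    {σ : GraphOrientation G} (𝓔 : Sym2 V → ℝ)
    {h : V → ℝ} (hmem : h ∈ FuSigma G B u σ) :
    Mfun G 𝓔 h = Real.exp (LogM G σ 𝓔 h) := by
  classical
  rw [Mfun, LogM, Real.exp_sum]
  refine (Finset.prod_bij (fun (p : V × V) _ => s(p.1, p.2)) ?_ ?_ ?_ ?_).symm
  · intro p hp
    have hd := (Finset.mem_filter.mp hp).2
    exact SimpleGraph.mem_edgeFinset.mpr (G.mem_edgeSet.mpr (σ.dir_adj _ _ hd))
  · intro p hp q hq heq
    have hdp := (Finset.mem_filter.mp hp).2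
    have hdq := (Finset.mem_filter.mp hq).2
    rcases Sym2.eq_iff.mp heq with ⟨h1, h2⟩ | ⟨h1, h2⟩
    · exact Prod.ext h1 h2
    · exfalso
      rw [h1, h2] at hdp
      exact aux_not_dir_swap σ hdq hdp
  · intro e he
    induction e with
    | _ x y =>
      have hadj : G.Adj x y := G.mem_edgeSet.mp (SimpleGraph.mem_edgeFinset.mp he)
      rcases aux_dir_or σ hadj with hd | hd
      · exact ⟨(x, y), Finset.mem_filter.mpr ⟨Finset.mem_univ _, hd⟩, rfl⟩
      · exact ⟨(y, x), Finset.mem_filter.mpr ⟨Finset.mem_univ _, hd⟩, Sym2.eq_swap⟩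
  · intro p hp
    have hd := (Finset.mem_filter.mp hp).2
    have hdpos : 0 < h p.1 - h p.2 := by
      have := hmem.2 _ _ hd; linarith
    rw [Sym2.lift_mk]
    dsimp only
    rw [abs_of_pos hdpos, Real.rpow_def_of_pos hdpos, mul_comm]

/-- a function in F_u(σ) satisfying the enharmonic equation at all interior
vertices is the unique maximizer of M over F_u(σ); in particular it is the only such function. -/
theorem stmt_2 (G : SimpleGraph V) (hconn : G.Connected)
    (B : Set V) (hB : BoundaryOK G B) (u : V → ℝ) (hu : Set.InjOn u B)
    (σ : GraphOrientation G) (hσ : Compatible G B u σ)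
    (𝓔 : Sym2 V → ℝ) (h𝓔 : ∀ e ∈ G.edgeSet, 0 < 𝓔 e)
    (h : V → ℝ) (hmem : h ∈ FuSigma G B u σ)
    (henh : ∀ x, x ∉ B → EnharmonicAt G 𝓔 h x) :
    (∀ h' ∈ FuSigma G B u σ, h' ≠ h → Mfun G 𝓔 h' < Mfun G 𝓔 h) ∧
    (∀ h' ∈ FuSigma G B u σ, (∀ x, x ∉ B → EnharmonicAt G 𝓔 h' x) → h' = h) := by
  have hBne : B.Nonempty := by
    rcases hB with ⟨h2, -⟩
    exact Set.nonempty_of_ncard_ne_zero (by omega)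
  constructor
  · intro h' hm' hne
    rw [aux_mfun_eq_exp (σ := σ) 𝓔 hm', aux_mfun_eq_exp (σ := σ) 𝓔 hmem]
    exact Real.exp_lt_exp.mpr (aux_logM_strict hconn hBne h𝓔 hmem henh hm' hne)
  · intro h' hm' henh'
    by_contra hne
    have h1 := aux_logM_strict hconn hBne h𝓔 hmem henh hm' hne
    have h2 := aux_logM_strict hconn hBne h𝓔 hm' henh' hmem (fun e => hne e.symm)
    linarith
end

section
/- Let G be a finite connected simple graph with boundary B and injective boundary values u : B → ℝ as in the context, let σ be an acyclic orientation of G, and let 𝓔 : E → ℝ assign a positive real energy to each edge. Then the function h ↦ Σ_{e} 𝓔_e · log(h(x_e) − h(y_e)), where the sum is over edges e directed from x_e to y_e by σ, is strictly concave on the convex set F_u(σ): for any two distinct h₁, h₂ ∈ F_u(σ) and any t ∈ (0,1), its value at t·h₁ + (1−t)·h₂ is strictly greater than t times its value at h₁ plus (1−t) times its value at h₂. -/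
attribute [local instance] Classical.propDecidable

variable {V : Type*} [Fintype V] [DecidableEq V]

lemma aux_const {G : SimpleGraph V} (hconn : G.Preconnected) (f : V → ℝ)
    (hf : ∀ x y, G.Adj x y → f x = f y) (x y : V) : f x = f y := by
  obtain ⟨w⟩ := hconn x y
  induction w with
  | nil => rfl
  | cons h _ ih => exact (hf _ _ h).trans ih

/-- for an acyclic orientation σ and positive energies, the functional
h ↦ Σ_e 𝓔_e log(h x_e − h y_e) is strictly concave on the convex set F_u(σ). -/
theorem stmt_3 (G : SimpleGraph V) (hconn : G.Connected)
    (B : Set V) (hB : BoundaryOK G B) (u : V → ℝ) (hu : Set.InjOn u B)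
    (σ : GraphOrientation G) (hacyc : ∀ x, ¬ Relation.TransGen σ.dir x x)
    (𝓔 : Sym2 V → ℝ) (h𝓔 : ∀ e ∈ G.edgeSet, 0 < 𝓔 e)
    (h₁ h₂ : V → ℝ) (hm₁ : h₁ ∈ FuSigma G B u σ) (hm₂ : h₂ ∈ FuSigma G B u σ)
    (hne : h₁ ≠ h₂) (t : ℝ) (ht0 : 0 < t) (ht1 : t < 1) :
    t * LogM G σ 𝓔 h₁ + (1 - t) * LogM G σ 𝓔 h₂ <
      LogM G σ 𝓔 (fun v => t * h₁ v + (1 - t) * h₂ v) := by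
  classical
  set S := Finset.univ.filter (fun p : V × V => σ.dir p.1 p.2) with hS
  -- find a witness edge where differences differ
  have hwit : ∃ p ∈ S, h₁ p.1 - h₁ p.2 ≠ h₂ p.1 - h₂ p.2 := by
    by_contra hcon
    push_neg at hcon
    have hedge : ∀ x y, G.Adj x y → (h₁ - h₂) x = (h₁ - h₂) y := by
      intro x y hadj
      by_cases hd : σ.dir x y
      · have := hcon (x, y) (by simp [hS, hd])
        simp only [Pi.sub_apply]; linarith
      · have hd' : σ.dir y x := by
          by_contra hd'
          exact hd ((σ.dir_total x y hadj).mpr hd')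
        have := hcon (y, x) (by simp [hS, hd'])
        simp only [Pi.sub_apply]; linarith
    have hconst : ∀ x y, (h₁ - h₂) x = (h₁ - h₂) y :=
      aux_const hconn.preconnected _ hedge
    obtain ⟨b, hb⟩ : B.Nonempty := by
      rcases Set.eq_empty_or_nonempty B with h | h
      · exfalso; rw [h] at hB; simpa using hB.1
      · exact h
    have hb0 : (h₁ - h₂) b = 0 := by
      simp [Pi.sub_apply, hm₁.1 b hb, hm₂.1 b hb]
    apply hne
    funext v
    have := hconst v b
    rw [hb0] at this
    simpa [Pi.sub_apply, sub_eq_zero] using this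
  obtain ⟨p₀, hp₀S, hp₀ne⟩ := hwit
  have key : ∀ p ∈ S,
      t * (𝓔 s(p.1, p.2) * Real.log (h₁ p.1 - h₁ p.2)) +
        (1 - t) * (𝓔 s(p.1, p.2) * Real.log (h₂ p.1 - h₂ p.2)) ≤
      𝓔 s(p.1, p.2) * Real.log ((t * h₁ p.1 + (1 - t) * h₂ p.1) -
        (t * h₁ p.2 + (1 - t) * h₂ p.2)) ∧
      (h₁ p.1 - h₁ p.2 ≠ h₂ p.1 - h₂ p.2 →
      t * (𝓔 s(p.1, p.2) * Real.log (h₁ p.1 - h₁ p.2)) +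
        (1 - t) * (𝓔 s(p.1, p.2) * Real.log (h₂ p.1 - h₂ p.2)) <
      𝓔 s(p.1, p.2) * Real.log ((t * h₁ p.1 + (1 - t) * h₂ p.1) -
        (t * h₁ p.2 + (1 - t) * h₂ p.2))) := by
    intro p hp
    have hd : σ.dir p.1 p.2 := by simpa [hS] using hp
    have hadj := σ.dir_adj _ _ hd
    have hE : 0 < 𝓔 s(p.1, p.2) := h𝓔 _ (G.mem_edgeSet.mpr hadj)
    have ha₁ : (0:ℝ) < h₁ p.1 - h₁ p.2 := sub_pos.mpr (hm₁.2 _ _ hd)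
    have ha₂ : (0:ℝ) < h₂ p.1 - h₂ p.2 := sub_pos.mpr (hm₂.2 _ _ hd)
    have hrw : (t * h₁ p.1 + (1 - t) * h₂ p.1) - (t * h₁ p.2 + (1 - t) * h₂ p.2)
        = t * (h₁ p.1 - h₁ p.2) + (1 - t) * (h₂ p.1 - h₂ p.2) := by ring
    constructor
    · have := strictConcaveOn_log_Ioi.concaveOn.2 (Set.mem_Ioi.mpr ha₁)
        (Set.mem_Ioi.mpr ha₂) (show (0:ℝ) ≤ t from ht0.le)
        (show (0:ℝ) ≤ 1 - t by linarith) (show t + (1 - t) = 1 by ring)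
      simp only [smul_eq_mul] at this
      rw [hrw]
      nlinarith [this]
    · intro hneq
      have := strictConcaveOn_log_Ioi.2 (Set.mem_Ioi.mpr ha₁)
        (Set.mem_Ioi.mpr ha₂) hneq (show (0:ℝ) < t from ht0)
        (show (0:ℝ) < 1 - t by linarith) (show t + (1 - t) = 1 by ring)
      simp only [smul_eq_mul] at this
      rw [hrw]
      nlinarith [this]
  rw [LogM, LogM, LogM, Finset.mul_sum, Finset.mul_sum, ← Finset.sum_add_distrib]
  exact Finset.sum_lt_sum (fun p hp => (key p hp).1)
    ⟨p₀, hp₀S, (key p₀ hp₀S).2 hp₀ne⟩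
end

section
/- Let G be a finite connected simple graph with boundary B and injective boundary values u : B → ℝ as in the context, and let 𝓔 : E → ℝ assign a positive real energy to each edge. Suppose h : V → ℂ satisfies h(b) = u(b) for every boundary vertex b, h(x) ≠ h(y) for every edge xy, and Σ_{y ∼ x} 𝓔_{xy}/(h(x) − h(y)) = 0 at every interior vertex x. Then h(v) is real for every vertex v, and for every edge e = xy the number c_e := 𝓔_e/(h(x) − h(y))² is a positive real number. -/
attribute [local instance] Classical.propDecidable

variable {V : Type*} [Fintype V] [DecidableEq V]

set_option linter.unusedSectionVars false in
lemma max_principle_le (G : SimpleGraph V) (hconn : G.Connected)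
    (B : Set V) (hBne : B.Nonempty)
    (c : V → V → ℝ) (hc : ∀ x y, G.Adj x y → 0 < c x y)
    (g : V → ℝ) (hg0 : ∀ b ∈ B, g b = 0)
    (hharm : ∀ x, x ∉ B → ∑ y ∈ G.neighborFinset x, c x y * (g x - g y) = 0) :
    ∀ v, g v ≤ 0 := by
  intro v
  haveI : Nonempty V := ⟨v⟩
  set M := Finset.univ.sup' Finset.univ_nonempty g with hMdef
  have hM : ∀ w, g w ≤ M := fun w => Finset.le_sup' g (Finset.mem_univ w)
  have key : ∀ x, x ∉ B → g x = M → ∀ y ∈ G.neighborFinset x, g y = M := by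
    intro x hx hgx y hy
    have hsum := hharm x hx
    have hnonneg : ∀ y ∈ G.neighborFinset x, 0 ≤ c x y * (g x - g y) := by
      intro z hz
      have hadj := (G.mem_neighborFinset _ _).mp hz
      exact mul_nonneg (hc x z hadj).le (by rw [hgx]; linarith [hM z])
    have := (Finset.sum_eq_zero_iff_of_nonneg hnonneg).mp hsum y hy
    have hadj := (G.mem_neighborFinset _ _).mp hy
    have hcpos := hc x y hadj
    have : g x - g y = 0 := by
      by_contra hne
      exact hne (by
        have := mul_eq_zero.mp this
        rcases this with h1 | h1
        · exact absurd h1 hcpos.ne'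
        · exact h1)
    rw [hgx] at this; linarith
  have walkM : ∀ {a b : V} (p : G.Walk a b), b ∈ B → g a = M → M = 0 := by
    intro a b p
    induction p with
    | nil => intro hb hga; rw [← hga, hg0 _ hb]
    | @cons a c b hadj q ih =>
        intro hb hga
        by_cases ha : a ∈ B
        · rw [← hga, hg0 _ ha]
        · exact ih hb (key a ha hga c ((G.mem_neighborFinset _ _).mpr hadj))
  obtain ⟨v0, _, hv0⟩ := Finset.exists_mem_eq_sup' Finset.univ_nonempty g
  obtain ⟨b, hb⟩ := hBne
  obtain ⟨p⟩ := hconn.preconnected v0 b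
  have hM0 : M = 0 := walkM p hb hv0.symm
  calc g v ≤ M := hM v
    _ = 0 := hM0

/-- any complex solution of the enharmonic equations with real boundary values is
real, and the associated conductances 𝓔_e/(h x − h y)² are positive reals. -/
theorem stmt_4 (G : SimpleGraph V) (hconn : G.Connected)
    (B : Set V) (hB : BoundaryOK G B) (u : V → ℝ) (hu : Set.InjOn u B)
    (𝓔 : Sym2 V → ℝ) (h𝓔 : ∀ e ∈ G.edgeSet, 0 < 𝓔 e)
    (h : V → ℂ) (hbd : ∀ b ∈ B, h b = (u b : ℂ))
    (hne : ∀ x y, G.Adj x y → h x ≠ h y)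
    (henh : ∀ x, x ∉ B → ∑ y ∈ G.neighborFinset x, (𝓔 s(x, y) : ℂ) / (h x - h y) = 0) :
    (∀ v , (h v).im = 0) ∧
    ∀ x y, G.Adj x y →
      ((𝓔 s(x, y) : ℂ) / (h x - h y) ^ 2).im = 0 ∧
      0 < ((𝓔 s(x, y) : ℂ) / (h x - h y) ^ 2).re := by
  have hBne : B.Nonempty := Set.nonempty_of_ncard_ne_zero (by have := hB.1; omega)
  set g : V → ℝ := fun v => (h v).im with hg
  set c : V → V → ℝ := fun x y => 𝓔 s(x, y) / Complex.normSq (h x - h y) with hc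
  have hcpos : ∀ x y, G.Adj x y → 0 < c x y := by
    intro x y hadj
    exact div_pos (h𝓔 _ (G.mem_edgeSet.mpr hadj))
      (Complex.normSq_pos.mpr (sub_ne_zero.mpr (hne x y hadj)))
  have hg0 : ∀ b ∈ B, g b = 0 := by
    intro b hb; simp [hg, hbd b hb]
  have hharm : ∀ x, x ∉ B → ∑ y ∈ G.neighborFinset x, c x y * (g x - g y) = 0 := by
    intro x hx
    have h1 := congrArg Complex.im (henh x hx)
    rw [Complex.im_sum] at h1
    simp only [Complex.zero_im] at h1
    have h2 : ∀ y ∈ G.neighborFinset x,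
        ((𝓔 s(x, y) : ℂ) / (h x - h y)).im = -(c x y * (g x - g y)) := by
      intro y hy
      rw [Complex.div_im]
      simp only [Complex.ofReal_im, Complex.ofReal_re, Complex.sub_im, hc, hg]
      ring
    rw [Finset.sum_congr rfl h2, Finset.sum_neg_distrib] at h1
    linarith [neg_eq_zero.mp h1]
  have hle := max_principle_le G hconn B hBne c hcpos g hg0 hharm
  have hge := max_principle_le G hconn B hBne c hcpos (fun v => -(g v))
    (fun b hb => by show -(g b) = 0; rw [hg0 b hb, neg_zero])
    (fun x hx => by
      have := hharm x hx
      rw [← neg_eq_zero, ← Finset.sum_neg_distrib] at this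
      convert this using 2 with y
      ring)
  have him : ∀ v, (h v).im = 0 := by
    intro v
    have := hge v
    have := hle v
    simp only [hg] at *
    linarith
  refine ⟨him, fun x y hadj => ?_⟩
  have hreal : ∀ v, h v = ((h v).re : ℂ) := fun v => Complex.ext rfl (by simp [him v])
  set r : ℝ := (h x).re - (h y).re with hr
  have hsub : h x - h y = (r : ℂ) := by
    rw [hreal x, hreal y, hr, Complex.ofReal_sub]
  have hrne : r ≠ 0 := by
    intro h0
    exact hne x y hadj (by rw [hreal x, hreal y]; norm_cast; linarith [hr ▸ h0])
  have hcast : (𝓔 s(x, y) : ℂ) / (h x - h y) ^ 2 = ((𝓔 s(x, y) / r ^ 2 : ℝ) : ℂ) := by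
    rw [hsub]; push_cast; ring
  rw [hcast]
  refine ⟨Complex.ofReal_im _, ?_⟩
  rw [Complex.ofReal_re]
  exact div_pos (h𝓔 _ (G.mem_edgeSet.mpr hadj)) (pow_pos (abs_pos.mpr hrne) 2 |> fun _ => by positivity)
end

section
/- Let G be a finite connected simple graph with boundary B as in the context. For any two injective functions u, u' : B → ℝ, the set Σ_u of orientations of G compatible with u and the set Σ_{u'} of orientations compatible with u' have the same (finite) cardinality. -/
attribute [local instance] Classical.propDecidable

variable {V : Type*} [Fintype V] [DecidableEq V]

set_option linter.unusedSectionVars false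
namespace Stmt5Aux
open Relation

variable {V : Type*} [Fintype V] [DecidableEq V] {G : SimpleGraph V}

lemma orient_ext {σ τ : GraphOrientation G} (h : σ.dir = τ.dir) : σ = τ := by
  cases σ; cases τ; simp_all

instance : Finite (GraphOrientation G) := by
  have : Finite (V → V → Prop) := by infer_instance
  exact Finite.of_injective (fun σ : GraphOrientation G => σ.dir)
    (fun σ τ h => orient_ext h)

lemma dir_irrefl (σ : GraphOrientation G) (x : V) : ¬ σ.dir x x := by
  intro h
  exact G.loopless.irrefl x (σ.dir_adj x x h)

lemma dir_asymm (σ : GraphOrientation G) {x y : V} (h : σ.dir x y) : ¬ σ.dir y x :=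
  (σ.dir_total x y (σ.dir_adj x y h)).mp h

def rev (σ : GraphOrientation G) (a b : V) : GraphOrientation G where
  dir x y := (σ.dir x y ∧ ¬(ReflTransGen σ.dir a x ∧ ReflTransGen σ.dir y b)) ∨
             (σ.dir y x ∧ ReflTransGen σ.dir a y ∧ ReflTransGen σ.dir x b)
  dir_adj x y h := by
    rcases h with ⟨h, _⟩ | ⟨h, _⟩
    · exact σ.dir_adj _ _ h
    · exact (σ.dir_adj _ _ h).symm
  dir_total x y hxy := by
    have h1 := σ.dir_total x y hxy
    have h2 := σ.dir_total y x hxy.symm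
    constructor <;> tauto

lemma rev_dir (σ : GraphOrientation G) (a b x y : V) :
    (rev σ a b).dir x y ↔
      (σ.dir x y ∧ ¬(ReflTransGen σ.dir a x ∧ ReflTransGen σ.dir y b)) ∨
      (σ.dir y x ∧ ReflTransGen σ.dir a y ∧ ReflTransGen σ.dir x b) := Iff.rfl

section Props
variable {σ : GraphOrientation G} {a b : V}

local notation "P" => fun x => ReflTransGen σ.dir a x
local notation "Q" => fun x => ReflTransGen σ.dir x b
local notation "τ" => rev σ a b

-- P propagates forward along τ
lemma P_fwd {x y : V} (h : (rev σ a b).dir x y) (hx : ReflTransGen σ.dir a x) :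
    ReflTransGen σ.dir a y := by
  rcases h with ⟨h, _⟩ | ⟨_, hy, _⟩
  · exact hx.tail h
  · exact hy

-- Q propagates backward along τ
lemma Q_bwd {x y : V} (h : (rev σ a b).dir x y) (hy : ReflTransGen σ.dir y b) :
    ReflTransGen σ.dir x b := by
  rcases h with ⟨h, _⟩ | ⟨_, _, hx⟩
  · exact ReflTransGen.head h hy
  · exact hx

lemma notQ_fwd {x y : V} (hx : ¬ ReflTransGen σ.dir x b) (h : (rev σ a b).dir x y) :
    σ.dir x y ∧ ¬ ReflTransGen σ.dir y b := by
  rcases h with ⟨h, _⟩ | ⟨_, _, hq⟩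
  · exact ⟨h, fun hy => hx (ReflTransGen.head h hy)⟩
  · exact absurd hq hx

lemma notQ_fwd_trans {x y : V} (hx : ¬ ReflTransGen σ.dir x b)
    (h : TransGen (rev σ a b).dir x y) :
    TransGen σ.dir x y ∧ ¬ ReflTransGen σ.dir y b := by
  induction h with
  | single h => exact ⟨TransGen.single (notQ_fwd hx h).1, (notQ_fwd hx h).2⟩
  | tail _ h ih =>
      obtain ⟨ht, hq⟩ := ih
      obtain ⟨h1, h2⟩ := notQ_fwd hq h
      exact ⟨ht.tail h1, h2⟩

lemma notP_bwd {x y : V} (hy : ¬ ReflTransGen σ.dir a y) (h : (rev σ a b).dir x y) :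
    σ.dir x y ∧ ¬ ReflTransGen σ.dir a x := by
  rcases h with ⟨h, _⟩ | ⟨_, hp, _⟩
  · exact ⟨h, fun hx => hy (hx.tail h)⟩
  · exact absurd hp hy

lemma notP_bwd_trans {x y : V} (hy : ¬ ReflTransGen σ.dir a y)
    (h : TransGen (rev σ a b).dir x y) :
    TransGen σ.dir x y ∧ ¬ ReflTransGen σ.dir a x := by
  induction h using TransGen.head_induction_on with
  | single h => exact ⟨TransGen.single (notP_bwd hy h).1, (notP_bwd hy h).2⟩
  | head h _ ih =>
      obtain ⟨ht, hp⟩ := ih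
      obtain ⟨h1, h2⟩ := notP_bwd hp h
      exact ⟨TransGen.head h1 ht, h2⟩

lemma P_fwd_trans {x y : V} (h : TransGen (rev σ a b).dir x y)
    (hx : ReflTransGen σ.dir a x) : ReflTransGen σ.dir a y := by
  induction h with
  | single h => exact P_fwd h hx
  | tail _ h ih => exact P_fwd h ih

lemma Q_bwd_trans {x y : V} (h : TransGen (rev σ a b).dir x y)
    (hy : ReflTransGen σ.dir y b) : ReflTransGen σ.dir x b := by
  induction h using TransGen.head_induction_on with
  | single h => exact Q_bwd h hy
  | head h _ ih => exact Q_bwd h ih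

-- paths inside S reverse
lemma inside_rev {x y : V} (h : TransGen (rev σ a b).dir x y)
    (hx : ReflTransGen σ.dir a x) :
    ReflTransGen σ.dir y b → TransGen σ.dir y x := by
  induction h with
  | single h =>
      intro hy
      rcases h with ⟨_, hn⟩ | ⟨h, _, _⟩
      · exact absurd ⟨hx, hy⟩ hn
      · exact TransGen.single h
  | @tail c d hxc hcd ih =>
      intro hy
      rcases hcd with ⟨h, hn⟩ | ⟨h, hpc, hqc⟩
      · have hpc : ReflTransGen σ.dir a c := P_fwd_trans hxc hx
        exact absurd ⟨hpc, hy⟩ hn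
      · exact TransGen.head h (ih hqc)

lemma rev_acyclic (hac : ∀ z, ¬ TransGen σ.dir z z) (x : V) :
    ¬ TransGen (rev σ a b).dir x x := by
  intro h
  by_cases hq : ReflTransGen σ.dir x b
  · by_cases hp : ReflTransGen σ.dir a x
    · exact hac x (inside_rev h hp hq)
    · exact hac x (notP_bwd_trans hp h).1
  · exact hac x (notQ_fwd_trans hq h).1

-- σ-paths inside S become reversed τ-paths
lemma inside_fwd {x y : V} (h : TransGen σ.dir x y)
    (hx : ReflTransGen σ.dir a x) :
    ReflTransGen σ.dir y b → TransGen (rev σ a b).dir y x := by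
  induction h with
  | single h =>
      intro hy
      exact TransGen.single (Or.inr ⟨h, hx, hy⟩)
  | @tail c d hxc hcd ih =>
      intro hy
      have hqc : ReflTransGen σ.dir c b := ReflTransGen.head hcd hy
      have hpc : ReflTransGen σ.dir a c := hx.trans hxc.to_reflTransGen
      exact TransGen.head (Or.inr ⟨hcd, hpc, hy⟩) (ih hqc)

lemma reach_cases {x y : V} (h : TransGen (rev σ a b).dir x y) :
    TransGen σ.dir x y ∨ (ReflTransGen σ.dir x b ∧ ReflTransGen σ.dir a y) := by
  induction h with
  | single h =>
      rcases h with ⟨h, _⟩ | ⟨h, hp, hq⟩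
      · exact Or.inl (TransGen.single h)
      · exact Or.inr ⟨hq, hp⟩
  | @tail c d hxc hcd ih =>
      rcases hcd with ⟨h, _⟩ | ⟨h, hp, hq⟩
      · rcases ih with ht | ⟨h1, h2⟩
        · exact Or.inl (ht.tail h)
        · exact Or.inr ⟨h1, h2.tail h⟩
      · rcases ih with ht | ⟨h1, h2⟩
        · exact Or.inr ⟨ht.to_reflTransGen.trans hq, hp⟩
        · exact Or.inr ⟨h1, hp⟩

lemma from_a (hac : ∀ z, ¬ TransGen σ.dir z z) {y : V}
    (h : TransGen (rev σ a b).dir a y) :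
    TransGen σ.dir a y ∧ ¬ ReflTransGen σ.dir y b := by
  obtain ⟨z, h1, h2⟩ := TransGen.head'_iff.mp h
  have hz : σ.dir a z ∧ ¬ ReflTransGen σ.dir z b := by
    rcases h1 with ⟨h1, hn⟩ | ⟨h1, hp, hq⟩
    · exact ⟨h1, fun hq => hn ⟨ReflTransGen.refl, hq⟩⟩
    · exact absurd (TransGen.tail' hp h1) (hac a)
  rcases reflTransGen_iff_eq_or_transGen.mp h2 with rfl | h2
  · exact ⟨TransGen.single hz.1, hz.2⟩
  · obtain ⟨ht, hq⟩ := notQ_fwd_trans hz.2 h2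
    exact ⟨TransGen.head hz.1 ht, hq⟩

lemma rev_b_to_a (hab : TransGen σ.dir a b) : TransGen (rev σ a b).dir b a :=
  inside_fwd hab ReflTransGen.refl ReflTransGen.refl

lemma rev_exists_inout {x : V} (hx_a : x ≠ a) (hx_b : x ≠ b)
    (hout : ∃ y, σ.dir x y) (hin : ∃ y, σ.dir y x) :
    (∃ y, (rev σ a b).dir x y) ∧ (∃ y, (rev σ a b).dir y x) := by
  by_cases hs : ReflTransGen σ.dir a x ∧ ReflTransGen σ.dir x b
  · obtain ⟨hp, hq⟩ := hs
    have h1 : TransGen σ.dir a x :=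
      (reflTransGen_iff_eq_or_transGen.mp hp).resolve_left hx_a
    obtain ⟨w, hw1, hw2⟩ := TransGen.tail'_iff.mp h1
    have h2 : TransGen σ.dir x b :=
      (reflTransGen_iff_eq_or_transGen.mp hq).resolve_left (fun e => hx_b e.symm)
    obtain ⟨z, hz1, hz2⟩ := TransGen.head'_iff.mp h2
    exact ⟨⟨w, Or.inr ⟨hw2, hw1, hq⟩⟩, ⟨z, Or.inr ⟨hz1, hp, hz2⟩⟩⟩
  · obtain ⟨y, hy⟩ := hout
    obtain ⟨z, hz⟩ := hin
    refine ⟨⟨y, Or.inl ⟨hy, ?_⟩⟩, ⟨z, Or.inl ⟨hz, ?_⟩⟩⟩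
    · rintro ⟨hp, hq⟩
      exact hs ⟨hp, ReflTransGen.head hy hq⟩
    · rintro ⟨hp, hq⟩
      exact hs ⟨hp.tail hz, hq⟩

lemma rev_rev (hac : ∀ z, ¬ TransGen σ.dir z z) (hab : TransGen σ.dir a b) :
    rev (rev σ a b) b a = σ := by
  have hQa : ReflTransGen σ.dir a b := hab.to_reflTransGen
  have hS : ∀ x, (ReflTransGen (rev σ a b).dir b x ∧ ReflTransGen (rev σ a b).dir x a)
      ↔ (ReflTransGen σ.dir a x ∧ ReflTransGen σ.dir x b) := by
    intro x
    constructor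
    · rintro ⟨hp', hq'⟩
      constructor
      · by_contra hp
        rcases reflTransGen_iff_eq_or_transGen.mp hp' with rfl | ht
        · exact hp hQa
        · exact (notP_bwd_trans hp ht).2 hQa
      · by_contra hq
        rcases reflTransGen_iff_eq_or_transGen.mp hq' with rfl | ht
        · exact hq hQa
        · exact (notQ_fwd_trans hq ht).2 hQa
    · rintro ⟨hp, hq⟩
      constructor
      · rcases reflTransGen_iff_eq_or_transGen.mp hq with rfl | ht
        · exact ReflTransGen.refl
        · exact (inside_fwd ht hp ReflTransGen.refl).to_reflTransGen
      · rcases reflTransGen_iff_eq_or_transGen.mp hp with rfl | ht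
        · exact ReflTransGen.refl
        · exact (inside_fwd ht ReflTransGen.refl hq).to_reflTransGen
  apply orient_ext
  funext x y
  apply propext
  constructor
  · rintro (⟨h, hn⟩ | ⟨h, hp', hq'⟩)
    · rcases h with ⟨h, _⟩ | ⟨h, hp, hq⟩
      · exact h
      · exact absurd ⟨((hS x).mpr ⟨hp.tail h, hq⟩).1,
          ((hS y).mpr ⟨hp, ReflTransGen.head h hq⟩).2⟩ hn
    · rcases h with ⟨h, hn⟩ | ⟨h, _, _⟩
      · exact absurd ⟨((hS y).mp ⟨hp', ReflTransGen.head (Or.inl ⟨h, hn⟩) hq'⟩).1,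
          ((hS x).mp ⟨hp'.tail (Or.inl ⟨h, hn⟩), hq'⟩).2⟩ hn
      · exact h
  · intro h
    by_cases hs : ReflTransGen σ.dir a x ∧ ReflTransGen σ.dir y b
    · exact Or.inr ⟨Or.inr ⟨h, hs.1, hs.2⟩,
        ((hS y).mpr ⟨hs.1.tail h, hs.2⟩).1,
        ((hS x).mpr ⟨hs.1, ReflTransGen.head h hs.2⟩).2⟩
    · refine Or.inl ⟨Or.inl ⟨h, hs⟩, ?_⟩
      rintro ⟨hp', hq'⟩
      exact hs ⟨((hS x).mp ⟨hp', ReflTransGen.head (Or.inl ⟨h, hs⟩) hq'⟩).1,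
        ((hS y).mp ⟨hp'.tail (Or.inl ⟨h, hs⟩), hq'⟩).2⟩

end Props
/-! ### swapping boundary values -/

noncomputable def swapu (u : V → ℝ) (a b : V) : V → ℝ :=
  fun x => u (Equiv.swap a b x)

lemma swapu_a {u : V → ℝ} {a b : V} : swapu u a b a = u b := by
  simp [swapu]

lemma swapu_b {u : V → ℝ} {a b : V} : swapu u a b b = u a := by
  simp [swapu]

lemma swapu_other {u : V → ℝ} {a b x : V} (hxa : x ≠ a) (hxb : x ≠ b) :
    swapu u a b x = u x := by
  simp [swapu, Equiv.swap_apply_of_ne_of_ne hxa hxb]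

lemma swapu_swap {u : V → ℝ} {a b : V} : swapu (swapu u a b) b a = u := by
  funext x
  simp [swapu, Equiv.swap_comm b a]

lemma swap_mem {B : Set V} {a b x : V} (ha : a ∈ B) (hb : b ∈ B) (hx : x ∈ B) :
    Equiv.swap a b x ∈ B := by
  rcases eq_or_ne x a with rfl | hxa
  · simpa using hb
  · rcases eq_or_ne x b with rfl | hxb
    · simpa using ha
    · rwa [Equiv.swap_apply_of_ne_of_ne hxa hxb]

lemma swapu_injOn {B : Set V} {u : V → ℝ} {a b : V} (hu : Set.InjOn u B)
    (ha : a ∈ B) (hb : b ∈ B) : Set.InjOn (swapu u a b) B := by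
  intro x hx y hy h
  have := hu (swap_mem ha hb hx) (swap_mem ha hb hy) h
  exact (Equiv.swap a b).injective this

section Key

variable {B : Set V} {u : V → ℝ} {a b : V}

-- adjacency facts
lemma fact1 (hu : Set.InjOn u B) (hb : b ∈ B) (hlt : u b < u a)
    (hadj : ∀ c ∈ B, ¬(u b < u c ∧ u c < u a))
    {c : V} (hc : c ∈ B) (hcb : c ≠ b) : u c < u a ↔ u c < u b := by
  constructor
  · intro h
    have h1 : ¬ (u b < u c) := fun h2 => hadj c hc ⟨h2, h⟩
    exact lt_of_le_of_ne (not_lt.mp h1) (fun e => hcb (hu hc hb e))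
  · intro h
    exact h.trans hlt

lemma fact2 (hu : Set.InjOn u B) (ha : a ∈ B) (hlt : u b < u a)
    (hadj : ∀ c ∈ B, ¬(u b < u c ∧ u c < u a))
    {c : V} (hc : c ∈ B) (hca : c ≠ a) : u b < u c ↔ u a < u c := by
  constructor
  · intro h
    have h1 : ¬ (u c < u a) := fun h2 => hadj c hc ⟨h, h2⟩
    exact lt_of_le_of_ne (not_lt.mp h1) (fun e => hca (hu ha hc e).symm)
  · intro h
    exact hlt.trans h

lemma key_map {G : SimpleGraph V} {σ : GraphOrientation G}
    (ha : a ∈ B) (hb : b ∈ B) (hu : Set.InjOn u B) (hlt : u b < u a)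
    (hadj : ∀ c ∈ B, ¬(u b < u c ∧ u c < u a))
    (hcomp : Compatible G B u σ) (hab : Relation.TransGen σ.dir a b) :
    Compatible G B (swapu u a b) (rev σ a b) ∧
      Relation.TransGen (rev σ a b).dir b a := by
  obtain ⟨hac, hint, hord⟩ := hcomp
  have hba := rev_b_to_a (σ := σ) (a := a) (b := b) hab
  have hτac : ∀ z, ¬ TransGen (rev σ a b).dir z z := rev_acyclic hac
  refine ⟨⟨hτac, ?_, ?_⟩, hba⟩
  · intro x hx
    exact rev_exists_inout (fun e => hx (e ▸ ha)) (fun e => hx (e ▸ hb))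
      (hint x hx).1 (hint x hx).2
  · intro p hp q hq hpq
    have hne : p ≠ q := by rintro rfl; exact hτac p hpq
    by_cases hpa : p = a
    · subst hpa
      obtain ⟨ht, hq2⟩ := from_a hac hpq
      have hqb : q ≠ b := by rintro rfl; exact hq2 ReflTransGen.refl
      have hqa : q ≠ p := hne.symm
      have h1 : u q < u p := hord p hp q hq ht
      rw [swapu_a, swapu_other hqa hqb]
      exact (fact1 hu hb hlt hadj hq hqb).mp h1
    · rcases reach_cases hpq with ht | ⟨hQp, hPq⟩
      · have h1 : u q < u p := hord p hp q hq ht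
        by_cases hqa : q = a
        · subst hqa
          have hpb : p ≠ b := by
            rintro rfl; exact absurd h1 (not_lt.mpr hlt.le)
          rw [swapu_a, swapu_other hpa hpb]
          exact hlt.trans h1
        · by_cases hqb : q = b
          · subst hqb
            have hpb : p ≠ q := hne
            rw [swapu_b, swapu_other hpa hpb]
            exact (fact2 hu ha hlt hadj hp hpa).mp h1
          · rw [swapu_other hqa hqb]
            by_cases hpb : p = b
            · subst hpb
              rw [swapu_b]
              exact h1.trans hlt
            · rw [swapu_other hpa hpb]
              exact h1
      · -- p reaches b, a reaches q (in σ)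
        by_cases hpb : p = b
        · subst hpb
          rw [swapu_b]
          by_cases hqa : q = a
          · subst hqa; rw [swapu_a]; exact hlt
          · have hqb : q ≠ p := hne.symm
            have ht : TransGen σ.dir a q :=
              (reflTransGen_iff_eq_or_transGen.mp hPq).resolve_left hqa
            rw [swapu_other hqa hqb]
            exact hord a ha q hq ht
        · have htp : TransGen σ.dir p b :=
            (reflTransGen_iff_eq_or_transGen.mp hQp).resolve_left (fun e => hpb e.symm)
          have h2 : u b < u p := hord p hp b hb htp
          have h3 : u a < u p := (fact2 hu ha hlt hadj hp hpa).mp h2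
          rw [swapu_other hpa hpb]
          by_cases hqa : q = a
          · subst hqa; rw [swapu_a]; exact h2
          · by_cases hqb : q = b
            · subst hqb; rw [swapu_b]; exact h3
            · have ht : TransGen σ.dir a q :=
                (reflTransGen_iff_eq_or_transGen.mp hPq).resolve_left hqa
              have h4 : u q < u a := hord a ha q hq ht
              rw [swapu_other hqa hqb]
              exact h4.trans h3

lemma mem_iff {G : SimpleGraph V} {σ : GraphOrientation G}
    (ha : a ∈ B) (hb : b ∈ B) (hu : Set.InjOn u B) (hlt : u b < u a)
    (hadj : ∀ c ∈ B, ¬(u b < u c ∧ u c < u a))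
    (hcomp : Compatible G B u σ) :
    Compatible G B (swapu u a b) σ ↔ ¬ Relation.TransGen σ.dir a b := by
  have hne : a ≠ b := by rintro rfl; exact absurd hlt (lt_irrefl _)
  constructor
  · intro h hab
    have h2 := h.2.2 a ha b hb hab
    rw [swapu_b, swapu_a] at h2
    exact absurd h2 (not_lt.mpr hlt.le)
  · intro hnab
    refine ⟨hcomp.1, hcomp.2.1, ?_⟩
    intro p hp q hq hpq
    have h1 : u q < u p := hcomp.2.2 p hp q hq hpq
    have hne2 : p ≠ q := by rintro rfl; exact absurd h1 (lt_irrefl _)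
    by_cases hpa : p = a
    · subst hpa
      have hqb : q ≠ b := by rintro rfl; exact hnab hpq
      have hqa : q ≠ p := hne2.symm
      rw [swapu_a, swapu_other hqa hqb]
      exact (fact1 hu hb hlt hadj hq hqb).mp h1
    · by_cases hpb : p = b
      · subst hpb
        have hqa : q ≠ a := by
          rintro rfl; exact absurd (hlt.trans h1) (lt_irrefl _)
        have hqb : q ≠ p := hne2.symm
        rw [swapu_b, swapu_other hqa hqb]
        exact h1.trans hlt
      · rw [swapu_other hpa hpb]
        by_cases hqa : q = a
        · subst hqa
          rw [swapu_a]
          exact hlt.trans h1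
        · by_cases hqb : q = b
          · subst hqb
            rw [swapu_b]
            exact (fact2 hu ha hlt hadj hp hpa).mp h1
          · rw [swapu_other hqa hqb]
            exact h1

end Key

section Count
open Relation
variable {B : Set V} {u : V → ℝ} {a b : V}

lemma key_count {G : SimpleGraph V}
    (ha : a ∈ B) (hb : b ∈ B) (hu : Set.InjOn u B) (hlt : u b < u a)
    (hadj : ∀ c ∈ B, ¬(u b < u c ∧ u c < u a)) :
    {σ : GraphOrientation G | Compatible G B u σ}.ncard =
      {σ : GraphOrientation G | Compatible G B (swapu u a b) σ}.ncard := by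
  set u1 := swapu u a b with hu1def
  have hu1 : Set.InjOn u1 B := swapu_injOn hu ha hb
  have hlt1 : u1 a < u1 b := by rw [hu1def, swapu_a, swapu_b]; exact hlt
  have hadj1 : ∀ c ∈ B, ¬(u1 a < u1 c ∧ u1 c < u1 b) := by
    intro c hc
    rw [hu1def, swapu_a, swapu_b]
    by_cases hca : c = a
    · subst hca; rw [swapu_a]; rintro ⟨h1, _⟩; exact absurd h1 (lt_irrefl _)
    · by_cases hcb : c = b
      · subst hcb; rw [swapu_b]; rintro ⟨_, h2⟩; exact absurd h2 (lt_irrefl _)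
      · rw [swapu_other hca hcb]; exact hadj c hc
  have hswap : swapu u1 b a = u := swapu_swap
  set X := {σ : GraphOrientation G | Compatible G B u σ} with hX
  set Y := {σ : GraphOrientation G | Compatible G B u1 σ} with hY
  have hXdiff : ∀ σ : GraphOrientation G,
      σ ∈ X \ Y ↔ Compatible G B u σ ∧ TransGen σ.dir a b := by
    intro σ
    constructor
    · rintro ⟨h1, h2⟩
      refine ⟨h1, ?_⟩
      by_contra hn
      exact h2 ((mem_iff ha hb hu hlt hadj h1).mpr hn)
    · rintro ⟨h1, h2⟩
      exact ⟨h1, fun h => ((mem_iff ha hb hu hlt hadj h1).mp h) h2⟩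
  have hYdiff : ∀ τ : GraphOrientation G,
      τ ∈ Y \ X ↔ Compatible G B u1 τ ∧ TransGen τ.dir b a := by
    intro τ
    constructor
    · rintro ⟨h1, h2⟩
      refine ⟨h1, ?_⟩
      by_contra hn
      apply h2
      have h3 := (mem_iff hb ha hu1 hlt1 hadj1 h1).mpr hn
      rwa [hswap] at h3
    · rintro ⟨h1, h2⟩
      refine ⟨h1, fun h => ?_⟩
      have h' : Compatible G B (swapu u1 b a) τ := by rwa [hswap]
      exact ((mem_iff hb ha hu1 hlt1 hadj1 h1).mp h') h2
  have himg : (fun σ => rev σ a b) '' (X \ Y) = Y \ X := by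
    apply Set.Subset.antisymm
    · rintro τ ⟨σ, hσ, rfl⟩
      obtain ⟨h1, h2⟩ := (hXdiff σ).mp hσ
      obtain ⟨hc, hba⟩ := key_map ha hb hu hlt hadj h1 h2
      exact (hYdiff _).mpr ⟨hc, hba⟩
    · intro τ hτ
      obtain ⟨h1, h2⟩ := (hYdiff τ).mp hτ
      obtain ⟨hc, hab2⟩ := key_map hb ha hu1 hlt1 hadj1 h1 h2
      rw [hswap] at hc
      refine ⟨rev τ b a, (hXdiff _).mpr ⟨hc, hab2⟩, ?_⟩
      exact rev_rev h1.1 h2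
  have hinj : Set.InjOn (fun σ => rev σ a b) (X \ Y) := by
    intro σ1 h1 σ2 h2 h
    obtain ⟨hc1, hab1⟩ := (hXdiff σ1).mp h1
    obtain ⟨hc2, hab2⟩ := (hXdiff σ2).mp h2
    calc σ1 = rev (rev σ1 a b) b a := (rev_rev hc1.1 hab1).symm
    _ = rev (rev σ2 a b) b a := by simp only at h; rw [h]
    _ = σ2 := rev_rev hc2.1 hab2
  have hdiff : (X \ Y).ncard = (Y \ X).ncard := by
    rw [← himg, Set.ncard_image_of_injOn hinj]
  have h1 := Set.ncard_inter_add_ncard_diff_eq_ncard X Y (Set.toFinite X)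
  have h2 := Set.ncard_inter_add_ncard_diff_eq_ncard Y X (Set.toFinite Y)
  rw [Set.inter_comm] at h2
  omega

end Count

section Main
open Relation
variable {B : Set V}

def InvSet (B : Set V) (u u' : V → ℝ) : Set (V × V) :=
  {p | p.1 ∈ B ∧ p.2 ∈ B ∧ u p.2 < u p.1 ∧ u' p.1 < u' p.2}

lemma compatible_congr {G : SimpleGraph V} {u u' : V → ℝ} {σ : GraphOrientation G}
    (h : ∀ p ∈ B, ∀ q ∈ B, (u q < u p ↔ u' q < u' p)) :
    Compatible G B u σ ↔ Compatible G B u' σ := by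
  unfold Compatible
  refine and_congr Iff.rfl (and_congr Iff.rfl ?_)
  constructor
  · intro h3 p hp q hq hpq; exact (h p hp q hq).mp (h3 p hp q hq hpq)
  · intro h3 p hp q hq hpq; exact (h p hp q hq).mpr (h3 p hp q hq hpq)

lemma exists_adj {u u' : V → ℝ} (hu : Set.InjOn u B) (hu' : Set.InjOn u' B) :
    ∀ k : ℕ, ∀ a b : V, a ∈ B → b ∈ B → u b < u a → u' a < u' b →
      {c | c ∈ B ∧ u b < u c ∧ u c < u a}.ncard ≤ k →
      ∃ a' ∈ B, ∃ b' ∈ B, u b' < u a' ∧ u' a' < u' b' ∧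
        ∀ c ∈ B, ¬(u b' < u c ∧ u c < u a') := by
  intro k
  induction k with
  | zero =>
    intro a b ha hb h1 h2 hk
    have hemp : {c | c ∈ B ∧ u b < u c ∧ u c < u a} = ∅ :=
      (Set.ncard_eq_zero (Set.toFinite _)).mp (Nat.le_zero.mp hk)
    exact ⟨a, ha, b, hb, h1, h2, fun c hc hcc =>
      Set.eq_empty_iff_forall_notMem.mp hemp c ⟨hc, hcc⟩⟩
  | succ k ih =>
    intro a b ha hb h1 h2 hk
    by_cases hemp : {c | c ∈ B ∧ u b < u c ∧ u c < u a} = ∅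
    · exact ⟨a, ha, b, hb, h1, h2, fun c hc hcc =>
        Set.eq_empty_iff_forall_notMem.mp hemp c ⟨hc, hcc⟩⟩
    · obtain ⟨c, hcB, hc1, hc2⟩ := Set.nonempty_iff_ne_empty.mpr hemp
      have hcmem : c ∈ {c | c ∈ B ∧ u b < u c ∧ u c < u a} := ⟨hcB, hc1, hc2⟩
      have hcard : ({c | c ∈ B ∧ u b < u c ∧ u c < u a} \ {c}).ncard =
          {c | c ∈ B ∧ u b < u c ∧ u c < u a}.ncard - 1 :=
        Set.ncard_diff_singleton_of_mem hcmem
      by_cases hc' : u' a < u' c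
      · apply ih a c ha hcB hc2 hc'
        have hsub : {d | d ∈ B ∧ u c < u d ∧ u d < u a} ⊆
            {c | c ∈ B ∧ u b < u c ∧ u c < u a} \ {c} := by
          rintro d ⟨hdB, hd1, hd2⟩
          exact ⟨⟨hdB, hc1.trans hd1, hd2⟩, fun e => absurd hd1 (by
            simp only [Set.mem_singleton_iff] at e
            rw [e]; exact lt_irrefl _)⟩
        have := Set.ncard_le_ncard hsub (Set.toFinite _)
        omega
      · have hc'1 : u' c < u' b := lt_of_le_of_lt (not_lt.mp hc') h2
        apply ih c b hcB hb hc1 hc'1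
        have hsub : {d | d ∈ B ∧ u b < u d ∧ u d < u c} ⊆
            {c | c ∈ B ∧ u b < u c ∧ u c < u a} \ {c} := by
          rintro d ⟨hdB, hd1, hd2⟩
          exact ⟨⟨hdB, hd1, hd2.trans hc2⟩, fun e => absurd hd2 (by
            simp only [Set.mem_singleton_iff] at e
            rw [e]; exact lt_irrefl _)⟩
        have := Set.ncard_le_ncard hsub (Set.toFinite _)
        omega

lemma main_aux (G : SimpleGraph V) (B : Set V) :
    ∀ n : ℕ, ∀ u u' : V → ℝ, Set.InjOn u B → Set.InjOn u' B →
      (InvSet B u u').ncard = n →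
      {σ : GraphOrientation G | Compatible G B u σ}.ncard =
        {σ : GraphOrientation G | Compatible G B u' σ}.ncard := by
  intro n
  induction n using Nat.strong_induction_on with
  | _ n ih =>
    intro u u' hu hu' hn
    by_cases hne : (InvSet B u u').Nonempty
    · obtain ⟨⟨a, b⟩, haB, hbB, h1, h2⟩ := hne
      obtain ⟨a', ha', b', hb', k1, k2, k3⟩ :=
        exists_adj hu hu' {c | c ∈ B ∧ u b < u c ∧ u c < u a}.ncard a b haB hbB h1 h2 le_rfl
      have hne' : a' ≠ b' := by rintro rfl; exact absurd k1 (lt_irrefl _)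
      have hmem : (a', b') ∈ InvSet B u u' := ⟨ha', hb', k1, k2⟩
      have e1 := key_count (G := G) ha' hb' hu k1 k3
      have hu1 : Set.InjOn (swapu u a' b') B := swapu_injOn hu ha' hb'
      have hinvset : InvSet B (swapu u a' b') u' = InvSet B u u' \ {(a', b')} := by
        ext ⟨p, q⟩
        simp only [InvSet, Set.mem_setOf_eq, Set.mem_diff, Set.mem_singleton_iff,
          Prod.mk.injEq, not_and]
        constructor
        · rintro ⟨hp, hq, hh1, hh2⟩
          refine ⟨⟨hp, hq, ?_, hh2⟩, ?_⟩
          · by_cases hpa : p = a'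
            · subst hpa
              by_cases hqb : q = b'
              · subst hqb
                rw [swapu_a, swapu_b] at hh1
                exact absurd hh1 (not_lt.mpr k1.le)
              · by_cases hqa : q = p
                · subst hqa; exact absurd hh1 (lt_irrefl _)
                · rw [swapu_a, swapu_other hqa hqb] at hh1
                  exact (fact1 hu hb' k1 k3 hq hqb).mpr hh1
            · by_cases hpb : p = b'
              · subst hpb
                by_cases hqa : q = a'
                · subst hqa
                  exact absurd (k2.trans hh2) (lt_irrefl _)
                · by_cases hqb : q = p
                  · subst hqb; exact absurd hh1 (lt_irrefl _)
                  · rw [swapu_b, swapu_other hqa hqb] at hh1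
                    exact (fact1 hu hb' k1 k3 hq hqb).mp hh1
              · rw [swapu_other hpa hpb] at hh1
                by_cases hqa : q = a'
                · subst hqa
                  rw [swapu_a] at hh1
                  exact (fact2 hu ha' k1 k3 hp hpa).mp hh1
                · by_cases hqb : q = b'
                  · subst hqb
                    rw [swapu_b] at hh1
                    exact k1.trans hh1
                  · rwa [swapu_other hqa hqb] at hh1
          · rintro rfl rfl
            rw [swapu_a, swapu_b] at hh1
            exact absurd hh1 (not_lt.mpr k1.le)
        · rintro ⟨⟨hp, hq, hh1, hh2⟩, hne2⟩
          refine ⟨hp, hq, ?_, hh2⟩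
          by_cases hpa : p = a'
          · subst hpa
            by_cases hqb : q = b'
            · subst hqb; exact absurd rfl (hne2 rfl)
            · by_cases hqa : q = p
              · subst hqa; exact absurd hh1 (lt_irrefl _)
              · rw [swapu_a, swapu_other hqa hqb]
                exact (fact1 hu hb' k1 k3 hq hqb).mp hh1
          · by_cases hpb : p = b'
            · subst hpb
              by_cases hqa : q = a'
              · subst hqa
                exact absurd (k2.trans hh2) (lt_irrefl _)
              · by_cases hqb : q = p
                · subst hqb; exact absurd hh1 (lt_irrefl _)
                · rw [swapu_b, swapu_other hqa hqb]
                  exact (fact1 hu hb' k1 k3 hq hqb).mpr hh1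
            · rw [swapu_other hpa hpb]
              by_cases hqa : q = a'
              · subst hqa
                rw [swapu_a]
                exact k1.trans hh1
              · by_cases hqb : q = b'
                · subst hqb
                  rw [swapu_b]
                  exact (fact2 hu ha' k1 k3 hp hpa).mp hh1
                · rwa [swapu_other hqa hqb]
      have hpos : 0 < n := by
        rw [← hn]
        exact (Set.ncard_pos (Set.toFinite _)).mpr ⟨_, hmem⟩
      have hcard : (InvSet B (swapu u a' b') u').ncard = n - 1 := by
        rw [hinvset, Set.ncard_diff_singleton_of_mem hmem, hn]
      have e2 := ih (n - 1) (by omega) (swapu u a' b') u' hu1 hu' hcard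
      exact e1.trans e2
    · have hemp := Set.not_nonempty_iff_eq_empty.mp hne
      have hiff : ∀ p ∈ B, ∀ q ∈ B, (u q < u p ↔ u' q < u' p) := by
        intro p hp q hq
        constructor
        · intro h
          have hne2 : p ≠ q := by rintro rfl; exact absurd h (lt_irrefl _)
          by_contra h'
          have h2 : u' p < u' q :=
            lt_of_le_of_ne (not_lt.mp h') (fun e => hne2 (hu' hp hq e))
          exact Set.eq_empty_iff_forall_notMem.mp hemp (p, q) ⟨hp, hq, h, h2⟩
        · intro h
          have hne2 : q ≠ p := by rintro rfl; exact absurd h (lt_irrefl _)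
          by_contra h'
          have h2 : u p < u q :=
            lt_of_le_of_ne (not_lt.mp h') (fun e => hne2 (hu hp hq e).symm)
          exact Set.eq_empty_iff_forall_notMem.mp hemp (q, p) ⟨hq, hp, h2, h⟩
      have hsets : {σ : GraphOrientation G | Compatible G B u σ} =
          {σ : GraphOrientation G | Compatible G B u' σ} :=
        Set.ext fun σ => compatible_congr hiff
      rw [hsets]

end Main

end Stmt5Aux


/-- the number of compatible orientations does not depend on the (injective)
boundary values. -/
theorem stmt_5 (G : SimpleGraph V) (hconn : G.Connected)
    (B : Set V) (hB : BoundaryOK G B)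
    (u u' : V → ℝ) (hu : Set.InjOn u B) (hu' : Set.InjOn u' B) :
    {σ : GraphOrientation G | Compatible G B u σ}.Finite ∧
    {σ : GraphOrientation G | Compatible G B u' σ}.Finite ∧
    {σ : GraphOrientation G | Compatible G B u σ}.ncard =
      {σ : GraphOrientation G | Compatible G B u' σ}.ncard := by
  refine ⟨Set.toFinite _, Set.toFinite _, ?_⟩
  exact Stmt5Aux.main_aux G B (Stmt5Aux.InvSet B u u').ncard u u' hu hu' rfl
end

section
/- Let G be a finite connected simple graph with boundary B and injective boundary values u : B → ℝ as in the context, and let 𝓔 : E → ℝ assign a positive real energy to each edge. Consider the set S of functions h : V → ℝ extending u with h(x) ≠ h(y) for every edge xy and satisfying Σ_{y ∼ x} 𝓔_{xy}/(h(x) − h(y)) = 0 at every interior vertex x. Then the map sending h ∈ S to the orientation of G that directs each edge from its larger h-value to its smaller h-value is a bijection from S onto the set Σ_u of orientations compatible with u. -/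
attribute [local instance] Classical.propDecidable

variable {V : Type*} [Fintype V] [DecidableEq V]

/-- The set of solutions of the enharmonic equations extending u with distinct values across
every edge. -/
def EnhSols (G : SimpleGraph V) (B : Set V) (u : V → ℝ) (𝓔 : Sym2 V → ℝ) : Set (V → ℝ) :=
  {h | (∀ b ∈ B, h b = u b) ∧ (∀ x y, G.Adj x y → h x ≠ h y) ∧
    ∀ x, x ∉ B → EnharmonicAt G 𝓔 h x}

-- ==================== auxiliary lemmas ====================
set_option linter.unusedSectionVars false
set_option linter.unusedVariables false
set_option maxHeartbeats 1000000

section Aux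
open Relation

lemma GraphOrientation.ext' {G : SimpleGraph V} {σ₁ σ₂ : GraphOrientation G}
    (h : σ₁.dir = σ₂.dir) : σ₁ = σ₂ := by
  cases σ₁; cases σ₂; simp_all

lemma dir_or {G : SimpleGraph V} (σ : GraphOrientation G) {x y : V} (ha : G.Adj x y) :
    σ.dir x y ∨ σ.dir y x := by
  by_cases hd : σ.dir x y
  · exact Or.inl hd
  · exact Or.inr (((σ.dir_total y x ha.symm).2 hd))

-- orientation induced by h
def orientOf (G : SimpleGraph V) (h : V → ℝ) (hne : ∀ x y, G.Adj x y → h x ≠ h y) :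
    GraphOrientation G where
  dir x y := G.Adj x y ∧ h y < h x
  dir_adj x y hd := hd.1
  dir_total x y ha := by
    constructor
    · rintro ⟨-, hlt⟩ ⟨-, hlt'⟩; exact absurd hlt' (not_lt.2 hlt.le)
    · intro hn
      refine ⟨ha, ?_⟩
      rcases lt_or_gt_of_ne (hne x y ha) with hl | hl
      · exact absurd ⟨ha.symm, hl⟩ hn
      · exact hl

lemma orientOf_transGen {G : SimpleGraph V} {h : V → ℝ} {hne} {x y : V}
    (ht : Relation.TransGen (orientOf G h hne).dir x y) : h y < h x := by
  induction ht with
  | single hd => exact hd.2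
  | tail _ hd ih => exact lt_trans hd.2 ih

lemma nbr_nonempty {G : SimpleGraph V} (hconn : G.Connected) [Nontrivial V] (x : V) :
    (G.neighborFinset x).Nonempty := by
  obtain ⟨y, hy⟩ := exists_ne x
  obtain ⟨w⟩ := hconn x y
  cases w with
  | nil => exact absurd rfl hy
  | cons ha _ => exact ⟨_, G.mem_neighborFinset x _ |>.2 ha⟩

lemma orientOf_compatible {G : SimpleGraph V} (hconn : G.Connected) [Nontrivial V]
    {B : Set V} {u : V → ℝ} {𝓔 : Sym2 V → ℝ} (h𝓔 : ∀ e ∈ G.edgeSet, 0 < 𝓔 e)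
    {h : V → ℝ} (hb : ∀ b ∈ B, h b = u b) (hne : ∀ x y, G.Adj x y → h x ≠ h y)
    (henh : ∀ x, x ∉ B → EnharmonicAt G 𝓔 h x) :
    Compatible G B u (orientOf G h hne) := by
  refine ⟨fun x hx => absurd (orientOf_transGen hx) (lt_irrefl _), fun x hx => ?_, ?_⟩
  · constructor
    · by_contra hno
      push_neg at hno
      have hneg : ∀ y ∈ G.neighborFinset x, 𝓔 s(x, y) / (h x - h y) < 0 := by
        intro y hy
        rw [G.mem_neighborFinset] at hy
        have h2 : G.Adj x y → h x ≤ h y := by simpa [orientOf] using hno y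
        have h1 : h x < h y := lt_of_le_of_ne (h2 hy) (hne x y hy)
        exact div_neg_of_pos_of_neg (h𝓔 _ (G.mem_edgeSet.2 hy)) (by linarith)
      have := Finset.sum_neg hneg (nbr_nonempty hconn x)
      rw [henh x hx] at this; exact lt_irrefl _ this
    · by_contra hno
      push_neg at hno
      have hpos : ∀ y ∈ G.neighborFinset x, 0 < 𝓔 s(x, y) / (h x - h y) := by
        intro y hy
        rw [G.mem_neighborFinset] at hy
        have h2 : G.Adj y x → h y ≤ h x := by simpa [orientOf] using hno y
        have h1 : h y < h x := lt_of_le_of_ne (h2 hy.symm) (hne y x hy.symm)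
        exact div_pos (h𝓔 _ (G.mem_edgeSet.2 hy)) (by linarith)
      have := Finset.sum_pos hpos (nbr_nonempty hconn x)
      rw [henh x hx] at this; exact lt_irrefl _ this
  · intro a ha b hbB ht
    have := orientOf_transGen ht
    rwa [hb a ha, hb b hbB] at this

-- ==================== injectivity ====================

lemma sum_nbr_eq (G : SimpleGraph V) (f : V → V → ℝ) :
    ∑ x, ∑ y ∈ G.neighborFinset x, f x y
      = ∑ x, ∑ y, if G.Adj x y then f x y else 0 := by
  refine Finset.sum_congr rfl fun x _ => ?_
  rw [← Finset.sum_filter]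
  congr 1
  ext y; simp

lemma sum_nbr_swap (G : SimpleGraph V) (f : V → V → ℝ) :
    ∑ x, ∑ y ∈ G.neighborFinset x, f x y = ∑ x, ∑ y ∈ G.neighborFinset x, f y x := by
  rw [sum_nbr_eq, sum_nbr_eq, Finset.sum_comm]
  exact Finset.sum_congr rfl fun x _ => Finset.sum_congr rfl fun y _ => by rw [G.adj_comm]

lemma enh_inj {G : SimpleGraph V} (hconn : G.Connected) {B : Set V} (hBne : B.Nonempty)
    {u : V → ℝ} {𝓔 : Sym2 V → ℝ} (h𝓔 : ∀ e ∈ G.edgeSet, 0 < 𝓔 e)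
    {h1 h2 : V → ℝ}
    (hb1 : ∀ b ∈ B, h1 b = u b) (hne1 : ∀ x y, G.Adj x y → h1 x ≠ h1 y)
    (he1 : ∀ x, x ∉ B → EnharmonicAt G 𝓔 h1 x)
    (hb2 : ∀ b ∈ B, h2 b = u b) (hne2 : ∀ x y, G.Adj x y → h2 x ≠ h2 y)
    (he2 : ∀ x, x ∉ B → EnharmonicAt G 𝓔 h2 x)
    (hsame : ∀ x y, G.Adj x y → (h1 y < h1 x ↔ h2 y < h2 x)) : h1 = h2 := by
  set g : V → ℝ := fun x => h1 x - h2 x with hg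
  set Φ : V → V → ℝ := fun x y => 𝓔 s(x, y) / (h1 x - h1 y) - 𝓔 s(x, y) / (h2 x - h2 y)
    with hΦ
  have hgB : ∀ b ∈ B, g b = 0 := by
    intro b hbB; simp [hg, hb1 b hbB, hb2 b hbB]
  have hΦsum : ∀ x, x ∉ B → ∑ y ∈ G.neighborFinset x, Φ x y = 0 := by
    intro x hx
    rw [Finset.sum_sub_distrib, he1 x hx, he2 x hx, sub_zero]
  have S1 : ∑ x, ∑ y ∈ G.neighborFinset x, Φ x y * g x = 0 := by
    refine Finset.sum_eq_zero fun x _ => ?_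
    rw [← Finset.sum_mul]
    by_cases hx : x ∈ B
    · rw [hgB x hx, mul_zero]
    · rw [hΦsum x hx, zero_mul]
  have hΦanti : ∀ x y, G.Adj x y → Φ y x = -Φ x y := by
    intro x y ha
    have e1 : s(y, x) = s(x, y) := Sym2.eq_swap
    have e2 : h1 y - h1 x = -(h1 x - h1 y) := by ring
    have e3 : h2 y - h2 x = -(h2 x - h2 y) := by ring
    simp only [hΦ, e1, e2, e3, div_neg]
    ring
  have S2 : ∑ x, ∑ y ∈ G.neighborFinset x, Φ x y * g y = 0 := by
    rw [sum_nbr_swap]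
    refine Finset.sum_eq_zero fun x _ => ?_
    have : ∀ y ∈ G.neighborFinset x, Φ y x * g x = -(Φ x y * g x) := by
      intro y hy
      rw [hΦanti x y ((G.mem_neighborFinset x y).1 hy)]; ring
    rw [Finset.sum_congr rfl this, Finset.sum_neg_distrib, ← Finset.sum_mul]
    by_cases hx : x ∈ B
    · rw [hgB x hx, mul_zero, neg_zero]
    · rw [hΦsum x hx, zero_mul, neg_zero]
  have T : ∑ x, ∑ y ∈ G.neighborFinset x, Φ x y * (g x - g y) = 0 := by
    have : ∀ x, ∑ y ∈ G.neighborFinset x, Φ x y * (g x - g y)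
        = (∑ y ∈ G.neighborFinset x, Φ x y * g x)
          - ∑ y ∈ G.neighborFinset x, Φ x y * g y := by
      intro x
      rw [← Finset.sum_sub_distrib]
      exact Finset.sum_congr rfl fun y _ => by ring
    rw [Finset.sum_congr rfl fun x _ => this x, Finset.sum_sub_distrib, S1, S2, sub_zero]
  have key : ∀ x y, G.Adj x y → h1 x - h1 y = h2 x - h2 y := by
    have habpos : ∀ x y, G.Adj x y → 0 < (h1 x - h1 y) * (h2 x - h2 y) := by
      intro x y ha
      rcases lt_or_gt_of_ne (hne1 x y ha) with hl | hl
      · have := (not_iff_not.2 (hsame x y ha)).1 (not_lt.2 hl.le)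
        have h2l : h2 x < h2 y := lt_of_le_of_ne (not_lt.1 this) (hne2 x y ha)
        exact mul_pos_of_neg_of_neg (by linarith) (by linarith)
      · have := (hsame x y ha).1 hl
        exact mul_pos (by linarith) (by linarith)
    have hform : ∀ x y, G.Adj x y → Φ x y * (g x - g y)
        = -(𝓔 s(x, y) * ((h1 x - h1 y) - (h2 x - h2 y)) ^ 2
            / ((h1 x - h1 y) * (h2 x - h2 y))) := by
      intro x y ha
      have ha1 : h1 x - h1 y ≠ 0 := sub_ne_zero.2 (hne1 x y ha)
      have ha2 : h2 x - h2 y ≠ 0 := sub_ne_zero.2 (hne2 x y ha)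
      have hgxy : g x - g y = (h1 x - h1 y) - (h2 x - h2 y) := by simp [hg]; ring
      rw [hgxy]
      simp only [hΦ]
      field_simp
      ring
    have hnonpos : ∀ x, ∀ y ∈ G.neighborFinset x, Φ x y * (g x - g y) ≤ 0 := by
      intro x y hy
      have ha := (G.mem_neighborFinset x y).1 hy
      rw [hform x y ha]
      exact neg_nonpos.2 (div_nonneg (mul_nonneg (h𝓔 _ (G.mem_edgeSet.2 ha)).le (sq_nonneg _))
        (habpos x y ha).le)
    have hzero : ∀ x, ∀ y ∈ G.neighborFinset x, Φ x y * (g x - g y) = 0 := by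
      intro x y hy
      have outer := (Finset.sum_eq_zero_iff_of_nonpos (fun x _ =>
        Finset.sum_nonpos (hnonpos x))).1 T x (Finset.mem_univ x)
      exact (Finset.sum_eq_zero_iff_of_nonpos (hnonpos x)).1 outer y hy
    intro x y ha
    have h0 := hzero x y ((G.mem_neighborFinset x y).2 ha)
    rw [hform x y ha] at h0
    have hab := habpos x y ha
    have hE := h𝓔 _ (G.mem_edgeSet.2 ha)
    have : ((h1 x - h1 y) - (h2 x - h2 y)) ^ 2 = 0 := by
      by_contra hcon
      have hsq : 0 < ((h1 x - h1 y) - (h2 x - h2 y)) ^ 2 :=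
        lt_of_le_of_ne (sq_nonneg _) (Ne.symm hcon)
      have : 0 < 𝓔 s(x, y) * ((h1 x - h1 y) - (h2 x - h2 y)) ^ 2
          / ((h1 x - h1 y) * (h2 x - h2 y)) := div_pos (mul_pos hE hsq) hab
      rw [neg_eq_zero] at h0
      exact absurd h0 (ne_of_gt this)
    have := pow_eq_zero_iff (n := 2) (by norm_num) |>.1 this
    linarith [sub_eq_zero.1 this]
  have gedge : ∀ x y, G.Adj x y → g x = g y := by
    intro x y ha
    have := key x y ha
    simp only [hg]; linarith
  have gwalk : ∀ {x y : V} (_ : G.Walk x y), g x = g y := by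
    intro x y w
    induction w with
    | nil => rfl
    | cons ha _ ih => exact (gedge _ _ ha).trans ih
  obtain ⟨b, hbB⟩ := hBne
  funext x
  have : g x = 0 := by
    obtain ⟨w⟩ := hconn x b
    rw [gwalk w, hgB b hbB]
  simpa [hg, sub_eq_zero] using this

-- ==================== surjectivity: combinatorial part ====================

lemma wf_dir {G : SimpleGraph V} {B : Set V} {u : V → ℝ} {σ : GraphOrientation G}
    (hc : Compatible G B u σ) : WellFounded σ.dir := by
  haveI : IsIrrefl V (TransGen σ.dir) := ⟨hc.1⟩
  exact Subrelation.wf (fun h => TransGen.single h)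
    (Finite.wellFounded_of_trans_of_irrefl (TransGen σ.dir))

lemma wf_dir_swap {G : SimpleGraph V} {B : Set V} {u : V → ℝ} {σ : GraphOrientation G}
    (hc : Compatible G B u σ) : WellFounded (Function.swap σ.dir) := by
  haveI : IsIrrefl V (TransGen (Function.swap σ.dir)) :=
    ⟨fun a h => hc.1 a (transGen_swap.1 h)⟩
  exact Subrelation.wf (fun h => TransGen.single h)
    (Finite.wellFounded_of_trans_of_irrefl (TransGen (Function.swap σ.dir)))

lemma exists_down {G : SimpleGraph V} {B : Set V} {u : V → ℝ} {σ : GraphOrientation G}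
    (hc : Compatible G B u σ) (x : V) : ∃ b ∈ B, ReflTransGen σ.dir x b := by
  induction x using (wf_dir_swap hc).induction with
  | _ x ih =>
    by_cases hx : x ∈ B
    · exact ⟨x, hx, .refl⟩
    · obtain ⟨y, hy⟩ := (hc.2.1 x hx).1
      obtain ⟨b, hbB, hr⟩ := ih y hy
      exact ⟨b, hbB, .head hy hr⟩

lemma exists_up {G : SimpleGraph V} {B : Set V} {u : V → ℝ} {σ : GraphOrientation G}
    (hc : Compatible G B u σ) (x : V) : ∃ a ∈ B, ReflTransGen σ.dir a x := by
  induction x using (wf_dir hc).induction with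
  | _ x ih =>
    by_cases hx : x ∈ B
    · exact ⟨x, hx, .refl⟩
    · obtain ⟨y, hy⟩ := (hc.2.1 x hx).2
      obtain ⟨a, haB, hr⟩ := ih y hy
      exact ⟨a, haB, hr.tail hy⟩

lemma mono_of_refl {G : SimpleGraph V} {σ : GraphOrientation G} {h : V → ℝ}
    (hmono : ∀ x y, σ.dir x y → h y ≤ h x) {p q : V}
    (hr : ReflTransGen σ.dir p q) : h q ≤ h p := by
  induction hr with
  | refl => exact le_refl _
  | tail _ hd ih => exact le_trans (hmono _ _ hd) ih

lemma fusigma_nonempty {G : SimpleGraph V} {B : Set V} {u : V → ℝ} {σ : GraphOrientation G}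
    (hc : Compatible G B u σ) : (FuSigma G B u σ).Nonempty := by
  classical
  set Dfin : V → Finset V :=
    fun x => Finset.univ.filter (fun b => b ∈ B ∧ ReflTransGen σ.dir x b) with hDfin
  have hDne : ∀ x, (Dfin x).Nonempty := by
    intro x
    obtain ⟨b, hbB, hr⟩ := exists_down hc x
    exact ⟨b, by simp [hDfin, hbB, hr]⟩
  set M : V → ℝ := fun x => (Dfin x).sup' (hDne x) u with hM
  have hDmem : ∀ {x b}, b ∈ Dfin x ↔ b ∈ B ∧ ReflTransGen σ.dir x b := by
    intro x b; simp [hDfin]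
  have hMmem : ∀ x, ∃ b ∈ Dfin x, M x = u b := by
    intro x
    obtain ⟨b, hb, he⟩ := Finset.exists_mem_eq_sup' (hDne x) u
    exact ⟨b, hb, he⟩
  have hMmono : ∀ x y, σ.dir x y → M y ≤ M x := by
    intro x y hd
    refine Finset.sup'_le _ _ fun b hb => ?_
    obtain ⟨hbB, hr⟩ := hDmem.1 hb
    exact Finset.le_sup' u (hDmem.2 ⟨hbB, hr.head hd⟩)
  have hMlt : ∀ x y, x ∈ B → σ.dir x y → M y < u x := by
    intro x y hxB hd
    obtain ⟨b, hb, he⟩ := hMmem y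
    obtain ⟨hbB, hr⟩ := hDmem.1 hb
    rw [he]
    exact hc.2.2 x hxB b hbB (TransGen.head' hd hr)
  set r : V → ℕ :=
    fun x => (Finset.univ.filter (fun z => ReflTransGen σ.dir x z)).card with hr
  have hrmono : ∀ x y, σ.dir x y → r y < r x := by
    intro x y hd
    refine Finset.card_lt_card ⟨fun z hz => ?_, fun hsub => ?_⟩
    · simp only [Finset.mem_filter, Finset.mem_univ, true_and] at hz ⊢
      exact hz.head hd
    · have hx : x ∈ Finset.univ.filter (fun z => ReflTransGen σ.dir x z) := by
        simp [ReflTransGen.refl]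
      have := hsub hx
      simp only [Finset.mem_filter, Finset.mem_univ, true_and] at this
      exact hc.1 x (TransGen.head' hd this)
  set P : Finset (V × V) := (Finset.univ ×ˢ Finset.univ).filter
    (fun p : V × V => p.1 ∈ B ∧ p.2 ∉ B ∧ σ.dir p.1 p.2) with hP
  have hPgap : ∀ p ∈ P, 0 < u p.1 - M p.2 := by
    intro p hp
    simp only [hP, Finset.mem_filter] at hp
    exact sub_pos.2 (hMlt p.1 p.2 hp.2.1 hp.2.2.2)
  set δ : ℝ := if hPne : P.Nonempty then P.inf' hPne (fun p => u p.1 - M p.2) else 1 with hδ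
  have hδpos : 0 < δ := by
    rw [hδ]
    split
    · next hPne => exact (Finset.lt_inf'_iff hPne).2 fun p hp => hPgap p hp
    · norm_num
  have hδle : ∀ x y, x ∈ B → y ∉ B → σ.dir x y → δ ≤ u x - M y := by
    intro x y hxB hyB hd
    have hmem : (x, y) ∈ P := by simp [hP, hxB, hyB, hd]
    rw [hδ, dif_pos ⟨_, hmem⟩]
    exact Finset.inf'_le _ hmem
  set N : ℕ := Finset.univ.sup r with hN
  set ε : ℝ := δ / (2 * 2 ^ N) with hε
  have hεpos : 0 < ε := div_pos hδpos (by positivity)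
  have hεlt : ∀ x, ε * 2 ^ (r x) < δ := by
    intro x
    have h1 : (2:ℝ) ^ (r x) ≤ 2 ^ N :=
      pow_le_pow_right₀ one_le_two (Finset.le_sup (Finset.mem_univ x))
    have h2 : ε * 2 ^ (r x) ≤ ε * 2 ^ N := mul_le_mul_of_nonneg_left h1 hεpos.le
    have h3 : ε * 2 ^ N = δ / 2 := by
      rw [hε]; field_simp
    linarith
  refine ⟨fun x => if x ∈ B then u x else M x + ε * 2 ^ (r x), fun b hbB => if_pos hbB, ?_⟩
  intro x y hd
  by_cases hxB : x ∈ B <;> by_cases hyB : y ∈ B <;>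
    simp only [if_pos, if_neg, hxB, hyB, if_true, if_false]
  · exact hc.2.2 x hxB y hyB (TransGen.single hd)
  · have := hδle x y hxB hyB hd
    have := hεlt y
    linarith
  · have huy : u y ≤ M x := Finset.le_sup' u (hDmem.2 ⟨hyB, ReflTransGen.single hd⟩)
    have : (0:ℝ) < ε * 2 ^ (r x) := by positivity
    linarith
  · have h1 := hMmono x y hd
    have h2 : (2:ℝ) ^ (r y) < 2 ^ (r x) :=
      pow_lt_pow_right₀ one_lt_two (hrmono x y hd)
    have h3 : ε * 2 ^ (r y) < ε * 2 ^ (r x) := mul_lt_mul_of_pos_left h2 hεpos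
    linarith

-- ==================== surjectivity: analytic part ====================

noncomputable def edgeFactor (𝓔 : Sym2 V → ℝ) (h : V → ℝ) : Sym2 V → ℝ :=
  Sym2.lift ⟨fun x y => |h x - h y| ^ 𝓔 s(x, y),
    by intro x y; simp only []; rw [abs_sub_comm, Sym2.eq_swap]⟩

lemma edgeFactor_mk (𝓔 : Sym2 V → ℝ) (h : V → ℝ) (x y : V) :
    edgeFactor 𝓔 h s(x, y) = |h x - h y| ^ 𝓔 s(x, y) := by
  rw [edgeFactor, Sym2.lift_mk]

lemma Mfun_eq (G : SimpleGraph V) (𝓔 : Sym2 V → ℝ) (h : V → ℝ) :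
    Mfun G 𝓔 h = ∏ e ∈ G.edgeFinset, edgeFactor 𝓔 h e := rfl

lemma mfun_continuous {G : SimpleGraph V} {𝓔 : Sym2 V → ℝ}
    (h𝓔 : ∀ e ∈ G.edgeSet, 0 < 𝓔 e) : Continuous (Mfun G 𝓔) := by
  unfold Mfun
  apply continuous_finset_prod
  intro e he
  rw [SimpleGraph.mem_edgeFinset] at he
  revert he
  refine Sym2.ind (fun x y he => ?_) e
  simp only [Sym2.lift_mk]
  exact (((continuous_apply x).sub (continuous_apply y)).abs).rpow_const
    (fun h => Or.inr (h𝓔 _ he).le)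

lemma mfun_pos {G : SimpleGraph V} {𝓔 : Sym2 V → ℝ} (h : V → ℝ)
    (hne : ∀ x y, G.Adj x y → h x ≠ h y) : 0 < Mfun G 𝓔 h := by
  rw [Mfun_eq]
  apply Finset.prod_pos
  intro e he
  rw [SimpleGraph.mem_edgeFinset] at he
  revert he
  refine Sym2.ind (fun x y he => ?_) e
  rw [SimpleGraph.mem_edgeSet] at he
  rw [edgeFactor_mk]
  exact Real.rpow_pos_of_pos (abs_pos.2 (sub_ne_zero.2 (hne x y he))) _

lemma ne_of_mfun_pos {G : SimpleGraph V} {𝓔 : Sym2 V → ℝ}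
    (h𝓔 : ∀ e ∈ G.edgeSet, 0 < 𝓔 e) (h : V → ℝ)
    (hpos : 0 < Mfun G 𝓔 h) : ∀ x y, G.Adj x y → h x ≠ h y := by
  intro x y ha heq
  have : Mfun G 𝓔 h = 0 := by
    rw [Mfun_eq]
    apply Finset.prod_eq_zero (SimpleGraph.mem_edgeFinset.2 (G.mem_edgeSet.2 ha))
    rw [edgeFactor_mk, heq, sub_self, abs_zero]
    exact Real.zero_rpow (h𝓔 _ (G.mem_edgeSet.2 ha)).ne'
  rw [this] at hpos; exact lt_irrefl _ hpos

lemma prod_incident {G : SimpleGraph V} {𝓔 : Sym2 V → ℝ} (h : V → ℝ) (x : V) :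
    ∏ e ∈ G.edgeFinset.filter (fun e => x ∈ e), edgeFactor 𝓔 h e
      = ∏ y ∈ G.neighborFinset x, |h x - h y| ^ 𝓔 s(x, y) := by
  refine (Finset.prod_bij (fun y (_ : y ∈ G.neighborFinset x) => s(x, y)) ?_ ?_ ?_ ?_).symm
  · intro y hy
    rw [SimpleGraph.mem_neighborFinset] at hy
    simp only [Finset.mem_filter, SimpleGraph.mem_edgeFinset, SimpleGraph.mem_edgeSet]
    exact ⟨hy, Sym2.mem_mk_left x y⟩
  · intro a ha b hb hab
    exact Sym2.congr_right.1 hab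
  · intro e hee
    simp only [Finset.mem_filter, SimpleGraph.mem_edgeFinset] at hee
    obtain ⟨he, hxe⟩ := hee
    revert he hxe
    refine Sym2.ind (fun a b he hxe => ?_) e
    rw [Sym2.mem_iff] at hxe
    rw [SimpleGraph.mem_edgeSet] at he
    rcases hxe with rfl | rfl
    · exact ⟨b, (G.mem_neighborFinset _ _).2 he, rfl⟩
    · exact ⟨a, (G.mem_neighborFinset _ _).2 he.symm, Sym2.eq_swap.symm⟩
  · intro y hy
    rw [edgeFactor_mk]

lemma enh_at_of_max {G : SimpleGraph V} {𝓔 : Sym2 V → ℝ}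
    (h𝓔 : ∀ e ∈ G.edgeSet, 0 < 𝓔 e) (h : V → ℝ)
    (hne : ∀ a b, G.Adj a b → h a ≠ h b) (x : V)
    (hmax : ∀ᶠ s in nhds (h x), Mfun G 𝓔 (Function.update h x s) ≤ Mfun G 𝓔 h) :
    EnharmonicAt G 𝓔 h x := by
  classical
  set Cst := ∏ e ∈ G.edgeFinset.filter (fun e => ¬ x ∈ e), edgeFactor 𝓔 h e with hCst
  have hCpos : 0 < Cst := by
    apply Finset.prod_pos
    intro e he
    simp only [Finset.mem_filter, SimpleGraph.mem_edgeFinset] at he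
    obtain ⟨he, -⟩ := he
    revert he
    refine Sym2.ind (fun a b he => ?_) e
    rw [SimpleGraph.mem_edgeSet] at he
    rw [edgeFactor_mk]
    exact Real.rpow_pos_of_pos (abs_pos.2 (sub_ne_zero.2 (hne a b he))) _
  have hsplit : ∀ s : ℝ,
      Mfun G 𝓔 (Function.update h x s)
        = (∏ y ∈ G.neighborFinset x, |s - h y| ^ 𝓔 s(x, y)) * Cst := by
    intro s
    rw [Mfun_eq, ← Finset.prod_filter_mul_prod_filter_not G.edgeFinset (fun e => x ∈ e)]
    congr 1
    · rw [prod_incident]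
      refine Finset.prod_congr rfl fun y hy => ?_
      rw [SimpleGraph.mem_neighborFinset] at hy
      rw [Function.update_self, Function.update_of_ne (G.ne_of_adj hy).symm]
    · refine Finset.prod_congr rfl fun e he => ?_
      simp only [Finset.mem_filter] at he
      obtain ⟨-, hxe⟩ := he
      revert hxe
      refine Sym2.ind (fun a b hxe => ?_) e
      rw [Sym2.mem_iff] at hxe
      push_neg at hxe
      rw [edgeFactor_mk, edgeFactor_mk,
        Function.update_of_ne (Ne.symm hxe.1), Function.update_of_ne (Ne.symm hxe.2)]
  set L : ℝ → ℝ := fun s => ∑ y ∈ G.neighborFinset x, 𝓔 s(x, y) * Real.log (s - h y) with hL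
  have hne' : ∀ y ∈ G.neighborFinset x, h x ≠ h y :=
    fun y hy => hne x y ((G.mem_neighborFinset x y).1 hy)
  have hU : ∀ᶠ s in nhds (h x), ∀ y ∈ G.neighborFinset x, s ≠ h y := by
    rw [Filter.eventually_all_finset]
    exact fun y hy => eventually_ne_nhds (hne' y hy)
  have hML : ∀ s, (∀ y ∈ G.neighborFinset x, s ≠ h y) →
      Mfun G 𝓔 (Function.update h x s) = Real.exp (L s) * Cst := by
    intro s hs
    rw [hsplit s, hL]
    congr 1
    rw [Real.exp_sum]
    refine Finset.prod_congr rfl fun y hy => ?_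
    have hsy : s - h y ≠ 0 := sub_ne_zero.2 (hs y hy)
    rw [Real.rpow_def_of_pos (abs_pos.2 hsy), Real.log_abs, mul_comm]
  have hMh : Mfun G 𝓔 h = Real.exp (L (h x)) * Cst := by
    have := hML (h x) hne'
    rwa [Function.update_eq_self] at this
  have hlocmax : IsLocalMax L (h x) := by
    filter_upwards [hmax, hU] with s ha1 ha2
    rw [hML s ha2, hMh] at ha1
    exact Real.exp_le_exp.1 ((mul_le_mul_iff_of_pos_right hCpos).1 ha1)
  have hder : HasDerivAt L (∑ y ∈ G.neighborFinset x, 𝓔 s(x, y) * (h x - h y)⁻¹) (h x) := by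
    rw [hL]
    apply HasDerivAt.fun_sum
    intro y hy
    have hy0 : h x - h y ≠ 0 := sub_ne_zero.2 (hne' y hy)
    have h1 : HasDerivAt (fun s : ℝ => s - h y) 1 (h x) := (hasDerivAt_id _).sub_const (h y)
    have h2 := (Real.hasDerivAt_log hy0).comp (h x) h1
    simpa [Function.comp, mul_comm] using h2.const_mul (𝓔 s(x, y))
  have hzero := hlocmax.hasDerivAt_eq_zero hder
  unfold EnharmonicAt
  rw [← hzero]
  exact Finset.sum_congr rfl fun y hy => div_eq_mul_inv _ _

lemma isCompact_K {G : SimpleGraph V} {B : Set V} {u : V → ℝ} {σ : GraphOrientation G}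
    (lo hi : ℝ) :
    IsCompact {h : V → ℝ | (∀ b ∈ B, h b = u b) ∧ (∀ x y, σ.dir x y → h y ≤ h x) ∧
      ∀ x, h x ∈ Set.Icc lo hi} := by
  apply IsCompact.of_isClosed_subset (isCompact_univ_pi fun _ : V => isCompact_Icc)
  · have heq : {h : V → ℝ | (∀ b ∈ B, h b = u b) ∧ (∀ x y, σ.dir x y → h y ≤ h x) ∧
        ∀ x, h x ∈ Set.Icc lo hi} =
        (⋂ b ∈ B, {h : V → ℝ | h b = u b}) ∩
        ((⋂ x, ⋂ y, {h : V → ℝ | σ.dir x y → h y ≤ h x}) ∩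
         (⋂ x, (fun h : V → ℝ => h x) ⁻¹' Set.Icc lo hi)) := by
      ext h
      simp only [Set.mem_setOf_eq, Set.mem_inter_iff, Set.mem_iInter, Set.mem_preimage]
    rw [heq]
    refine IsClosed.inter (isClosed_biInter fun b _ =>
      isClosed_eq (continuous_apply b) continuous_const) (IsClosed.inter ?_ ?_)
    · refine isClosed_iInter fun x => isClosed_iInter fun y => ?_
      by_cases hd : σ.dir x y
      · simpa [hd] using isClosed_le (continuous_apply y) (continuous_apply x)
      · simp [hd]
    · exact isClosed_iInter fun x => isClosed_Icc.preimage (continuous_apply x)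
  · intro h hh
    rw [Set.mem_univ_pi]
    exact fun x => hh.2.2 x

lemma exists_enh {G : SimpleGraph V} {B : Set V} {u : V → ℝ} {𝓔 : Sym2 V → ℝ}
    {σ : GraphOrientation G} (hconn : G.Connected) (hBne : B.Nonempty)
    (h𝓔 : ∀ e ∈ G.edgeSet, 0 < 𝓔 e) (hc : Compatible G B u σ) :
    ∃ h ∈ EnhSols G B u 𝓔, ∀ x y, σ.dir x y ↔ (G.Adj x y ∧ h y < h x) := by
  classical
  set BF := (Set.toFinite B).toFinset with hBF
  have hBFne : BF.Nonempty := (Set.Finite.toFinset_nonempty _).2 hBne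
  have hBFmem : ∀ {b}, b ∈ BF ↔ b ∈ B := fun {b} => Set.Finite.mem_toFinset _
  set uL : ℝ := BF.inf' hBFne u with huL
  set uU : ℝ := BF.sup' hBFne u with huU
  set K : Set (V → ℝ) := {h | (∀ b ∈ B, h b = u b) ∧ (∀ x y, σ.dir x y → h y ≤ h x) ∧
    ∀ x, h x ∈ Set.Icc uL uU} with hK
  obtain ⟨h₀, h₀B, h₀mono⟩ := fusigma_nonempty hc
  have h₀mono' : ∀ x y, σ.dir x y → h₀ y ≤ h₀ x := fun x y hd => (h₀mono x y hd).le
  have hbound : ∀ (h : V → ℝ), (∀ b ∈ B, h b = u b) → (∀ x y, σ.dir x y → h y ≤ h x) →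
      ∀ x, h x ∈ Set.Icc uL uU := by
    intro h hb hmono x
    constructor
    · obtain ⟨b, hbB, hr⟩ := exists_down hc x
      calc uL ≤ u b := Finset.inf'_le u (hBFmem.2 hbB)
        _ = h b := (hb b hbB).symm
        _ ≤ h x := mono_of_refl hmono hr
    · obtain ⟨a, haB, hr⟩ := exists_up hc x
      calc h x ≤ h a := mono_of_refl hmono hr
        _ = u a := hb a haB
        _ ≤ uU := Finset.le_sup' u (hBFmem.2 haB)
  have h₀K : h₀ ∈ K := ⟨h₀B, h₀mono', hbound h₀ h₀B h₀mono'⟩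
  obtain ⟨hs, hsK, hsmax⟩ := (isCompact_K uL uU).exists_isMaxOn ⟨h₀, h₀K⟩
    (mfun_continuous h𝓔).continuousOn
  have h₀ne : ∀ x y, G.Adj x y → h₀ x ≠ h₀ y := by
    intro x y ha
    rcases dir_or σ ha with hd | hd
    · exact (h₀mono x y hd).ne'
    · exact (h₀mono y x hd).ne
  have hMpos : 0 < Mfun G 𝓔 hs := lt_of_lt_of_le (mfun_pos h₀ h₀ne) (hsmax h₀K)
  have hsne := ne_of_mfun_pos h𝓔 hs hMpos
  have hsstrict : ∀ x y, σ.dir x y → hs y < hs x := fun x y hd =>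
    lt_of_le_of_ne (hsK.2.1 x y hd) (hsne y x (σ.dir_adj x y hd).symm)
  have hsB := hsK.1
  have hintbound : ∀ x, x ∉ B → uL < hs x ∧ hs x < uU := by
    intro x hx
    constructor
    · obtain ⟨b, hbB, hr⟩ := exists_down hc x
      rcases hr.cases_head with rfl | ⟨c, hdc, hr'⟩
      · exact absurd hbB hx
      · calc uL ≤ u b := Finset.inf'_le u (hBFmem.2 hbB)
          _ = hs b := (hsB b hbB).symm
          _ ≤ hs c := mono_of_refl hsK.2.1 hr'
          _ < hs x := hsstrict x c hdc
    · obtain ⟨a, haB, hr⟩ := exists_up hc x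
      rcases hr.cases_head with rfl | ⟨c, hdc, hr'⟩
      · exact absurd haB hx
      · calc hs x ≤ hs c := mono_of_refl hsK.2.1 hr'
          _ < hs a := hsstrict a c hdc
          _ = u a := hsB a haB
          _ ≤ uU := Finset.le_sup' u (hBFmem.2 haB)
  have henh : ∀ x, x ∉ B → EnharmonicAt G 𝓔 hs x := by
    intro x hx
    apply enh_at_of_max h𝓔 hs hsne x
    have hevK : ∀ᶠ s in nhds (hs x), Function.update hs x s ∈ K := by
      have c2 : ∀ᶠ s in nhds (hs x), ∀ a b, σ.dir a b →
          Function.update hs x s b ≤ Function.update hs x s a := by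
        rw [Filter.eventually_all]
        intro a
        rw [Filter.eventually_all]
        intro b
        by_cases hd : σ.dir a b
        · by_cases hax : a = x
          · have hbx : b ≠ x := fun hbxx => (G.loopless.irrefl x) (by
              have := σ.dir_adj a b hd
              rwa [hax, hbxx] at this)
            have := eventually_gt_nhds (show hs b < hs x by
              rw [← hax]; exact hsstrict a b hd)
            filter_upwards [this] with s hlt hdd
            rw [Function.update_of_ne hbx, hax, Function.update_self]
            exact hlt.le
          · by_cases hbx : b = x
            · have := eventually_lt_nhds (show hs x < hs a by
                rw [← hbx]; exact hsstrict a b hd)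
              filter_upwards [this] with s hlt hdd
              rw [Function.update_of_ne hax, hbx, Function.update_self]
              exact hlt.le
            · refine Filter.Eventually.of_forall fun s hdd => ?_
              rw [Function.update_of_ne hbx, Function.update_of_ne hax]
              exact hsK.2.1 a b hd
        · exact Filter.Eventually.of_forall fun s hdd => absurd hdd hd
      have c3 : ∀ᶠ s in nhds (hs x), ∀ z, Function.update hs x s z ∈ Set.Icc uL uU := by
        rw [Filter.eventually_all]
        intro z
        by_cases hzx : z = x
        · obtain ⟨hl, hu⟩ := hintbound x hx
          filter_upwards [(eventually_gt_nhds hl).and (eventually_lt_nhds hu)] with s hss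
          rw [hzx, Function.update_self]
          exact ⟨hss.1.le, hss.2.le⟩
        · exact Filter.Eventually.of_forall fun s => by
            rw [Function.update_of_ne hzx]; exact hsK.2.2 z
      filter_upwards [c2, c3] with s hs2 hs3
      refine ⟨fun b hbB => ?_, hs2, hs3⟩
      have hbx : b ≠ x := fun hbx => hx (hbx ▸ hbB)
      rw [Function.update_of_ne hbx]
      exact hsB b hbB
    filter_upwards [hevK] with s hsmem
    exact hsmax hsmem
  refine ⟨hs, ⟨hsB, hsne, henh⟩, fun x y => ?_⟩
  constructor
  · intro hd
    exact ⟨σ.dir_adj x y hd, hsstrict x y hd⟩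
  · rintro ⟨ha, hlt⟩
    rcases dir_or σ ha with hd | hd
    · exact hd
    · exact absurd (hsstrict y x hd) (not_lt.2 hlt.le)

end Aux

/-- sending an enharmonic solution h to the orientation directing each edge from
larger to smaller h-value is a bijection onto the compatible orientations. -/
theorem stmt_6 (G : SimpleGraph V) (hconn : G.Connected)
    (B : Set V) (hB : BoundaryOK G B) (u : V → ℝ) (hu : Set.InjOn u B)
    (𝓔 : Sym2 V → ℝ) (h𝓔 : ∀ e ∈ G.edgeSet, 0 < 𝓔 e) :
    ∃ F : {h : V → ℝ // h ∈ EnhSols G B u 𝓔} →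
        {σ : GraphOrientation G // Compatible G B u σ},
      (∀ h x y, ((F h).1.dir x y ↔ G.Adj x y ∧ h.1 y < h.1 x)) ∧
      Function.Bijective F := by
  classical
  have hBfin : B.Finite := Set.toFinite B
  obtain ⟨a0, b0, ha0, hb0, hab0⟩ : ∃ a b, a ∈ B ∧ b ∈ B ∧ a ≠ b := by
    have h1 : 1 < B.ncard := hB.1
    exact (Set.one_lt_ncard_iff hBfin).1 h1
  have hBne : B.Nonempty := ⟨a0, ha0⟩
  haveI : Nontrivial V := ⟨a0, b0, hab0⟩
  refine ⟨fun h => ⟨orientOf G h.1 (fun x y ha => h.2.2.1 x y ha),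
    orientOf_compatible hconn h𝓔 h.2.1 _ h.2.2.2⟩, fun h x y => Iff.rfl, ?_, ?_⟩
  · intro h1 h2 heq
    apply Subtype.ext
    have hveq := congrArg Subtype.val heq
    have hd := congrArg GraphOrientation.dir hveq
    refine enh_inj hconn hBne h𝓔 h1.2.1 h1.2.2.1 h1.2.2.2 h2.2.1 h2.2.2.1 h2.2.2.2 ?_
    intro x y ha
    have hxy := congrFun (congrFun hd x) y
    rw [eq_iff_iff] at hxy
    constructor
    · intro hlt; exact (hxy.1 ⟨ha, hlt⟩).2
    · intro hlt; exact (hxy.2 ⟨ha, hlt⟩).2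
  · rintro ⟨σ, hc⟩
    obtain ⟨h, hmem, hiff⟩ := exists_enh hconn hBne h𝓔 hc
    refine ⟨⟨h, hmem⟩, ?_⟩
    apply Subtype.ext
    apply GraphOrientation.ext'
    funext x y
    exact propext ((hiff x y).symm)
end

section
/- Let G be a finite connected simple graph with boundary B and injective boundary values u : B → ℝ as in the context. Suppose u takes only rational values and 𝓔 : E → ℝ assigns a positive rational energy to each edge. If h : V → ℝ extends u, satisfies h(x) ≠ h(y) for every edge xy, and satisfies Σ_{y ∼ x} 𝓔_{xy}/(h(x) − h(y)) = 0 at every interior vertex x, then for every vertex v the value h(v) is a totally real algebraic number: h(v) is algebraic over ℚ and every complex root of its minimal polynomial over ℚ is real. -/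
set_option maxHeartbeats 1000000
set_option synthInstance.maxHeartbeats 400000


attribute [local instance] Classical.propDecidable

variable {V : Type*} [Fintype V] [DecidableEq V]

section Auxiliary


/-- Maximum principle: a discrete harmonic function (w.r.t. positive conductances)
attains its maximum on the boundary. -/
lemma exists_boundary_max (G : SimpleGraph V) (hpre : G.Preconnected)
    (B : Set V) (hBne : B.Nonempty) (c : Sym2 V → ℝ)
    (hc : ∀ x y, G.Adj x y → 0 < c s(x, y)) (g : V → ℝ)
    (hg : ∀ x, x ∉ B → ∑ y ∈ G.neighborFinset x, c s(x, y) * (g x - g y) = 0) :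
    ∃ b ∈ B, ∀ v, g v ≤ g b := by
  obtain ⟨b₀, hb₀⟩ := hBne
  have : Nonempty V := ⟨b₀⟩
  obtain ⟨x₀, -, hx₀⟩ := Finset.exists_max_image (Finset.univ : Finset V) g ⟨b₀, Finset.mem_univ _⟩
  have key : ∀ {x b : V} (_ : G.Walk x b), b ∈ B → (∀ v, g v ≤ g x) → ∃ b' ∈ B, ∀ v, g v ≤ g b' := by
    intro x b p
    induction p with
    | nil => intro hbB hx; exact ⟨_, hbB, hx⟩
    | @cons x y b hadj p ih =>
      intro hbB hx
      by_cases hxB : x ∈ B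
      · exact ⟨x, hxB, hx⟩
      · -- every neighbor of x has the same (maximal) value
        have hsum := hg x hxB
        have hnn : ∀ z ∈ G.neighborFinset x, 0 ≤ c s(x, z) * (g x - g z) := by
          intro z hz
          rw [SimpleGraph.mem_neighborFinset] at hz
          have := hc x z hz
          nlinarith [hx z]
        have hzero := (Finset.sum_eq_zero_iff_of_nonneg hnn).1 hsum
        have hyx : g y = g x := by
          have hy : y ∈ G.neighborFinset x := (SimpleGraph.mem_neighborFinset _ _ _).2 hadj
          have := hzero y hy
          have hcpos := hc x y hadj
          have : g x - g y = 0 := by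
            rcases mul_eq_zero.1 this with h | h
            · exact absurd h (ne_of_gt hcpos)
            · exact h
          linarith
        exact ih hbB (fun v => (hx v).trans (le_of_eq hyx.symm))
  exact key (hpre x₀ b₀).some hb₀ (fun v => hx₀ v (Finset.mem_univ v))

/-- Uniqueness / vanishing: a harmonic function vanishing on the boundary vanishes. -/
lemma harmonic_eq_zero (G : SimpleGraph V) (hpre : G.Preconnected)
    (B : Set V) (hBne : B.Nonempty) (c : Sym2 V → ℝ)
    (hc : ∀ x y, G.Adj x y → 0 < c s(x, y)) (g : V → ℝ)
    (hgB : ∀ b ∈ B, g b = 0)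
    (hg : ∀ x, x ∉ B → ∑ y ∈ G.neighborFinset x, c s(x, y) * (g x - g y) = 0) :
    ∀ v, g v = 0 := by
  obtain ⟨b, hbB, hb⟩ := exists_boundary_max G hpre B hBne c hc g hg
  obtain ⟨b', hbB', hb'⟩ := exists_boundary_max G hpre B hBne c hc (fun v => -g v) (by
    intro x hx
    have := hg x hx
    have : -∑ y ∈ G.neighborFinset x, c s(x, y) * (g x - g y) = 0 := by rw [this]; ring
    rw [← this, ← Finset.sum_neg_distrib]
    exact Finset.sum_congr rfl fun y _ => by ring)
  intro v
  have h1 : g v ≤ 0 := (hb v).trans (le_of_eq (hgB b hbB))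
  have h2 : -g v ≤ 0 := (hb' v).trans (le_of_eq (by rw [hgB b' hbB']; ring))
  linarith

/-- Any complex solution of the enharmonic equations with real boundary values is real. -/
lemma complex_solution_real (G : SimpleGraph V) (hpre : G.Preconnected)
    (B : Set V) (hBne : B.Nonempty) (𝓔 : Sym2 V → ℝ)
    (h𝓔 : ∀ e ∈ G.edgeSet, 0 < 𝓔 e) (H : V → ℂ)
    (hb : ∀ b ∈ B, (H b).im = 0)
    (hne : ∀ x y, G.Adj x y → H x ≠ H y)
    (heq : ∀ x, x ∉ B → ∑ y ∈ G.neighborFinset x, (𝓔 s(x, y) : ℂ) / (H x - H y) = 0) :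
    ∀ v, (H v).im = 0 := by
  set n : Sym2 V → ℝ := Sym2.lift ⟨fun x y => Complex.normSq (H x - H y), by
    intro x y; simp only []; rw [← Complex.normSq_neg]; ring_nf⟩ with hn
  set c : Sym2 V → ℝ := fun e => 𝓔 e / n e with hcdef
  have hnval : ∀ x y, n s(x, y) = Complex.normSq (H x - H y) := fun x y => rfl
  have hcpos : ∀ x y, G.Adj x y → 0 < c s(x, y) := by
    intro x y hadj
    have h1 : 0 < 𝓔 s(x, y) := h𝓔 _ ((SimpleGraph.mem_edgeSet G).2 hadj)
    have h2 : 0 < Complex.normSq (H x - H y) := by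
      rw [Complex.normSq_pos, sub_ne_zero]; exact hne x y hadj
    rw [hcdef]
    exact div_pos h1 (by rw [hnval]; exact h2)
  have him : ∀ v, (fun v => (H v).im) v = 0 := by
    apply harmonic_eq_zero G hpre B hBne c hcpos _ hb
    intro x hx
    have h0 := heq x hx
    have h1 : (∑ y ∈ G.neighborFinset x, (𝓔 s(x, y) : ℂ) / (H x - H y)).im = 0 := by
      rw [h0]; rfl
    rw [Complex.im_sum] at h1
    have h2 : ∀ y ∈ G.neighborFinset x,
        ((𝓔 s(x, y) : ℂ) / (H x - H y)).im = -(c s(x, y) * ((H x).im - (H y).im)) := by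
      intro y hy
      rw [SimpleGraph.mem_neighborFinset] at hy
      have hnz : Complex.normSq (H x - H y) ≠ 0 := by
        rw [ne_eq, Complex.normSq_eq_zero, sub_eq_zero]
        exact hne x y hy
      rw [div_eq_mul_inv, hcdef]
      simp only [Complex.mul_im, Complex.ofReal_re, Complex.ofReal_im, Complex.inv_im,
        Complex.inv_re, Complex.sub_im, hnval]
      field_simp
      ring
    rw [Finset.sum_congr rfl h2] at h1
    rw [Finset.sum_neg_distrib] at h1
    simpa using h1
  exact him


/-- A ℚ-algebra hom on a subfield of ℝ generated by a set takes real values (w.r.t. im)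
as soon as it does so on the generators. -/
lemma adjoin_hom_im_zero {S : Set ℝ} (φ : (IntermediateField.adjoin ℚ S) →ₐ[ℚ] ℂ)
    (hgen : ∀ x (hx : x ∈ S), (φ ⟨x, IntermediateField.subset_adjoin ℚ S hx⟩).im = 0) :
    ∀ a, (φ a).im = 0 := by
  rintro ⟨a, ha⟩
  induction ha using IntermediateField.adjoin_induction with
  | mem x hx => exact hgen x hx
  | algebraMap r =>
      show (φ (algebraMap ℚ _ r)).im = 0
      rw [AlgHom.commutes]
      norm_num
  | add x y hx hy ihx ihy =>
      show (φ (⟨x, hx⟩ + ⟨y, hy⟩)).im = 0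
      rw [map_add, Complex.add_im, ihx, ihy, add_zero]
  | inv x hx ihx =>
      show (φ ((⟨x, hx⟩ : IntermediateField.adjoin ℚ S))⁻¹).im = 0
      rw [map_inv₀, Complex.inv_im, ihx]
      norm_num
  | mul x y hx hy ihx ihy =>
      show (φ (⟨x, hx⟩ * ⟨y, hy⟩)).im = 0
      rw [map_mul, Complex.mul_im, ihx, ihy]
      ring



open Polynomial in
/-- If `A` is a subalgebra of `ℂ` consisting of real numbers and `z` is a real number
transcendental over `A`, then `I * z` is transcendental over `A`. -/
lemma transcendental_I_mul {k : Type*} [Field k] [Algebra k ℂ] {A : Subalgebra k ℂ} (hA : ∀ a : A, (a : ℂ).im = 0)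
    {z : ℂ} (hz : z.im = 0) (ht : Transcendental A z) :
    Transcendental A (Complex.I * z) := by
  intro halg
  obtain ⟨p, hp0, hpz⟩ := halg
  set ε₀ : ℕ → A := fun n => if n % 4 = 0 then 1 else if n % 4 = 2 then -1 else 0 with hε₀
  set ε₁ : ℕ → A := fun n => if n % 4 = 1 then 1 else if n % 4 = 3 then -1 else 0 with hε₁
  have hcoeff : ∀ (ε : ℕ → A) (m : ℕ),
      (∑ n ∈ p.support, monomial n (ε n * p.coeff n)).coeff m = ε m * p.coeff m := by
    intro ε m
    rw [finset_sum_coeff]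
    by_cases hm : m ∈ p.support
    · rw [Finset.sum_eq_single m (fun n _ hnm => by rw [coeff_monomial, if_neg hnm])
        (fun h => absurd hm h)]
      rw [coeff_monomial, if_pos rfl]
    · rw [Polynomial.notMem_support_iff.1 hm, mul_zero]
      exact Finset.sum_eq_zero fun n hn => by
        rw [coeff_monomial, if_neg]; rintro rfl; exact hm hn
  set P₀ : Polynomial A := ∑ n ∈ p.support, monomial n (ε₀ n * p.coeff n) with hP₀
  set P₁ : Polynomial A := ∑ n ∈ p.support, monomial n (ε₁ n * p.coeff n) with hP₁
  have hIpow : ∀ n : ℕ, ((algebraMap A ℂ) (ε₀ n) + Complex.I * (algebraMap A ℂ) (ε₁ n))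
      = Complex.I ^ n := by
    intro n
    have h4 : Complex.I ^ n = Complex.I ^ (n % 4) := by
      conv_lhs => rw [← Nat.div_add_mod n 4, pow_add, pow_mul, Complex.I_pow_four, one_pow, one_mul]
    rw [h4, hε₀, hε₁]
    have : n % 4 = 0 ∨ n % 4 = 1 ∨ n % 4 = 2 ∨ n % 4 = 3 := by omega
    rcases this with h | h | h | h
    · simp [h]
    · simp [h]
    · simp [h, Complex.I_sq]
    · simp only [h]
      norm_num
  have hkey : Polynomial.aeval z P₀ + Complex.I * Polynomial.aeval z P₁
      = Polynomial.aeval (Complex.I * z) p := by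
    conv_rhs => rw [p.as_sum_support]
    rw [hP₀, hP₁]
    rw [map_sum, map_sum, map_sum, Finset.mul_sum, ← Finset.sum_add_distrib]
    refine Finset.sum_congr rfl fun n _ => ?_
    rw [aeval_monomial, aeval_monomial, aeval_monomial, mul_pow]
    rw [map_mul, map_mul]
    rw [← hIpow n]
    ring
  have hreal : ∀ (Q : Polynomial A), (Polynomial.aeval z Q).im = 0 := by
    intro Q
    rw [Polynomial.aeval_eq_sum_range]
    rw [Complex.im_sum]
    refine Finset.sum_eq_zero fun n _ => ?_
    have h1 : ((algebraMap A ℂ) (Q.coeff n)).im = 0 := hA _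
    have h2 : (z ^ n).im = 0 := by
      have : z = ((z.re : ℝ) : ℂ) := Complex.ext rfl (by simp [hz])
      rw [this, ← Complex.ofReal_pow, Complex.ofReal_im]
    rw [Algebra.smul_def, Complex.mul_im, h1, h2]
    ring
  have h0 : Polynomial.aeval z P₀ = 0 ∧ Polynomial.aeval z P₁ = 0 := by
    have he := hkey.trans hpz
    have h1 := congrArg Complex.re he
    have h2 := congrArg Complex.im he
    simp only [Complex.add_re, Complex.add_im, Complex.mul_re, Complex.mul_im,
      Complex.I_re, Complex.I_im, Complex.zero_re, Complex.zero_im] at h1 h2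
    have hre0 := hreal P₀
    have hre1 := hreal P₁
    have ha : (Polynomial.aeval z P₀) = 0 := by
      have hr : (Polynomial.aeval z P₀).re = 0 := by linarith
      exact Complex.ext (by simpa using hr) (by simpa using hre0)
    have hb : (Polynomial.aeval z P₁) = 0 := by
      have hr : (Polynomial.aeval z P₁).re = 0 := by linarith
      exact Complex.ext (by simpa using hr) (by simpa using hre1)
    exact ⟨ha, hb⟩
  rw [transcendental_iff] at ht
  have hP₀0 := ht P₀ h0.1
  have hP₁0 := ht P₁ h0.2
  apply hp0
  ext1 m
  have hc0 : ε₀ m * p.coeff m = 0 := by rw [← hcoeff ε₀ m, ← hP₀, hP₀0, Polynomial.coeff_zero]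
  have hc1 : ε₁ m * p.coeff m = 0 := by rw [← hcoeff ε₁ m, ← hP₁, hP₁0, Polynomial.coeff_zero]
  rw [Polynomial.coeff_zero]
  have : m % 4 = 0 ∨ m % 4 = 1 ∨ m % 4 = 2 ∨ m % 4 = 3 := by omega
  rcases this with h | h | h | h
  · rw [hε₀] at hc0; simp [h] at hc0; exact hc0
  · rw [hε₁] at hc1; simp [h] at hc1; exact hc1
  · rw [hε₀] at hc0; simp [h] at hc0; exact hc0
  · rw [hε₁] at hc1; simp [h] at hc1; exact hc1



variable {k : Type*} [Field k] [Algebra k ℂ]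

lemma adjoin_im_zero' (hk : ∀ r : k, (algebraMap k ℂ r).im = 0) {T : Set ℂ}
    (hT : ∀ z ∈ T, z.im = 0) :
    ∀ a : (Algebra.adjoin k T), (a : ℂ).im = 0 := by
  rintro ⟨a, ha⟩
  induction ha using Algebra.adjoin_induction with
  | mem x hx => exact hT x hx
  | algebraMap r => exact hk r
  | add x y hx hy ihx ihy => rw [Complex.add_im, ihx, ihy, add_zero]
  | mul x y hx hy ihx ihy => rw [Complex.mul_im, ihx, ihy]; ring

/-- If a `k`-field embeds into ℝ (inside ℂ) but is transcendental over `k`, it admits a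
`k`-algebra hom to ℂ with some non-real value. -/
lemma exists_nonreal_hom (hk : ∀ r : k, (algebraMap k ℂ r).im = 0)
    {E : Type*} [Field E] [Algebra k E] (j : E →ₐ[k] ℂ)
    (hjim : ∀ a, (j a).im = 0) (htrans : Algebra.Transcendental k E) :
    ∃ (φ : E →ₐ[k] ℂ) (a : E), (φ a).im ≠ 0 := by
  obtain ⟨s, hs⟩ := exists_isTranscendenceBasis k E
  have hnon : Nonempty s := hs.nonempty_iff_transcendental.2 htrans
  obtain ⟨i₀⟩ := hnon
  set y : s → ℂ := fun i => j (i : E) with hydef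
  have hy : AlgebraicIndependent k y := by
    have h1 := hs.1.map' (f := j) (j.toRingHom.injective)
    have h2 : ⇑j ∘ (Subtype.val : s → E) = y := by funext i; rfl
    rwa [h2] at h1
  set e := Equiv.optionSubtypeNe i₀ with hedef
  have he_none : e none = i₀ := by
    rw [Equiv.apply_eq_iff_eq_symm_apply, Equiv.optionSubtypeNe_symm_self]
  have he_some : ∀ (j' : {b : s // b ≠ i₀}), e (some j') = j'.1 := by
    intro j'
    rw [Equiv.apply_eq_iff_eq_symm_apply, Equiv.optionSubtypeNe_symm_of_ne j'.2]
  set y' : {b : s // b ≠ i₀} → ℂ := fun j' => y j'.1 with hy'def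
  have hyopt : AlgebraicIndependent k (fun o : Option {b : s // b ≠ i₀} =>
      o.elim (y i₀) y') := by
    have h1 : AlgebraicIndependent k (y ∘ e) := (algebraicIndependent_equiv e).2 hy
    have h2 : (y ∘ e) = fun o : Option {b : s // b ≠ i₀} => o.elim (y i₀) y' := by
      funext o
      cases o with
      | none => simp only [Function.comp_apply, he_none]; rfl
      | some j' => simp only [Function.comp_apply, he_some j']; rfl
    rwa [h2] at h1
  have hy' : AlgebraicIndependent k y' := hyopt.comp some (Option.some_injective _)
  have htr : Transcendental (Algebra.adjoin k (Set.range y')) (y i₀) :=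
    (hy'.option_iff_transcendental (y i₀)).1 hyopt
  have hAreal : ∀ a : (Algebra.adjoin k (Set.range y')), (a : ℂ).im = 0 := by
    apply adjoin_im_zero' hk
    rintro zz ⟨j', rfl⟩
    exact hjim _
  have htr2 : Transcendental (Algebra.adjoin k (Set.range y')) (Complex.I * y i₀) :=
    transcendental_I_mul hAreal (hjim _) htr
  have hopt2 : AlgebraicIndependent k (fun o : Option {b : s // b ≠ i₀} =>
      o.elim (Complex.I * y i₀) y') := (hy'.option_iff_transcendental _).2 htr2
  set c : s → ℂ := fun i => if i = i₀ then Complex.I * y i₀ else y i with hcdef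
  have hc : AlgebraicIndependent k c := by
    have h1 : AlgebraicIndependent k ((fun o : Option {b : s // b ≠ i₀} =>
        o.elim (Complex.I * y i₀) y') ∘ e.symm) := (algebraicIndependent_equiv e.symm).2 hopt2
    have h2 : ((fun o : Option {b : s // b ≠ i₀} =>
        o.elim (Complex.I * y i₀) y') ∘ e.symm) = c := by
      funext i
      by_cases hi : i = i₀
      · subst hi
        simp only [Function.comp_apply, hedef, Equiv.optionSubtypeNe_symm_self]
        rw [hcdef]
        simp
      · simp only [Function.comp_apply, hedef, Equiv.optionSubtypeNe_symm_of_ne hi]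
        rw [hcdef]
        simp [hi, hy'def]
    rwa [h2] at h1
  have hcinj : Function.Injective
      (MvPolynomial.aeval c : MvPolynomial s k →ₐ[k] ℂ) :=
    algebraicIndependent_iff_injective_aeval.1 hc
  set ψ := (IsFractionRing.liftAlgHom (K := FractionRing (MvPolynomial s k)) hcinj).comp
      hs.1.reprField with hψdef
  letI : Algebra (IntermediateField.adjoin k (Set.range ((↑) : s → E))) ℂ :=
    ψ.toRingHom.toAlgebra
  haveI : IsScalarTower k (IntermediateField.adjoin k (Set.range ((↑) : s → E))) ℂ :=
    IsScalarTower.of_algebraMap_eq fun r => (ψ.commutes r).symm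
  haveI : Algebra.IsAlgebraic (IntermediateField.adjoin k (Set.range ((↑) : s → E))) E :=
    hs.isAlgebraic_field
  haveI : FaithfulSMul (IntermediateField.adjoin k (Set.range ((↑) : s → E))) E :=
    (faithfulSMul_iff_algebraMap_injective _ E).2 (RingHom.injective _)
  haveI : FaithfulSMul (IntermediateField.adjoin k (Set.range ((↑) : s → E))) ℂ :=
    (faithfulSMul_iff_algebraMap_injective _ _).2
      (show Function.Injective ψ from ψ.toRingHom.injective)
  have hgi : ((i₀ : s) : E) ∈ IntermediateField.adjoin k (Set.range ((↑) : s → E)) :=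
    IntermediateField.subset_adjoin k _ ⟨i₀, rfl⟩
  have hrepr : hs.1.reprField ⟨((i₀ : s) : E), hgi⟩
      = algebraMap (MvPolynomial s k) (FractionRing (MvPolynomial s k))
          (MvPolynomial.X i₀) := by
    show hs.1.aevalEquivField.symm _ = _
    rw [AlgEquiv.symm_apply_eq]
    apply Subtype.ext
    rw [hs.1.aevalEquivField_algebraMap_apply_coe]
    simp
  set Φ := IsAlgClosed.lift (M := ℂ)
      (R := IntermediateField.adjoin k (Set.range ((↑) : s → E))) (S := E) with hΦdef
  refine ⟨AlgHom.restrictScalars k Φ, ((i₀ : s) : E), ?_⟩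
  have hstep : Φ ((i₀ : s) : E) = c i₀ := by
    have h1 : ((i₀ : s) : E)
        = algebraMap (IntermediateField.adjoin k (Set.range ((↑) : s → E))) E
            ⟨((i₀ : s) : E), hgi⟩ := rfl
    rw [h1, AlgHom.commutes]
    show ψ _ = c i₀
    rw [hψdef, AlgHom.comp_apply, hrepr, IsFractionRing.liftAlgHom_apply,
      IsFractionRing.lift_algebraMap]
    simp
  have happ : (AlgHom.restrictScalars k Φ) ((i₀ : s) : E) = c i₀ := hstep
  rw [happ]
  have hci₀ : c i₀ = Complex.I * y i₀ := by rw [hcdef]; simp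
  rw [hci₀]
  have him : (Complex.I * y i₀).im = (y i₀).re := by
    rw [Complex.mul_im, Complex.I_re, Complex.I_im, hjim]
    ring
  rw [him]
  intro hre0
  have hy0 : y i₀ = 0 := Complex.ext hre0 (hjim _)
  have hne0 : ((i₀ : s) : E) ≠ 0 := by
    intro hz
    exact hs.1.transcendental i₀ (hz ▸ isAlgebraic_zero)
  exact hne0 (j.toRingHom.injective (by rw [map_zero]; exact hy0))

/-- An algebraic `k`-field has a hom to ℂ sending a given element to a given root
of its minimal polynomial. -/
lemma exists_hom_sending {E : Type*} [Field E] [Algebra k E] [halg : Algebra.IsAlgebraic k E]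
    (α : E) (z : ℂ) (hz : Polynomial.aeval z (minpoly k α) = 0) :
    ∃ φ : E →ₐ[k] ℂ, φ α = z := by
  have hintα : IsIntegral k α := (Algebra.IsAlgebraic.isAlgebraic α).isIntegral
  have hz' : Polynomial.aeval z (minpoly k (IntermediateField.adjoin.powerBasis hintα).gen)
      = 0 := by
    rw [IntermediateField.adjoin.powerBasis_gen, IntermediateField.minpoly_gen]
    exact hz
  set ψ₁ := (IntermediateField.adjoin.powerBasis hintα).lift z hz' with hψ₁def
  letI : Algebra (IntermediateField.adjoin k {α}) ℂ := ψ₁.toRingHom.toAlgebra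
  haveI : IsScalarTower k (IntermediateField.adjoin k {α}) ℂ :=
    IsScalarTower.of_algebraMap_eq fun r => (ψ₁.commutes r).symm
  haveI : Algebra.IsAlgebraic (IntermediateField.adjoin k {α}) E :=
    Algebra.IsAlgebraic.tower_top (K := k) _
  haveI : FaithfulSMul (IntermediateField.adjoin k {α}) E :=
    (faithfulSMul_iff_algebraMap_injective _ E).2 (RingHom.injective _)
  haveI : FaithfulSMul (IntermediateField.adjoin k {α}) ℂ :=
    (faithfulSMul_iff_algebraMap_injective _ _).2
      (show Function.Injective ψ₁ from ψ₁.toRingHom.injective)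
  set Φ₁ := IsAlgClosed.lift (M := ℂ)
      (R := IntermediateField.adjoin k {α}) (S := E) with hΦ₁def
  refine ⟨AlgHom.restrictScalars k Φ₁, ?_⟩
  have h1 : α = algebraMap (IntermediateField.adjoin k {α}) E
      (IntermediateField.AdjoinSimple.gen k α) := by
    rw [← IntermediateField.AdjoinSimple.coe_gen k α]; rfl
  show Φ₁ α = z
  have hcomm : Φ₁ (algebraMap (IntermediateField.adjoin k {α}) E
      (IntermediateField.AdjoinSimple.gen k α)) = z := by
    rw [AlgHom.commutes]
    show ψ₁ _ = z
    rw [hψ₁def]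
    have h2 := (IntermediateField.adjoin.powerBasis hintα).lift_gen z hz'
    rw [IntermediateField.adjoin.powerBasis_gen] at h2
    exact h2
  exact (congrArg Φ₁ h1).trans hcomm

end Auxiliary

/-- with rational boundary values and positive rational energies, the values of a
solution of the enharmonic equations are totally real algebraic numbers. -/
theorem stmt_7 (G : SimpleGraph V) (hconn : G.Connected)
    (B : Set V) (hB : BoundaryOK G B) (u : V → ℝ) (hu : Set.InjOn u B)
    (huQ : ∀ b ∈ B, ∃ q : ℚ, u b = (q : ℝ))
    (𝓔 : Sym2 V → ℝ) (h𝓔 : ∀ e ∈ G.edgeSet, 0 < 𝓔 e ∧ ∃ q : ℚ, 𝓔 e = (q : ℝ))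
    (h : V → ℝ) (hbd : ∀ b ∈ B, h b = u b)
    (hne : ∀ x y, G.Adj x y → h x ≠ h y)
    (henh : ∀ x, x ∉ B → EnharmonicAt G 𝓔 h x) :
    ∀ v : V, IsAlgebraic ℚ (h v) ∧
      ∀ z : ℂ, Polynomial.aeval z (minpoly ℚ (h v)) = 0 → z.im = 0 := by
  classical
  have hBne : B.Nonempty := by
    rcases Set.eq_empty_or_nonempty B with rfl | hne'
    · exfalso
      obtain ⟨h2B, -⟩ := hB
      rw [Set.ncard_empty] at h2B
      norm_num at h2B
    · exact hne'
  set F := IntermediateField.adjoin ℚ (Set.range h) with hFdef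
  have hmem : ∀ v, h v ∈ F := fun v => IntermediateField.subset_adjoin ℚ _ ⟨v, rfl⟩
  set h' : V → F := fun v => ⟨h v, hmem v⟩ with hh'
  have hval_inj : Function.Injective (F.val) := Subtype.coe_injective
  have hqex : ∀ e, ∃ r : ℚ, e ∈ G.edgeSet → 𝓔 e = (r : ℝ) := by
    intro e
    by_cases he : e ∈ G.edgeSet
    · obtain ⟨r, hr⟩ := (h𝓔 e he).2
      exact ⟨r, fun _ => hr⟩
    · exact ⟨0, fun hc => absurd hc he⟩
  choose q hq using hqex
  have hFeq : ∀ x, x ∉ B →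
      ∑ y ∈ G.neighborFinset x, (algebraMap ℚ F (q s(x, y))) * (h' x - h' y)⁻¹ = 0 := by
    intro x hxB
    apply hval_inj
    rw [map_zero, map_sum]
    have hcalc : ∀ y ∈ G.neighborFinset x,
        (F.val) ((algebraMap ℚ F (q s(x, y))) * (h' x - h' y)⁻¹)
          = 𝓔 s(x, y) / (h x - h y) := by
      intro y hy
      rw [SimpleGraph.mem_neighborFinset] at hy
      rw [map_mul, map_inv₀, map_sub]
      have h1 : (F.val) (algebraMap ℚ F (q s(x, y))) = ((q s(x, y) : ℚ) : ℝ) := by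
        exact F.val.commutes _
      have h2 : (F.val) (h' x) = h x := rfl
      have h3 : (F.val) (h' y) = h y := rfl
      rw [h1, h2, h3, ← hq _ ((SimpleGraph.mem_edgeSet G).2 hy), div_eq_mul_inv]
    rw [Finset.sum_congr rfl hcalc]
    exact henh x hxB
  -- every ℚ-algebra hom from F to ℂ takes only real values
  have homreal : ∀ (φ : F →ₐ[ℚ] ℂ) (a : F), (φ a).im = 0 := by
    intro φ
    have hφinj : Function.Injective φ := φ.toRingHom.injective
    have hgen : ∀ v, (φ (h' v)).im = 0 := by
      apply complex_solution_real G hconn.preconnected B hBne 𝓔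
        (fun e he => (h𝓔 e he).1) (fun v => φ (h' v))
      · intro b hbB
        obtain ⟨r, hr⟩ := huQ b hbB
        have hb' : h' b = algebraMap ℚ F r := by
          apply Subtype.ext
          have hcoe : ((algebraMap ℚ F r : F) : ℝ) = ((r : ℚ) : ℝ) := by
            rw [← IntermediateField.algebraMap_apply]
            norm_num
          rw [hcoe]
          show h b = _
          rw [hbd b hbB, hr]
        rw [hb', AlgHom.commutes]
        norm_num
      · intro x y hadj hEq
        exact hne x y hadj (congrArg Subtype.val (hφinj hEq))
      · intro x hxB
        have h2 := congrArg φ (hFeq x hxB)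
        rw [map_sum, map_zero] at h2
        rw [← h2]
        refine Finset.sum_congr rfl fun y hy => ?_
        rw [SimpleGraph.mem_neighborFinset] at hy
        rw [map_mul, map_inv₀, map_sub, AlgHom.commutes, div_eq_mul_inv]
        congr 1
        rw [hq _ ((SimpleGraph.mem_edgeSet G).2 hy)]
        norm_num
    exact adjoin_hom_im_zero φ (fun x hx => by obtain ⟨v, rfl⟩ := hx; exact hgen v)
  -- the embedding of F into ℂ through ℝ
  set j : F →ₐ[ℚ] ℂ := (Complex.ofRealAm.restrictScalars ℚ).comp F.val with hjdef
  have hjim : ∀ a : F, (j a).im = 0 := fun a => Complex.ofReal_im _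
  -- Step 1 : all values of h are algebraic over ℚ
  have halg : ∀ v, IsAlgebraic ℚ (h v) := by
    by_contra hna
    push_neg at hna
    obtain ⟨v₀, hv₀⟩ := hna
    have hα : Transcendental ℚ (h' v₀) := by
      intro halgF
      exact hv₀ (by simpa using halgF.algHom F.val)
    have htransF : Algebra.Transcendental ℚ F := by
      rw [Algebra.transcendental_iff_not_isAlgebraic]
      intro hFalg
      exact hα (Algebra.IsAlgebraic.isAlgebraic _)
    obtain ⟨φ, a, hφa⟩ := exists_nonreal_hom (k := ℚ) (by intro r; norm_num) j hjim htransF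
    exact hφa (homreal φ a)
  -- Step 2 : conjugates are real
  haveI hFalg : Algebra.IsAlgebraic ℚ F := by
    apply IntermediateField.isAlgebraic_adjoin
    rintro x ⟨v, rfl⟩
    exact (halg v).isIntegral
  intro v
  refine ⟨halg v, fun z hz => ?_⟩
  have hminα : minpoly ℚ (h' v) = minpoly ℚ (h v) := by
    have h1 := minpoly.algHom_eq F.val hval_inj (h' v)
    exact h1.symm
  obtain ⟨φ, hφ⟩ := exists_hom_sending (k := ℚ) (h' v) z (by rw [hminα]; exact hz)
  have h0 := homreal φ (h' v)
  rw [hφ] at h0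
  exact h0
end

section
/- Let K be a totally real number field. Then there exist an integer d ≥ 1, rational numbers a₀ < a₁ < ... < a_d, and positive rational numbers e₀, e₁, ..., e_d such that the polynomial q(X) = Σ_{i=0}^{d} e_i · ∏_{j ≠ i} (X − a_j) is irreducible over ℚ, all of its complex roots are real, and for every root x of q the field ℚ(x) is isomorphic to K. Equivalently, K is generated by a real solution x of the equation Σ_{i=0}^{d} e_i/(x − a_i) = 0 with rational data, and all solutions of this equation generate fields isomorphic to K. -/
open Polynomial

private lemma sign_helper' {ι : Type*} (s : Finset ι) (f : ι → ℝ) (pr : ι → Prop) [DecidablePred pr]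
    (hneg : ∀ x ∈ s, pr x → f x < 0) (hpos : ∀ x ∈ s, ¬ pr x → 0 < f x) :
    ∃ c : ℝ, 0 < c ∧ ∏ x ∈ s, f x = (-1) ^ (s.filter pr).card * c := by
  refine ⟨(∏ x ∈ s.filter pr, -f x) * ∏ x ∈ s.filter (fun x => ¬ pr x), f x, ?_, ?_⟩
  · refine mul_pos (Finset.prod_pos ?_) (Finset.prod_pos ?_)
    · intro x hx
      rw [Finset.mem_filter] at hx
      linarith [hneg x hx.1 hx.2]
    · intro x hx
      rw [Finset.mem_filter] at hx
      exact hpos x hx.1 hx.2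
  · rw [← Finset.prod_filter_mul_prod_filter_not s pr f]
    have h1 : ∏ x ∈ s.filter pr, f x = ∏ x ∈ s.filter pr, (-1) * (-f x) := by
      apply Finset.prod_congr rfl; intro x _; ring
    rw [h1, Finset.prod_mul_distrib, Finset.prod_const]
    ring

/-- every totally real number field arises from an enharmonic (star-graph)
equation with rational data: there are rationals a₀ < ⋯ < a_d and positive rationals
e₀, …, e_d so that q(X) = Σᵢ eᵢ ∏_{j≠i} (X − aⱼ) is irreducible with all roots real, and
each real root generates a field isomorphic to K. -/
theorem stmt_8 (K : Type*) [Field K] [NumberField K]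
    (htotreal : ∀ φ : K →+* ℂ, ∀ x : K, (φ x).im = 0) :
    ∃ d : ℕ, 1 ≤ d ∧ ∃ a : Fin (d + 1) → ℚ, StrictMono a ∧
      ∃ e : Fin (d + 1) → ℚ, (∀ i, 0 < e i) ∧
        (let q : Polynomial ℚ := ∑ i, Polynomial.C (e i) *
            ∏ j ∈ Finset.univ.erase i, (Polynomial.X - Polynomial.C (a j));
          Irreducible q ∧
          (∀ z : ℂ, Polynomial.aeval z q = 0 → z.im = 0) ∧
          (∃ x : ℝ, Polynomial.aeval x q = 0) ∧
          ∀ x : ℝ, Polynomial.aeval x q = 0 →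
            Nonempty ((IntermediateField.adjoin ℚ {x} : IntermediateField ℚ ℝ) ≃ₐ[ℚ] K)) := by
  classical
  obtain ⟨α, hα⟩ := Field.exists_primitive_element ℚ K
  have hint : IsIntegral ℚ α := IsIntegral.of_finite ℚ α
  set p := minpoly ℚ α with hpdef
  have hirr : Irreducible p := minpoly.irreducible hint
  have hmonic : p.Monic := minpoly.monic hint
  have hp0 : p ≠ 0 := hmonic.ne_zero
  have hsep : p.Separable := hirr.separable
  let E : AdjoinRoot p ≃ₐ[ℚ] K :=
    ((IntermediateField.adjoinRootEquivAdjoin ℚ hint).trans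
      (IntermediateField.equivOfEq hα)).trans IntermediateField.topEquiv
  -- all complex roots of p are real
  have hreal : ∀ z : ℂ, aeval z p = 0 → z.im = 0 := by
    intro z hz
    let φ := (AdjoinRoot.liftAlgHom p (Algebra.ofId ℚ ℂ) z (by rw [aeval_def] at hz; exact hz)).comp (E.symm : K →ₐ[ℚ] AdjoinRoot p)
    have hzφ : z = φ (E (AdjoinRoot.root p)) := by
      simp [φ, AdjoinRoot.liftAlgHom_root]
      exact (AdjoinRoot.liftAlgHom_root p (Algebra.ofId ℚ ℂ) z _).symm
    rw [hzφ]
    exact htotreal φ.toRingHom _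
  -- factor p over ℝ
  set pC := p.map (algebraMap ℚ ℂ) with hpCdef
  have hpC0 : pC ≠ 0 := (Polynomial.map_ne_zero_iff (algebraMap ℚ ℂ).injective).mpr hp0
  have hsplitsC : pC.Splits := IsAlgClosed.splits pC
  have hcardC : Multiset.card pC.roots = p.natDegree := by
    rw [← hsplitsC.natDegree_eq_card_roots, hpCdef, natDegree_map]
  have hnodupC : pC.roots.Nodup := nodup_roots (hsep.map)
  have hrootsreal : ∀ z ∈ pC.roots, z.im = 0 := by
    intro z hz
    apply hreal
    rw [aeval_def, eval₂_eq_eval_map]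
    exact (mem_roots hpC0).1 hz
  set R : Multiset ℝ := pC.roots.map Complex.re with hRdef
  have hRcard : Multiset.card R = p.natDegree := by rw [hRdef, Multiset.card_map]; exact hcardC
  have hRnodup : R.Nodup := hnodupC.map_on (by
    intro x hx y hy hxy
    exact Complex.ext hxy (by rw [hrootsreal x hx, hrootsreal y hy]))
  set P := p.map (algebraMap ℚ ℝ) with hPdef
  have hPmap : P.map (algebraMap ℝ ℂ) = pC := by
    rw [hPdef, Polynomial.map_map, ← IsScalarTower.algebraMap_eq]
  have hPfac : P = (R.map (fun t => X - C t)).prod := by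
    apply Polynomial.map_injective (algebraMap ℝ ℂ) (by exact Complex.ofReal_injective)
    rw [hPmap]
    have hsplit : Splits pC := by
      rw [splits_iff_card_roots, hcardC, hpCdef, natDegree_map]
    have h1 : pC = (pC.roots.map fun z => X - C z).prod :=
      hsplit.eq_prod_roots_of_monic (hmonic.map _)
    conv_lhs => rw [h1]
    rw [Polynomial.map_multiset_prod, Multiset.map_map, hRdef, Multiset.map_map]
    apply congrArg
    apply Multiset.map_congr rfl
    intro z hz
    simp only [Function.comp_apply, Polynomial.map_sub, map_X, map_C]
    congr 1
    exact congrArg C (Complex.ext (Complex.ofReal_re z.re).symm (by simp [hrootsreal z hz]))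
  -- sorted roots
  obtain ⟨m, hm⟩ : ∃ m, p.natDegree = m + 1 :=
    ⟨p.natDegree - 1, by have := minpoly.natDegree_pos hint; rw [← hpdef] at this; omega⟩
  have hRcard' : Multiset.card R = m + 1 := by rw [hRcard, hm]
  obtain ⟨r, hrmono, hRr⟩ : ∃ r : Fin (m+1) → ℝ, StrictMono r ∧ R = ↑(List.ofFn r) := by
    set L := R.sort (· ≤ ·) with hLdef
    have hLlen : L.length = m + 1 := by rw [hLdef, Multiset.length_sort]; exact hRcard'
    have hLsorted : L.Pairwise (· ≤ ·) := Multiset.pairwise_sort _ _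
    have hLnodup : L.Nodup := by rw [← Multiset.coe_nodup, Multiset.sort_eq]; exact hRnodup
    refine ⟨fun k => L.get (Fin.cast hLlen.symm k), ?_, ?_⟩
    · intro k k' hkk'
      have hlt : (Fin.cast hLlen.symm k) < (Fin.cast hLlen.symm k') := by
        rw [Fin.lt_def, Fin.coe_cast, Fin.coe_cast]; exact hkk'
      refine lt_of_le_of_ne (hLsorted.rel_get_of_lt hlt) ?_
      intro heq
      exact absurd (hLnodup.get_inj_iff.mp heq) (by simp [Fin.ext_iff]; omega)
    · rw [← Multiset.sort_eq R (· ≤ ·), ← hLdef]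
      congr 1
      apply List.ext_getElem (by simp [hLlen])
      intro i h1 h2
      simp only [List.getElem_ofFn, List.get_eq_getElem, Fin.coe_cast]
  have hPprod : P = ∏ k : Fin (m+1), (X - C (r k)) := by
    rw [hPfac, hRr, Multiset.map_coe, Multiset.prod_coe, List.map_ofFn, List.prod_ofFn]
    rfl
  have hPeval : ∀ x : ℝ, P.eval x = ∏ k : Fin (m+1), (x - r k) := by
    intro x
    rw [hPprod, eval_prod]
    apply Finset.prod_congr rfl
    intro k _
    simp
  have haev : ∀ x : ℝ, aeval x p = P.eval x := by
    intro x
    rw [aeval_def, eval₂_eq_eval_map, hPdef]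
  have hevalcast : ∀ v : ℚ, ((p.eval v : ℚ) : ℝ) = P.eval (v : ℝ) := by
    intro v
    have : ((v : ℝ)) = algebraMap ℚ ℝ v := by norm_num
    rw [hPdef, this, eval_map, eval₂_at_apply]
    norm_num
  -- interlacing rationals
  obtain ⟨a, haMono, key1, key2⟩ : ∃ a : Fin (m+2) → ℚ, StrictMono a ∧
      (∀ i : Fin (m+2), ∀ k : Fin (m+1), (i : ℕ) ≤ (k : ℕ) → (a i : ℝ) < r k) ∧
      (∀ k : Fin (m+1), ∀ i : Fin (m+2), (k : ℕ) < (i : ℕ) → r k < (a i : ℝ)) := by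
    have hstep : ∀ k : Fin (m+1), ∃ q : ℚ, r k < (q : ℝ) ∧
        ∀ k' : Fin (m+1), k < k' → (q : ℝ) < r k' := by
      intro k
      by_cases hk : (k : ℕ) + 1 < m + 1
      · obtain ⟨q, h1, h2⟩ := exists_rat_btwn (hrmono (show k < ⟨(k:ℕ)+1, hk⟩ by
          rw [Fin.lt_def]; simp))
        refine ⟨q, h1, fun k' hk' => lt_of_lt_of_le h2 (hrmono.monotone ?_)⟩
        rw [Fin.le_def]
        simp only []
        rw [Fin.lt_def] at hk'
        omega
      · obtain ⟨q, h1, h2⟩ := exists_rat_btwn (lt_add_one (r k))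
        refine ⟨q, h1, fun k' hk' => absurd hk' ?_⟩
        rw [Fin.lt_def]
        have := k'.isLt
        omega
    choose b hb1 hb2 using hstep
    obtain ⟨a0, ha0⟩ := exists_rat_lt (r 0)
    set a : Fin (m+2) → ℚ := Fin.cases a0 b with hadef
    have haS : ∀ k : Fin (m+1), a k.succ = b k := fun k => by rw [hadef]; exact Fin.cases_succ k
    have ha1 : ∀ k : Fin (m+1), (a k.castSucc : ℝ) < r k := by
      intro k
      induction k using Fin.cases with
      | zero => simpa [hadef] using ha0
      | succ j =>
        rw [← Fin.succ_castSucc, haS]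
        exact hb2 j.castSucc j.succ (by rw [Fin.lt_def]; simp)
    have ha2 : ∀ k : Fin (m+1), r k < (a k.succ : ℝ) := fun k => by rw [haS]; exact hb1 k
    have haMono : StrictMono a := by
      rw [Fin.strictMono_iff_lt_succ]
      intro k
      exact_mod_cast (ha1 k).trans (ha2 k)
    refine ⟨a, haMono, ?_, ?_⟩
    · intro i k hik
      calc (a i : ℝ) ≤ (a k.castSucc : ℝ) := by
            exact_mod_cast haMono.monotone (by rw [Fin.le_def]; simpa using hik)
        _ < r k := ha1 k
    · intro k i hki
      calc r k < (a k.succ : ℝ) := ha2 k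
        _ ≤ (a i : ℝ) := by
            exact_mod_cast haMono.monotone (by rw [Fin.le_def]; simpa [Fin.val_succ] using hki)
  -- the coefficients
  set e : Fin (m+2) → ℚ :=
    fun i => p.eval (a i) * ∏ j ∈ Finset.univ.erase i, (a i - a j)⁻¹ with hedef
  have hepos : ∀ i, 0 < e i := by
    intro i
    have hnum : ((p.eval (a i) : ℚ) : ℝ) = ∏ k : Fin (m+1), ((a i : ℝ) - r k) := by
      rw [hevalcast, hPeval]
    obtain ⟨c1, hc1, hnum1⟩ := sign_helper' Finset.univ (fun k : Fin (m+1) => (a i : ℝ) - r k)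
      (fun k => (i : ℕ) ≤ (k : ℕ))
      (fun k _ hk => by show (a i : ℝ) - r k < 0; have := key1 i k hk; linarith)
      (fun k _ hk => by show (0:ℝ) < (a i : ℝ) - r k; have := key2 k i (by omega); linarith)
    obtain ⟨c2, hc2, hden1⟩ := sign_helper' (Finset.univ.erase i)
      (fun j : Fin (m+2) => (a i : ℝ) - (a j : ℝ)) (fun j => i < j)
      (fun j _ hj => by
        show (a i : ℝ) - (a j : ℝ) < 0
        have : (a i : ℝ) < a j := by exact_mod_cast haMono hj
        linarith)
      (fun j hj hj2 => by
        show (0:ℝ) < (a i : ℝ) - (a j : ℝ)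
        have hji : j < i := lt_of_le_of_ne (not_lt.mp hj2) (Finset.ne_of_mem_erase hj)
        have : (a j : ℝ) < a i := by exact_mod_cast haMono hji
        linarith)
    have hcards : (Finset.univ.filter (fun k : Fin (m+1) => (i : ℕ) ≤ (k : ℕ))).card
        = ((Finset.univ.erase i).filter (fun j : Fin (m+2) => i < j)).card := by
      apply Finset.card_bij (fun k _ => k.succ)
      · intro k hk
        rw [Finset.mem_filter] at hk ⊢
        have hik : i < k.succ := by rw [Fin.lt_def, Fin.val_succ]; omega
        exact ⟨Finset.mem_erase.mpr ⟨hik.ne', Finset.mem_univ _⟩, hik⟩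
      · intro k _ k' _ h
        exact Fin.succ_injective _ h
      · intro j hj
        rw [Finset.mem_filter, Finset.mem_erase] at hj
        have hj0 : j ≠ 0 := by
          intro h
          rw [h] at hj
          exact absurd hj.2 (by simp [Fin.lt_def])
        refine ⟨j.pred hj0, ?_, ?_⟩
        · rw [Finset.mem_filter]
          refine ⟨Finset.mem_univ _, ?_⟩
          have := hj.2
          rw [Fin.lt_def] at this
          simp only [Fin.coe_pred]
          omega
        · exact Fin.succ_pred j hj0
    have hden : ((∏ j ∈ Finset.univ.erase i, (a i - a j) : ℚ) : ℝ)
        = ∏ j ∈ Finset.univ.erase i, ((a i : ℝ) - (a j : ℝ)) := by push_cast; ring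
    have key : (0:ℝ) < ((p.eval (a i) : ℚ) : ℝ) *
        (((∏ j ∈ Finset.univ.erase i, (a i - a j) : ℚ) : ℝ))⁻¹ := by
      rw [hden, hnum, hnum1, hden1, hcards]
      set t := ((Finset.univ.erase i).filter (fun j : Fin (m+2) => i < j)).card
      have hne : ((-1 : ℝ)) ^ t ≠ 0 := pow_ne_zero _ (by norm_num)
      rw [mul_inv]
      have h2 : ((-1:ℝ))^t * c1 * (((-1:ℝ))^t)⁻¹ = c1 := by field_simp
      rw [show ((-1:ℝ))^t * c1 * ((((-1:ℝ))^t)⁻¹ * c2⁻¹)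
          = (((-1:ℝ))^t * c1 * (((-1:ℝ))^t)⁻¹) * c2⁻¹ by ring, h2]
      positivity
    have : (0:ℝ) < ((e i : ℚ) : ℝ) := by
      rw [hedef]
      push_cast
      rw [Finset.prod_inv_distrib, ← hden]
      exact key
    exact_mod_cast this
  -- the Lagrange identity
  have hsum : ∑ i : Fin (m+2), C (e i) * ∏ j ∈ Finset.univ.erase i, (X - C (a j)) = p := by
    have hinj : Set.InjOn a ↑(Finset.univ : Finset (Fin (m+2))) :=
      fun x _ y _ h => haMono.injective h
    have hdlt : p.degree < (Finset.univ : Finset (Fin (m+2))).card := by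
      rw [degree_eq_natDegree hp0, hm]
      rw [Finset.card_univ, Fintype.card_fin]
      exact_mod_cast Nat.lt_succ_self (m+1)
    have hlag := Lagrange.eq_interpolate (v := a) hinj hdlt
    rw [Lagrange.interpolate_apply] at hlag
    conv_rhs => rw [hlag]
    apply Finset.sum_congr rfl
    intro i _
    rw [Lagrange.basis]
    simp only [Lagrange.basisDivisor]
    rw [Finset.prod_mul_distrib,
      ← map_prod (C : ℚ →+* ℚ[X]) (fun j => (a i - a j)⁻¹) (Finset.univ.erase i),
      ← mul_assoc, ← C_mul]
  -- conclude
  refine ⟨m + 1, by omega, a, haMono, e, hepos, ?_⟩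
  intro q
  have hq : q = p := hsum
  rw [hq]
  refine ⟨hirr, hreal, ?_, ?_⟩
  · refine ⟨r 0, ?_⟩
    rw [haev, hPeval]
    exact Finset.prod_eq_zero (Finset.mem_univ 0) (by simp)
  · intro x hx
    have hxint : IsIntegral ℚ x := ⟨p, hmonic, by rwa [← aeval_def]⟩
    have hminx : minpoly ℚ x = p := (minpoly.eq_of_irreducible_of_monic hirr hx hmonic).symm
    have e1 : AdjoinRoot (minpoly ℚ x) ≃ₐ[ℚ] AdjoinRoot p := by rw [hminx]
    exact ⟨((IntermediateField.adjoinRootEquivAdjoin ℚ hxint).symm.trans e1).trans E⟩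
end

section
/- Let a₀ < a₁ < ... < a_d be real numbers and let e₀, e₁, ..., e_d be positive real numbers. Then the polynomial q(X) = Σ_{i=0}^{d} e_i · ∏_{j ≠ i} (X − a_j) has degree d, all of its complex roots are real and simple, and it has exactly one root in each open interval (a_i, a_{i+1}) for i = 0, 1, ..., d−1 (these account for all d roots). Equivalently, the equation Σ_{i=0}^{d} e_i/(x − a_i) = 0 has exactly d real solutions, one strictly between each pair of consecutive a_i. -/
open Polynomial Finset in
/-- eval at a node of a Lagrange-type sum kills all terms but one. -/
lemma stmt9_node_eval {n : ℕ} (a c : Fin n → ℝ) (k : Fin n) :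
    Polynomial.eval (a k) (∑ i, Polynomial.C (c i) *
        ∏ j ∈ Finset.univ.erase i, (Polynomial.X - Polynomial.C (a j)))
      = c k * ∏ j ∈ Finset.univ.erase k, (a k - a j) := by
  rw [Polynomial.eval_finset_sum]
  rw [Finset.sum_eq_single k]
  · simp [Polynomial.eval_prod]
  · intro i _ hik
    rw [Polynomial.eval_mul, Polynomial.eval_prod]
    refine mul_eq_zero_of_right _ (Finset.prod_eq_zero
      (Finset.mem_erase.mpr ⟨hik.symm, Finset.mem_univ k⟩) (by simp))
  · simp

/-- the sign of the "node product" alternates. -/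
lemma stmt9_sign {d : ℕ} (a : Fin (d+1) → ℝ) (ha : StrictMono a) (k : Fin (d+1)) :
    0 < (-1:ℝ)^(d - (k:ℕ)) * ∏ j ∈ Finset.univ.erase k, (a k - a j) := by
  have hset : Finset.univ.erase k = Finset.Ioi k ∪ Finset.Iio k := by
    ext j
    simp only [Finset.mem_erase, Finset.mem_univ, and_true, Finset.mem_union,
      Finset.mem_Ioi, Finset.mem_Iio]
    exact ⟨fun h => (h.lt_or_gt).symm, fun h => h.elim (fun h => h.ne') fun h => h.ne⟩
  have hdisj : Disjoint (Finset.Ioi k) (Finset.Iio k) := Finset.disjoint_Ioi_Iio k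
  rw [hset, Finset.prod_union hdisj]
  have h1 : ∏ j ∈ Finset.Ioi k, (a k - a j)
      = (-1:ℝ)^(d - (k:ℕ)) * ∏ j ∈ Finset.Ioi k, (a j - a k) := by
    have h : ∀ j ∈ Finset.Ioi k, (a k - a j) = (-1) * (a j - a k) := by intros; ring
    rw [Finset.prod_congr rfl h, Finset.prod_mul_distrib, Finset.prod_const, Fin.card_Ioi]
    congr 2
  have h2 : 0 < ∏ j ∈ Finset.Ioi k, (a j - a k) :=
    Finset.prod_pos fun j hj => sub_pos.mpr (ha (Finset.mem_Ioi.mp hj))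
  have h3 : 0 < ∏ j ∈ Finset.Iio k, (a k - a j) :=
    Finset.prod_pos fun j hj => sub_pos.mpr (ha (Finset.mem_Iio.mp hj))
  rw [h1]
  have h4 : (-1:ℝ)^(d - (k:ℕ)) * ((-1:ℝ)^(d - (k:ℕ)) * (∏ j ∈ Finset.Ioi k, (a j - a k))
      * ∏ j ∈ Finset.Iio k, (a k - a j))
      = ((-1:ℝ)^(d - (k:ℕ)))^2 * ((∏ j ∈ Finset.Ioi k, (a j - a k))
        * ∏ j ∈ Finset.Iio k, (a k - a j)) := by ring
  rw [h4, ← pow_mul, Even.neg_one_pow ⟨_, by ring⟩, one_mul]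
  exact mul_pos h2 h3

/-- for a₀ < ⋯ < a_d real and positive weights e₀, …, e_d, the polynomial
q(X) = Σᵢ eᵢ ∏_{j≠i} (X − aⱼ) has degree d, all its complex roots are real and simple, and
there is exactly one root in each interval (aᵢ, aᵢ₊₁), these accounting for all roots. -/
theorem stmt_9 (d : ℕ) (a : Fin (d + 1) → ℝ) (ha : StrictMono a)
    (e : Fin (d + 1) → ℝ) (he : ∀ i, 0 < e i) :
    let q : Polynomial ℝ := ∑ i, Polynomial.C (e i) *
        ∏ j ∈ Finset.univ.erase i, (Polynomial.X - Polynomial.C (a j));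
    q.degree = d ∧
    (∀ z : ℂ, Polynomial.aeval z q = 0 →
      z.im = 0 ∧ Polynomial.aeval z (Polynomial.derivative q) ≠ 0) ∧
    (∀ i : Fin d, ∃! x : ℝ,
      x ∈ Set.Ioo (a i.castSucc) (a i.succ) ∧ Polynomial.eval x q = 0) ∧
    (∀ x : ℝ, Polynomial.eval x q = 0 →
      ∃ i : Fin d, x ∈ Set.Ioo (a i.castSucc) (a i.succ)) := by
  intro q
  have hq : q = ∑ i, Polynomial.C (e i) *
      ∏ j ∈ Finset.univ.erase i, (Polynomial.X - Polynomial.C (a j)) := rfl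
  have hc : 0 < ∑ i, e i := Finset.sum_pos (fun i _ => he i) Finset.univ_nonempty
  -- degree computation
  have hM : ∀ i : Fin (d+1), (∏ j ∈ Finset.univ.erase i,
      (Polynomial.X - Polynomial.C (a j))).Monic :=
    fun i => Polynomial.monic_prod_of_monic _ _ fun j _ => Polynomial.monic_X_sub_C (a j)
  have hMdeg : ∀ i : Fin (d+1), (∏ j ∈ Finset.univ.erase i,
      (Polynomial.X - Polynomial.C (a j))).natDegree = d := by
    intro i
    rw [Polynomial.natDegree_prod_of_monic _ _ fun j _ => Polynomial.monic_X_sub_C (a j)]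
    simp [Finset.card_erase_of_mem]
  have hcoeff : q.coeff d = ∑ i, e i := by
    rw [hq, Polynomial.finset_sum_coeff]
    refine Finset.sum_congr rfl fun i _ => ?_
    have h1 := Polynomial.Monic.coeff_natDegree (hM i)
    rw [hMdeg i] at h1
    rw [Polynomial.coeff_C_mul, h1, mul_one]
  have hdegle : q.degree ≤ d := by
    rw [hq]
    refine (Polynomial.degree_sum_le _ _).trans ?_
    refine Finset.sup_le fun i _ => ?_
    refine (Polynomial.degree_mul_le _ _).trans ?_
    have h2 := Polynomial.degree_le_natDegree (p := ∏ j ∈ Finset.univ.erase i,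
      (Polynomial.X - Polynomial.C (a j)))
    rw [hMdeg i] at h2
    calc (Polynomial.C (e i)).degree + _ ≤ 0 + (d : WithBot ℕ) :=
          add_le_add Polynomial.degree_C_le h2
      _ = d := by rw [zero_add]
  have hdeg : q.degree = d :=
    Polynomial.degree_eq_of_le_of_coeff_ne_zero hdegle (by rw [hcoeff]; exact hc.ne')
  have hqnd : q.natDegree = d := Polynomial.natDegree_eq_of_degree_eq_some hdeg
  have hq0 : q ≠ 0 := fun h => by
    rw [h, Polynomial.degree_zero] at hdeg
    exact absurd hdeg (by simp)
  -- sign of q at the nodes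
  have hsign : ∀ k : Fin (d+1), 0 < (-1:ℝ)^(d - (k:ℕ)) * Polynomial.eval (a k) q := by
    intro k
    rw [hq, stmt9_node_eval]
    have h : (-1:ℝ)^(d - (k:ℕ)) * (e k * ∏ j ∈ Finset.univ.erase k, (a k - a j))
        = e k * ((-1:ℝ)^(d - (k:ℕ)) * ∏ j ∈ Finset.univ.erase k, (a k - a j)) := by ring
    rw [h]
    exact mul_pos (he k) (stmt9_sign a ha k)
  -- a root in each interval via IVT
  have hroots : ∀ i : Fin d, ∃ y, y ∈ Set.Ioo (a i.castSucc) (a i.succ)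
      ∧ Polynomial.eval y q = 0 := by
    intro i
    have hlt : a i.castSucc < a i.succ := ha (by simp [Fin.lt_def])
    have h1 := hsign i.castSucc
    have h2 := hsign i.succ
    simp only [Fin.coe_castSucc, Fin.val_succ] at h1 h2
    have hde : d - (i:ℕ) = (d - ((i:ℕ)+1)) + 1 := by omega
    rw [hde, pow_succ] at h1
    set s := (-1:ℝ)^(d - ((i:ℕ)+1)) with hs
    have hss : s * s = 1 := by
      rw [hs, ← pow_add]
      exact Even.neg_one_pow ⟨_, rfl⟩
    have hE : Polynomial.eval (a i.castSucc) q * Polynomial.eval (a i.succ) q < 0 := by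
      nlinarith [mul_pos h1 h2]
    have hcont : ContinuousOn (fun y => Polynomial.eval y q)
        (Set.Icc (a i.castSucc) (a i.succ)) := (Polynomial.continuous q).continuousOn
    rcases mul_neg_iff.mp hE with ⟨hE1, hE2⟩ | ⟨hE1, hE2⟩
    · obtain ⟨y, hy, hy0⟩ := intermediate_value_Ioo' hlt.le hcont
        (Set.mem_Ioo.mpr ⟨hE2, hE1⟩)
      exact ⟨y, hy, hy0⟩
    · obtain ⟨y, hy, hy0⟩ := intermediate_value_Ioo hlt.le hcont
        (Set.mem_Ioo.mpr ⟨hE1, hE2⟩)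
      exact ⟨y, hy, hy0⟩
  choose x hx1 hx2 using hroots
  have hxmono : StrictMono x := by
    intro i j hij
    calc x i < a i.succ := (hx1 i).2
      _ ≤ a j.castSucc := ha.monotone (by
          rw [Fin.le_def, Fin.val_succ, Fin.coe_castSucc]
          exact Fin.lt_def.mp hij)
      _ < x j := (hx1 j).1
  have hxinj : Function.Injective x := hxmono.injective
  -- factorization
  set c := ∑ i, e i with hcdef
  set M := ∏ i : Fin d, (Polynomial.X - Polynomial.C (x i)) with hMdef
  have hMmonic : M.Monic :=
    Polynomial.monic_prod_of_monic _ _ fun i _ => Polynomial.monic_X_sub_C (x i)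
  have hMnd : M.natDegree = d := by
    rw [hMdef, Polynomial.natDegree_prod_of_monic _ _
      fun i _ => Polynomial.monic_X_sub_C (x i)]
    simp
  have hPdeg : (Polynomial.C c * M).degree = d := by
    rw [Polynomial.degree_mul, Polynomial.degree_C hc.ne',
      Polynomial.degree_eq_natDegree hMmonic.ne_zero, hMnd, zero_add]
  have hPlead : (Polynomial.C c * M).leadingCoeff = c := by
    rw [Polynomial.leadingCoeff_mul, Polynomial.leadingCoeff_C,
      hMmonic.leadingCoeff, mul_one]
  have hqlead : q.leadingCoeff = c := by
    rw [Polynomial.leadingCoeff, hqnd, hcoeff]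
  have hfac : q = Polynomial.C c * M := by
    by_contra h
    have hsub := Polynomial.degree_sub_lt (hdeg.trans hPdeg.symm) hq0
      (hqlead.trans hPlead.symm)
    rw [hdeg] at hsub
    have h0 : q - Polynomial.C c * M = 0 := by
      refine Polynomial.eq_zero_of_natDegree_lt_card_of_eval_eq_zero _ hxinj
        (fun i => ?_) ?_
      · rw [Polynomial.eval_sub, hx2 i, Polynomial.eval_mul, hMdef, Polynomial.eval_prod]
        rw [Finset.prod_eq_zero (Finset.mem_univ i) (by simp)]
        ring
      · have hlt := (Polynomial.natDegree_lt_iff_degree_lt (sub_ne_zero.mpr h)).mpr hsub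
        simpa using hlt
    exact h (sub_eq_zero.mp h0)
  -- real root characterization
  have hreal : ∀ y : ℝ, Polynomial.eval y q = 0 ↔ ∃ i, y = x i := by
    intro y
    rw [hfac, Polynomial.eval_mul, Polynomial.eval_C, hMdef, Polynomial.eval_prod]
    simp [Finset.prod_eq_zero_iff, sub_eq_zero, hc.ne']
  -- roots land in distinct intervals
  have hdisjI : ∀ (i j : Fin d), x j ∈ Set.Ioo (a i.castSucc) (a i.succ) → j = i := by
    intro i j hmem
    by_contra hne
    rcases lt_or_gt_of_ne hne with hji | hij
    · have h1 : x j < a j.succ := (hx1 j).2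
      have h2 : a j.succ ≤ a i.castSucc := ha.monotone (by
        rw [Fin.le_def, Fin.val_succ, Fin.coe_castSucc]
        exact Fin.lt_def.mp hji)
      exact absurd hmem.1 (by linarith)
    · have h1 : a j.castSucc < x j := (hx1 j).1
      have h2 : a i.succ ≤ a j.castSucc := ha.monotone (by
        rw [Fin.le_def, Fin.val_succ, Fin.coe_castSucc]
        exact Fin.lt_def.mp hij)
      exact absurd hmem.2 (by linarith)
  refine ⟨hdeg, ?_, ?_, ?_⟩
  · -- complex roots are real and simple
    intro z hz
    have hzq : Polynomial.eval z (q.map (algebraMap ℝ ℂ)) = 0 := by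
      rwa [Polynomial.eval_map, ← Polynomial.aeval_def]
    rw [hfac] at hzq
    simp only [Polynomial.map_mul, Polynomial.map_C, hMdef, Polynomial.map_prod,
      Polynomial.map_sub, Polynomial.map_X, Polynomial.eval_mul, Polynomial.eval_C,
      Polynomial.eval_prod, Polynomial.eval_sub, Polynomial.eval_X,
      mul_eq_zero, Finset.prod_eq_zero_iff] at hzq
    have hcne : (algebraMap ℝ ℂ) c ≠ 0 := by
      simp [hc.ne']
    obtain ⟨k, -, hk⟩ := hzq.resolve_left hcne
    have hzk : z = ((x k : ℝ) : ℂ) := by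
      have := sub_eq_zero.mp hk
      simpa using this
    constructor
    · rw [hzk]; exact Complex.ofReal_im _
    · -- derivative does not vanish
      have hsplit : q = (Polynomial.X - Polynomial.C (x k)) *
          (Polynomial.C c * ∏ i ∈ Finset.univ.erase k,
            (Polynomial.X - Polynomial.C (x i))) := by
        rw [hfac, hMdef, ← Finset.mul_prod_erase _ _ (Finset.mem_univ k)]
        ring
      have hG : Polynomial.eval (x k) (Polynomial.C c * ∏ i ∈ Finset.univ.erase k,
          (Polynomial.X - Polynomial.C (x i))) ≠ 0 := by
        rw [Polynomial.eval_mul, Polynomial.eval_C, Polynomial.eval_prod]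
        refine mul_ne_zero hc.ne' (Finset.prod_ne_zero_iff.mpr fun i hi => ?_)
        simp only [Polynomial.eval_sub, Polynomial.eval_X, Polynomial.eval_C]
        exact sub_ne_zero.mpr fun h => (Finset.mem_erase.mp hi).1 ((hxinj h).symm)
      have hder : Polynomial.eval (x k) (Polynomial.derivative q) ≠ 0 := by
        rw [hsplit, Polynomial.derivative_mul, Polynomial.derivative_sub,
          Polynomial.derivative_X, Polynomial.derivative_C, sub_zero, one_mul,
          Polynomial.eval_add,
          Polynomial.eval_mul (p := Polynomial.X - Polynomial.C (x k))]
        simp only [Polynomial.eval_sub, Polynomial.eval_X, Polynomial.eval_C,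
          sub_self, zero_mul, add_zero]
        exact hG
      rw [hzk]
      have : Polynomial.aeval ((x k : ℝ) : ℂ) (Polynomial.derivative q)
          = algebraMap ℝ ℂ (Polynomial.eval (x k) (Polynomial.derivative q)) := by
        rw [← Polynomial.aeval_algebraMap_apply_eq_algebraMap_eval]
        norm_num
      rw [this]
      simpa using hder
  · -- exactly one root per interval
    intro i
    refine ⟨x i, ⟨hx1 i, hx2 i⟩, ?_⟩
    rintro y ⟨hy1, hy2⟩
    obtain ⟨j, rfl⟩ := (hreal y).mp hy2
    rw [hdisjI i j hy1]
  · -- all real roots lie in the intervals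
    intro y hy
    obtain ⟨j, rfl⟩ := (hreal y).mp hy
    exact ⟨j, hx1 j⟩
end
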